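/- arXiv:1901.09258 — 15 statements merged into one kernel-verified Lean document; each statement's English description precedes it below -/
import Mathlib

section
/- In the antiferromagnetic case θ > 1, every positive solution (x, y) of the fixed-point system (★) satisfies x = y. -/
/-- In the antiferromagnetic case `θ > 1`, every positive solution `(x, y)` of (★)
satisfies `x = y`. -/
theorem stmt_2 (k : ℕ) (hk : 2 ≤ k) (lam θ : ℝ) (hlam : 0 < lam) (hθ : 1 < θ)
    (x y : ℝ) (hx : 0 < x) (hy : 0 < y)
    (h1 : x = lam * ((1 + x + θ * y) / (1 + x + y)) ^ k)
    (h2 : y = lam * ((1 + θ * x + y) / (1 + x + y)) ^ k) :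
    x = y := by
  have hk0 : k ≠ 0 := by omega
  have key : ∀ a b : ℝ, 0 < a → 0 < b → a < b →
      lam * ((1 + θ * a + b) / (1 + a + b)) ^ k <
      lam * ((1 + a + θ * b) / (1 + a + b)) ^ k := by
    intro a b ha hb hab
    have hdab : (0:ℝ) < 1 + a + b := by linarith
    apply mul_lt_mul_of_pos_left _ hlam
    apply pow_lt_pow_left₀ _ _ hk0
    · apply div_lt_div_of_pos_right (by nlinarith) hdab
    · positivity
  rcases lt_trichotomy x y with h | h | h
  · exfalso
    have := key x y hx hy h
    rw [← h1, ← h2] at this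
    linarith
  · exact h
  · exfalso
    have := key y x hy hx h
    rw [show 1 + θ * y + x = 1 + x + θ * y by ring,
        show 1 + y + x = 1 + x + y by ring,
        show 1 + y + θ * x = 1 + θ * x + y by ring, ← h1, ← h2] at this
    linarith
end

section
/- Let k ≥ 2 and θ > 1 (antiferromagnetic case), and set θ_cr = 2·((k+1)/(k−1))² − 1. (1) If θ ≤ θ_cr, then for every λ > 0 the system (★) has exactly one positive solution. (2) If θ > θ_cr, then the quadratic 2x² + (4 − (θ−1)(k−1))x + (θ+1) = 0 has two distinct positive real roots x₁ < x₂; setting λ_{cr,i} = (2^k·x_i/(1+θ)^{k+1})·((1+θ+2x_i)/(2(1+x_i)))^k for i = 1, 2, one has λ_{cr,2} < λ_{cr,1}, and the system (★) has: exactly one positive solution if 0 < λ < λ_{cr,2} or λ > λ_{cr,1}; exactly two positive solutions if λ = λ_{cr,2} or λ = λ_{cr,1}; exactly three positive solutions if λ_{cr,2} < λ < λ_{cr,1}. -/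
open Set

noncomputable def hfun (a : ℝ) (k : ℕ) (x : ℝ) : ℝ := x * (1+2*x)^k / (1+a*x)^k

def qfun (a : ℝ) (k : ℕ) (x : ℝ) : ℝ := 2*a*x^2 + (a+2+2*(k:ℝ) - (k:ℝ)*a)*x + 1

lemma hasDerivAt_hfun (a : ℝ) (m : ℕ) (x : ℝ) (hax : 1 + a*x ≠ 0) :
    HasDerivAt (hfun a (m+1))
      ((1+2*x)^m * (1+a*x)^m * qfun a (m+1) x / ((1+a*x)^(m+1))^2) x := by
  have h1 : HasDerivAt (fun x : ℝ => 1+2*x) 2 x := by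
    simpa using ((hasDerivAt_id x).const_mul 2).const_add 1
  have h2 : HasDerivAt (fun x : ℝ => 1+a*x) a x := by
    simpa using ((hasDerivAt_id x).const_mul a).const_add 1
  have hN : HasDerivAt (fun x : ℝ => x * (1+2*x)^(m+1))
      (1*(1+2*x)^(m+1) + x * ((m+1) * (1+2*x)^m * 2)) x :=
    (hasDerivAt_id x).mul (by simpa using h1.fun_pow (m+1))
  have hD : HasDerivAt (fun x : ℝ => (1+a*x)^(m+1)) ((m+1) * (1+a*x)^m * a) x := by
    simpa using h2.fun_pow (m+1)
  have := hN.div hD (pow_ne_zero _ hax)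
  refine this.congr_deriv ?_
  rw [div_eq_div_iff (by positivity) (by positivity)]
  rw [qfun]
  push_cast
  ring

lemma contOn_hfun (a : ℝ) (ha : 0 < a) (k : ℕ) : ContinuousOn (hfun a k) (Ici 0) := by
  apply ContinuousOn.div
  · fun_prop
  · fun_prop
  · intro x hx
    have : (0:ℝ) < 1 + a*x := by have := hx.out; nlinarith
    positivity

lemma hfun_lb (a : ℝ) (ha : 1 ≤ a) (k : ℕ) (x : ℝ) (hx : 0 ≤ x) :
    x / a^k ≤ hfun a k x := by
  have hax : (0:ℝ) < 1 + a*x := by nlinarith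
  have h2x : (0:ℝ) < 1 + 2*x := by nlinarith
  rw [hfun, div_le_div_iff₀ (by positivity) (by positivity)]
  have hkey : (1+a*x)^k ≤ (a*(1+2*x))^k := by
    apply pow_le_pow_left₀ (le_of_lt hax)
    nlinarith
  calc x * (1+a*x)^k ≤ x * (a*(1+2*x))^k := mul_le_mul_of_nonneg_left hkey hx
    _ = x * (1+2*x)^k * a^k := by rw [mul_pow]; ring

lemma hfun_eq_iff (a : ℝ) (ha : 0 < a) (k : ℕ) (x lam : ℝ) (hx : 0 < x) :
    hfun a k x = lam ↔ x = lam * ((1+a*x)/(1+2*x))^k := by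
  have hax : (0:ℝ) < 1 + a*x := by nlinarith
  have h2x : (0:ℝ) < 1 + 2*x := by nlinarith
  rw [hfun, div_eq_iff (by positivity), div_pow]
  rw [← mul_div_assoc, eq_div_iff (pow_ne_zero _ (ne_of_gt h2x))]

lemma hfun_pos (a : ℝ) (ha : 0 < a) (k : ℕ) (x : ℝ) (hx : 0 < x) : 0 < hfun a k x := by
  have hax : (0:ℝ) < 1 + a*x := by nlinarith
  have h2x : (0:ℝ) < 1 + 2*x := by nlinarith
  rw [hfun]; positivity

lemma hfun_zero (a : ℝ) (k : ℕ) : hfun a k 0 = 0 := by simp [hfun]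

lemma strictMonoOn_hfun (a : ℝ) (ha : 0 < a) (m : ℕ) (D : Set ℝ) (hD : Convex ℝ D)
    (hD0 : D ⊆ Ici 0) (hq : ∀ x ∈ interior D, 0 < qfun a (m+1) x) :
    StrictMonoOn (hfun a (m+1)) D := by
  apply strictMonoOn_of_deriv_pos hD ((contOn_hfun a ha _).mono hD0)
  intro x hx
  have hx0 : (0:ℝ) ≤ x := (hD0 (interior_subset hx)).out
  have hax : (0:ℝ) < 1 + a*x := by nlinarith
  have h2x : (0:ℝ) < 1 + 2*x := by nlinarith
  rw [(hasDerivAt_hfun a m x (ne_of_gt hax)).deriv]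
  exact div_pos (mul_pos (mul_pos (pow_pos h2x m) (pow_pos hax m)) (hq x hx))
    (by positivity)

lemma strictAntiOn_hfun (a : ℝ) (ha : 0 < a) (m : ℕ) (D : Set ℝ) (hD : Convex ℝ D)
    (hD0 : D ⊆ Ici 0) (hq : ∀ x ∈ interior D, qfun a (m+1) x < 0) :
    StrictAntiOn (hfun a (m+1)) D := by
  apply strictAntiOn_of_deriv_neg hD ((contOn_hfun a ha _).mono hD0)
  intro x hx
  have hx0 : (0:ℝ) ≤ x := (hD0 (interior_subset hx)).out
  have hax : (0:ℝ) < 1 + a*x := by nlinarith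
  have h2x : (0:ℝ) < 1 + 2*x := by nlinarith
  rw [(hasDerivAt_hfun a m x (ne_of_gt hax)).deriv]
  exact div_neg_of_neg_of_pos
    (mul_neg_of_pos_of_neg (mul_pos (pow_pos h2x m) (pow_pos hax m)) (hq x hx))
    (by positivity)

lemma lam_formula (a : ℝ) (ha : 0 < a) (k : ℕ) (x : ℝ) (hx : 0 < x) :
    (2^k * x / a^(k+1)) * ((a + 2*x) / (2*(1+x)))^k = hfun a k (x/a) := by
  have hax : (0:ℝ) < 1 + x := by nlinarith
  have h1 : (1 : ℝ) + a * (x/a) = 1 + x := by field_simp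
  have h2 : (1 : ℝ) + 2 * (x/a) = (a + 2*x)/a := by field_simp
  rw [hfun, h1, h2, div_pow, div_pow, mul_pow]
  have e1 : (a:ℝ)^k ≠ 0 := by positivity
  have e2 : ((1:ℝ)+x)^k ≠ 0 := by positivity
  have e3 : (2:ℝ)^k ≠ 0 := by positivity
  have e4 : (a:ℝ) ≠ 0 := ne_of_gt ha
  field_simp
  ring

lemma glueMono {f : ℝ → ℝ} {c : ℝ} (hc : 0 ≤ c) (h1 : StrictMonoOn f (Icc 0 c))
    (h2 : StrictMonoOn f (Ici c)) : StrictMonoOn f (Ici 0) := by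
  intro x hx y hy hxy
  rcases le_total y c with hyc | hcy
  · exact h1 ⟨hx.out, le_trans (le_of_lt hxy) hyc⟩ ⟨hy.out, hyc⟩ hxy
  · rcases le_total x c with hxc | hcx
    · rcases eq_or_lt_of_le hcy with rfl | hlt
      · exact h1 ⟨hx.out, hxc⟩ ⟨hc, le_rfl⟩ hxy
      · rcases eq_or_lt_of_le hxc with rfl | hxc'
        · exact h2 Set.self_mem_Ici hcy hlt
        · exact lt_trans (h1 ⟨hx.out, hxc⟩ ⟨hc, le_rfl⟩ hxc') (h2 Set.self_mem_Ici hcy hlt)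
    · exact h2 hcx (le_trans hcx (le_of_lt hxy)) hxy

lemma mono_count (f : ℝ → ℝ) (lam : ℝ) (M : StrictMonoOn f (Ici 0))
    (cf : ContinuousOn f (Ici 0)) (f0 : f 0 = 0)
    (hsur : ∃ X, 0 < X ∧ lam < f X) (hlam : 0 < lam) :
    {x : ℝ | 0 < x ∧ f x = lam}.encard = 1 := by
  obtain ⟨X, hX, hfX⟩ := hsur
  obtain ⟨x₀, hx₀, hfx₀⟩ := intermediate_value_Ioo (le_of_lt hX)
    (cf.mono Icc_subset_Ici_self) (by rw [f0]; exact ⟨hlam, hfX⟩)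
  rw [show {x : ℝ | 0 < x ∧ f x = lam} = {x₀} from ?_]
  · exact Set.encard_singleton x₀
  ext z
  simp only [mem_setOf_eq, mem_singleton_iff]
  constructor
  · rintro ⟨hz, hfz⟩
    exact M.injOn (le_of_lt hz) (le_of_lt hx₀.1) (by rw [hfz, hfx₀])
  · rintro rfl; exact ⟨hx₀.1, hfx₀⟩

lemma scount (f : ℝ → ℝ) (y₁ y₂ : ℝ) (h01 : 0 < y₁) (h12 : y₁ < y₂)
    (M1 : StrictMonoOn f (Icc 0 y₁)) (A : StrictAntiOn f (Icc y₁ y₂))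
    (M2 : StrictMonoOn f (Ici y₂))
    (cf : ContinuousOn f (Ici 0)) (f0 : f 0 = 0) (fpos : 0 < f y₂)
    (lam : ℝ) (hlam : 0 < lam) (hsur : ∃ X, y₂ < X ∧ lam < f X ∧ f y₁ < f X) :
    ((lam < f y₂ ∨ f y₁ < lam) → {x : ℝ | 0 < x ∧ f x = lam}.encard = 1) ∧
    ((lam = f y₂ ∨ lam = f y₁) → {x : ℝ | 0 < x ∧ f x = lam}.encard = 2) ∧
    (f y₂ < lam ∧ lam < f y₁ → {x : ℝ | 0 < x ∧ f x = lam}.encard = 3) := by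
  obtain ⟨X, hX12, hXlam, hXl1⟩ := hsur
  have hL : f y₂ < f y₁ := A ⟨le_rfl, le_of_lt h12⟩ ⟨le_of_lt h12, le_rfl⟩ h12
  have sub1 : Icc (0:ℝ) y₁ ⊆ Ici 0 := Icc_subset_Ici_self
  have sub2 : Icc y₁ y₂ ⊆ Ici (0:ℝ) := Icc_subset_Ici_self.trans (Ici_subset_Ici.2 (le_of_lt h01))
  have sub3 : Icc y₂ X ⊆ Ici (0:ℝ) := Icc_subset_Ici_self.trans
    (Ici_subset_Ici.2 (le_of_lt (lt_trans h01 h12)))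
  have B2 : ∀ x, y₁ ≤ x → x ≤ y₂ → f y₂ ≤ f x :=
    fun x h1 h2 => A.antitoneOn ⟨h1, h2⟩ ⟨le_of_lt h12, le_rfl⟩ h2
  have B2' : ∀ x, y₁ ≤ x → x ≤ y₂ → f x ≤ f y₁ :=
    fun x h1 h2 => A.antitoneOn ⟨le_rfl, le_of_lt h12⟩ ⟨h1, h2⟩ h1
  have B1 : ∀ x, 0 ≤ x → x ≤ y₁ → f x ≤ f y₁ :=
    fun x h1 h2 => M1.monotoneOn ⟨h1, h2⟩ ⟨le_of_lt h01, le_rfl⟩ h2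
  have B3 : ∀ x, y₂ ≤ x → f y₂ ≤ f x := fun x h1 => M2.monotoneOn Set.self_mem_Ici h1 h1
  have classify : ∀ z, 0 < z → f z = lam →
      (z ∈ Icc (0:ℝ) y₁) ∨ (z ∈ Icc y₁ y₂) ∨ (z ∈ Ici y₂) := by
    intro z hz _
    rcases le_total z y₁ with h | h
    · exact Or.inl ⟨le_of_lt hz, h⟩
    · rcases le_total z y₂ with h' | h'
      · exact Or.inr (Or.inl ⟨h, h'⟩)
      · exact Or.inr (Or.inr h')
  refine ⟨?_, ?_, ?_⟩
  · rintro (hcase | hcase)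
    · obtain ⟨x₀, hx₀, hfx₀⟩ := intermediate_value_Ioo (le_of_lt h01) (cf.mono sub1)
        (by rw [f0]; exact ⟨hlam, lt_trans hcase hL⟩)
      rw [show {x : ℝ | 0 < x ∧ f x = lam} = {x₀} from ?_]
      · exact Set.encard_singleton x₀
      ext z
      simp only [mem_setOf_eq, mem_singleton_iff]
      constructor
      · rintro ⟨hz, hfz⟩
        rcases classify z hz hfz with h | h | h
        · exact M1.injOn h ⟨le_of_lt hx₀.1, le_of_lt hx₀.2⟩ (by rw [hfz, hfx₀])
        · exact absurd hfz (by have := B2 z h.1 h.2; intro e; rw [e] at this; linarith)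
        · exact absurd hfz (by have := B3 z h; intro e; rw [e] at this; linarith)
      · rintro rfl; exact ⟨hx₀.1, hfx₀⟩
    · obtain ⟨x₀, hx₀, hfx₀⟩ := intermediate_value_Ioo (le_of_lt hX12) (cf.mono sub3)
        ⟨lt_trans hL hcase, hXlam⟩
      rw [show {x : ℝ | 0 < x ∧ f x = lam} = {x₀} from ?_]
      · exact Set.encard_singleton x₀
      ext z
      simp only [mem_setOf_eq, mem_singleton_iff]
      constructor
      · rintro ⟨hz, hfz⟩
        rcases classify z hz hfz with h | h | h
        · exact absurd hfz (by have := B1 z h.1 h.2; intro e; rw [e] at this; linarith)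
        · exact absurd hfz (by have := B2' z h.1 h.2; intro e; rw [e] at this; linarith)
        · exact M2.injOn h (le_of_lt hx₀.1) (by rw [hfz, hfx₀])
      · rintro rfl; exact ⟨lt_trans (lt_trans h01 h12) hx₀.1, hfx₀⟩
  · rintro (hcase | hcase)
    · obtain ⟨xa, hxa, hfxa⟩ := intermediate_value_Ioo (le_of_lt h01) (cf.mono sub1)
        (by rw [f0]; exact ⟨hlam, by rw [hcase]; exact hL⟩)
      rw [show {x : ℝ | 0 < x ∧ f x = lam} = {xa, y₂} from ?_]
      · exact Set.encard_pair (by intro e; rw [e] at hxa; linarith [hxa.2])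
      ext z
      simp only [mem_setOf_eq, mem_insert_iff, mem_singleton_iff]
      constructor
      · rintro ⟨hz, hfz⟩
        rcases classify z hz hfz with h | h | h
        · exact Or.inl (M1.injOn h ⟨le_of_lt hxa.1, le_of_lt hxa.2⟩ (by rw [hfz, hfxa]))
        · exact Or.inr (A.injOn h ⟨le_of_lt h12, le_rfl⟩ (by rw [hfz, hcase]))
        · exact Or.inr (M2.injOn h Set.self_mem_Ici (by rw [hfz, hcase]))
      · rintro (rfl | rfl)
        · exact ⟨hxa.1, hfxa⟩
        · exact ⟨lt_trans h01 h12, hcase.symm⟩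
    · obtain ⟨xc, hxc, hfxc⟩ := intermediate_value_Ioo (le_of_lt hX12) (cf.mono sub3)
        (show lam ∈ Ioo (f y₂) (f X) from
          ⟨by rw [hcase]; exact hL, by rw [hcase]; exact hXl1⟩)
      rw [show {x : ℝ | 0 < x ∧ f x = lam} = {y₁, xc} from ?_]
      · exact Set.encard_pair (by intro e; rw [← e] at hxc; linarith [hxc.1, h12])
      ext z
      simp only [mem_setOf_eq, mem_insert_iff, mem_singleton_iff]
      constructor
      · rintro ⟨hz, hfz⟩
        rcases classify z hz hfz with h | h | h
        · exact Or.inl (M1.injOn h ⟨le_of_lt h01, le_rfl⟩ (by rw [hfz, hcase]))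
        · exact Or.inl (A.injOn h ⟨le_rfl, le_of_lt h12⟩ (by rw [hfz, hcase]))
        · exact Or.inr (M2.injOn h (le_of_lt hxc.1) (by rw [hfz, hfxc]))
      · rintro (rfl | rfl)
        · exact ⟨h01, hcase.symm⟩
        · exact ⟨lt_trans (lt_trans h01 h12) hxc.1, hfxc⟩
  · rintro ⟨hl, hu⟩
    obtain ⟨xa, hxa, hfxa⟩ := intermediate_value_Ioo (le_of_lt h01) (cf.mono sub1)
      (by rw [f0]; exact ⟨hlam, hu⟩)
    obtain ⟨xb, hxb, hfxb⟩ := intermediate_value_Ioo' (le_of_lt h12) (cf.mono sub2)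
      ⟨hl, hu⟩
    obtain ⟨xc, hxc, hfxc⟩ := intermediate_value_Ioo (le_of_lt hX12) (cf.mono sub3)
      ⟨hl, hXlam⟩
    rw [show {x : ℝ | 0 < x ∧ f x = lam} = {xa, xb, xc} from ?_]
    · rw [Set.encard_insert_of_notMem, Set.encard_pair]
      · rfl
      · intro e; rw [e] at hxb; linarith [hxb.2, hxc.1]
      · simp only [mem_insert_iff, mem_singleton_iff]
        push_neg
        constructor
        · intro e; rw [e] at hxa; linarith [hxa.2, hxb.1]
        · intro e; rw [e] at hxa; linarith [hxa.2, hxc.1, hxb.2]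
    ext z
    simp only [mem_setOf_eq, mem_insert_iff, mem_singleton_iff]
    constructor
    · rintro ⟨hz, hfz⟩
      rcases classify z hz hfz with h | h | h
      · exact Or.inl (M1.injOn h ⟨le_of_lt hxa.1, le_of_lt hxa.2⟩ (by rw [hfz, hfxa]))
      · exact Or.inr (Or.inl (A.injOn h ⟨le_of_lt hxb.1, le_of_lt hxb.2⟩ (by rw [hfz, hfxb])))
      · exact Or.inr (Or.inr (M2.injOn h (le_of_lt hxc.1) (by rw [hfz, hfxc])))
    · rintro (rfl | rfl | rfl)
      · exact ⟨hxa.1, hfxa⟩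
      · exact ⟨lt_trans h01 hxb.1, hfxb⟩
      · exact ⟨lt_trans (lt_trans h01 h12) hxc.1, hfxc⟩

lemma sys_eq_diag (θ : ℝ) (hθ : 1 < θ) (k : ℕ) (hk : k ≠ 0) (lam : ℝ) :
    {p : ℝ × ℝ | 0 < p.1 ∧ 0 < p.2 ∧
      p.1 = lam * ((1 + p.1 + θ * p.2) / (1 + p.1 + p.2)) ^ k ∧
      p.2 = lam * ((1 + θ * p.1 + p.2) / (1 + p.1 + p.2)) ^ k}
    = (fun x => (x,x)) '' {x : ℝ | 0 < x ∧ hfun (θ+1) k x = lam} := by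
  have ha : (0:ℝ) < θ + 1 := by linarith
  ext ⟨x,y⟩
  simp only [mem_setOf_eq, mem_image, Prod.mk.injEq]
  constructor
  · rintro ⟨hx, hy, e1, e2⟩
    have hs : (0:ℝ) < 1+x+y := by linarith
    have key : ∀ u v : ℝ, 0 < u → 0 < v → u < v →
        u = lam * ((1+u+θ*v)/(1+u+v))^k → v = lam * ((1+θ*u+v)/(1+u+v))^k → False := by
      intro u v hu hv huv eu ev
      have hs' : (0:ℝ) < 1+u+v := by linarith
      have hb1 : (0:ℝ) < 1+θ*u+v := by nlinarith
      have hb2 : (0:ℝ) < 1+u+θ*v := by nlinarith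
      have hlam : 0 < lam := by
        rcases mul_pos_iff.1 (eu ▸ hu) with ⟨h,_⟩ | ⟨_,h⟩
        · exact h
        · exact absurd h (not_lt.2 (le_of_lt (pow_pos (div_pos hb2 hs') k)))
      have hbase : (1+θ*u+v)/(1+u+v) < (1+u+θ*v)/(1+u+v) := by
        apply div_lt_div_of_pos_right _ hs'
        nlinarith
      have hpow : ((1+θ*u+v)/(1+u+v))^k < ((1+u+θ*v)/(1+u+v))^k :=
        pow_lt_pow_left₀ hbase (le_of_lt (div_pos hb1 hs')) hk
      nlinarith [mul_lt_mul_of_pos_left hpow hlam]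
    have hxy : x = y := by
      rcases lt_trichotomy x y with h | h | h
      · exact absurd (key x y hx hy h e1 e2) (fun f => f)
      · exact h
      · exfalso
        apply key y x hy hx h
        · have : (1+y+θ*x)/(1+y+x) = (1+θ*x+y)/(1+x+y) := by ring_nf
          rw [this]; exact e2
        · have : (1+θ*y+x)/(1+y+x) = (1+x+θ*y)/(1+x+y) := by ring_nf
          rw [this]; exact e1
    subst hxy
    refine ⟨x, ⟨hx, ?_⟩, rfl, rfl⟩
    rw [hfun_eq_iff (θ+1) ha k x lam hx]
    have : (1+(θ+1)*x)/(1+2*x) = (1+x+θ*x)/(1+x+x) := by ring_nf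
    rw [this]
    exact e1
  · rintro ⟨z, ⟨hz, hh⟩, rfl, rfl⟩
    have e : z = lam * ((1+z+θ*z)/(1+z+z))^k := by
      have : (1+z+θ*z)/(1+z+z) = (1+(θ+1)*z)/(1+2*z) := by ring_nf
      rw [this, ← hfun_eq_iff (θ+1) ha k z lam hz]
      exact hh
    exact ⟨hz, hz, e, by convert e using 3; ring⟩

lemma quad_roots (a B : ℝ) (ha : 0 < a) (hB : B < 0) (hdisc : 0 < B^2 - 8*a) :
    ∃ y₁ y₂ : ℝ, 0 < y₁ ∧ y₁ < y₂ ∧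
      (∀ x : ℝ, 2*a*x^2 + B*x + 1 = 2*a*(x - y₁)*(x - y₂)) := by
  set d := Real.sqrt (B^2 - 8*a) with hd
  have hd2 : d^2 = B^2 - 8*a := Real.sq_sqrt (le_of_lt hdisc)
  have hdpos : 0 < d := Real.sqrt_pos.2 hdisc
  have hdB : d < -B := by nlinarith [hd2, hdpos]
  refine ⟨(-B-d)/(4*a), (-B+d)/(4*a), div_pos (by linarith) (by positivity), by
    apply div_lt_div_of_pos_right _ (by positivity); linarith, ?_⟩
  intro x
  field_simp
  ring_nf
  nlinarith [hd2]

set_option maxHeartbeats 1000000 in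
/-- Antiferromagnetic case `θ > 1` of the Soft-Core Widom–Rowlinson model:
number of positive solutions of the fixed-point system (★) according to the
critical values `θ_cr` and `λ_{cr,1}, λ_{cr,2}`. -/
theorem stmt_3 (k : ℕ) (hk : 2 ≤ k) (θ : ℝ) (hθ : 1 < θ) :
    (θ ≤ 2 * (((k : ℝ) + 1) / ((k : ℝ) - 1)) ^ 2 - 1 →
      ∀ lam : ℝ, 0 < lam →
        {p : ℝ × ℝ | 0 < p.1 ∧ 0 < p.2 ∧
          p.1 = lam * ((1 + p.1 + θ * p.2) / (1 + p.1 + p.2)) ^ k ∧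
          p.2 = lam * ((1 + θ * p.1 + p.2) / (1 + p.1 + p.2)) ^ k}.encard = 1) ∧
    (2 * (((k : ℝ) + 1) / ((k : ℝ) - 1)) ^ 2 - 1 < θ →
      ∃ x₁ x₂ : ℝ, 0 < x₁ ∧ x₁ < x₂ ∧
        2 * x₁ ^ 2 + (4 - (θ - 1) * ((k : ℝ) - 1)) * x₁ + (θ + 1) = 0 ∧
        2 * x₂ ^ 2 + (4 - (θ - 1) * ((k : ℝ) - 1)) * x₂ + (θ + 1) = 0 ∧
        (2 ^ k * x₂ / (1 + θ) ^ (k + 1)) * ((1 + θ + 2 * x₂) / (2 * (1 + x₂))) ^ k <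
          (2 ^ k * x₁ / (1 + θ) ^ (k + 1)) * ((1 + θ + 2 * x₁) / (2 * (1 + x₁))) ^ k ∧
        ∀ lam : ℝ, 0 < lam →
          ((lam < (2 ^ k * x₂ / (1 + θ) ^ (k + 1)) * ((1 + θ + 2 * x₂) / (2 * (1 + x₂))) ^ k ∨
            (2 ^ k * x₁ / (1 + θ) ^ (k + 1)) * ((1 + θ + 2 * x₁) / (2 * (1 + x₁))) ^ k < lam) →
            {p : ℝ × ℝ | 0 < p.1 ∧ 0 < p.2 ∧
              p.1 = lam * ((1 + p.1 + θ * p.2) / (1 + p.1 + p.2)) ^ k ∧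
              p.2 = lam * ((1 + θ * p.1 + p.2) / (1 + p.1 + p.2)) ^ k}.encard = 1) ∧
          ((lam = (2 ^ k * x₂ / (1 + θ) ^ (k + 1)) * ((1 + θ + 2 * x₂) / (2 * (1 + x₂))) ^ k ∨
            lam = (2 ^ k * x₁ / (1 + θ) ^ (k + 1)) * ((1 + θ + 2 * x₁) / (2 * (1 + x₁))) ^ k) →
            {p : ℝ × ℝ | 0 < p.1 ∧ 0 < p.2 ∧
              p.1 = lam * ((1 + p.1 + θ * p.2) / (1 + p.1 + p.2)) ^ k ∧
              p.2 = lam * ((1 + θ * p.1 + p.2) / (1 + p.1 + p.2)) ^ k}.encard = 2) ∧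
          ((2 ^ k * x₂ / (1 + θ) ^ (k + 1)) * ((1 + θ + 2 * x₂) / (2 * (1 + x₂))) ^ k < lam ∧
            lam < (2 ^ k * x₁ / (1 + θ) ^ (k + 1)) * ((1 + θ + 2 * x₁) / (2 * (1 + x₁))) ^ k →
            {p : ℝ × ℝ | 0 < p.1 ∧ 0 < p.2 ∧
              p.1 = lam * ((1 + p.1 + θ * p.2) / (1 + p.1 + p.2)) ^ k ∧
              p.2 = lam * ((1 + θ * p.1 + p.2) / (1 + p.1 + p.2)) ^ k}.encard = 3)) := by
  obtain ⟨m, rfl⟩ : ∃ m, k = m + 1 := ⟨k - 1, by omega⟩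
  have hm : 1 ≤ m := by omega
  have hm0 : (0:ℝ) < (m:ℝ) := by exact_mod_cast (by omega : 0 < m)
  have ha0 : (0:ℝ) < θ + 1 := by linarith
  have ha1 : (1:ℝ) ≤ θ + 1 := by linarith
  have f0 : hfun (θ+1) (m+1) 0 = 0 := hfun_zero _ _
  have cf := contOn_hfun (θ+1) ha0 (m+1)
  have hBval : ∀ x : ℝ, qfun (θ+1) (m+1) x
      = 2*(θ+1)*x^2 + (4 - (θ-1)*(m:ℝ))*x + 1 := by
    intro x; rw [qfun]; push_cast; ring
  have hdiag : ∀ s : Set ℝ, ((fun x : ℝ => (x,x)) '' s).encard = s.encard :=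
    fun s => Set.InjOn.encard_image (fun u _ v _ h => by simpa using h)
  constructor
  · -- Part 1 : θ ≤ θ_cr
    intro hθcr lam hlam
    have hm2 : (θ-1)*(m:ℝ)^2 ≤ 8*((m:ℝ)+1) := by
      push_cast at hθcr
      rw [show ((m:ℝ)+1+1) = (m:ℝ)+2 from by ring,
        show ((m:ℝ)+1-1) = (m:ℝ) from by ring, div_pow] at hθcr
      have h3 : θ + 1 ≤ 2*((m:ℝ)+2)^2/(m:ℝ)^2 := by rw [mul_div_assoc]; linarith
      have h4 := (le_div_iff₀ (by positivity : (0:ℝ) < (m:ℝ)^2)).1 h3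
      nlinarith [h4]
    have hdisc_le : (4 - (θ-1)*(m:ℝ))^2 ≤ 8*(θ+1) := by
      have hid : ((4 - (θ-1)*(m:ℝ))^2 - 8*(θ+1)) * (m:ℝ)
          = ((θ-1)*(m:ℝ)) * ((θ-1)*(m:ℝ)^2 - 8*((m:ℝ)+1)) := by ring
      have ht : 0 ≤ (θ-1)*(m:ℝ) := mul_nonneg (by linarith) hm0.le
      have hle : ((4 - (θ-1)*(m:ℝ))^2 - 8*(θ+1)) * (m:ℝ) ≤ 0 :=
        hid ▸ mul_nonpos_of_nonneg_of_nonpos ht (by linarith)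
      by_contra hc
      push_neg at hc
      nlinarith [mul_pos (by linarith : (0:ℝ) < (4 - (θ-1)*(m:ℝ))^2 - 8*(θ+1)) hm0]
    have M : StrictMonoOn (hfun (θ+1) (m+1)) (Ici 0) := by
      set Bc : ℝ := 4 - (θ-1)*(m:ℝ) with hBc
      by_cases hB : 0 ≤ Bc
      · apply strictMonoOn_hfun _ ha0 _ _ (convex_Ici 0) subset_rfl
        intro x hx
        rw [interior_Ici] at hx
        have hx' : 0 < x := hx
        rw [hBval x]
        nlinarith [mul_nonneg hB hx'.le, mul_pos (mul_pos ha0 hx') hx']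
      · push_neg at hB
        have hx₀ : 0 < -Bc/(4*(θ+1)) := div_pos (by linarith) (by linarith)
        have hqpos : ∀ x, 0 ≤ x → x ≠ -Bc/(4*(θ+1)) → 0 < qfun (θ+1) (m+1) x := by
          intro x hx hne
          have hexp : qfun (θ+1) (m+1) x
              = 2*(θ+1)*(x - -Bc/(4*(θ+1)))^2 + (8*(θ+1) - Bc^2)/(8*(θ+1)) := by
            rw [hBval x]; field_simp; ring
          have h1 : 0 < (x - -Bc/(4*(θ+1)))^2 :=
            (sq_nonneg _).lt_of_ne (Ne.symm (pow_ne_zero 2 (sub_ne_zero.mpr hne)))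
          have h2 : 0 ≤ (8*(θ+1) - Bc^2)/(8*(θ+1)) :=
            div_nonneg (by linarith [hdisc_le]) (by linarith)
          rw [hexp]
          nlinarith [mul_pos ha0 h1]
        apply glueMono hx₀.le
        · apply strictMonoOn_hfun _ ha0 _ _ (convex_Icc _ _) Icc_subset_Ici_self
          intro x hx
          rw [interior_Icc] at hx
          exact hqpos x hx.1.le (ne_of_lt hx.2)
        · apply strictMonoOn_hfun _ ha0 _ _ (convex_Ici _) (Ici_subset_Ici.2 hx₀.le)
          intro x hx
          rw [interior_Ici] at hx
          exact hqpos x (le_of_lt (lt_trans hx₀ hx)) (ne_of_gt hx)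
    rw [sys_eq_diag θ hθ (m+1) (Nat.succ_ne_zero m) lam, hdiag]
    apply mono_count _ lam M cf f0 _ hlam
    refine ⟨(θ+1)^(m+1)*(lam+1), by positivity, ?_⟩
    have hlb := hfun_lb (θ+1) ha1 (m+1) ((θ+1)^(m+1)*(lam+1)) (by positivity)
    have he : (θ+1)^(m+1)*(lam+1)/(θ+1)^(m+1) = lam+1 := by field_simp
    rw [he] at hlb
    linarith
  · -- Part 2 : θ_cr < θ
    intro hθcr
    have hm2 : 8*((m:ℝ)+1) < (θ-1)*(m:ℝ)^2 := by
      push_cast at hθcr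
      rw [show ((m:ℝ)+1+1) = (m:ℝ)+2 from by ring,
        show ((m:ℝ)+1-1) = (m:ℝ) from by ring, div_pow] at hθcr
      have h3 : 2*((m:ℝ)+2)^2/(m:ℝ)^2 < θ + 1 := by rw [mul_div_assoc]; linarith
      have h4 := (div_lt_iff₀ (by positivity : (0:ℝ) < (m:ℝ)^2)).1 h3
      nlinarith [h4]
    set Bc : ℝ := 4 - (θ-1)*(m:ℝ) with hBc
    have hBneg : Bc < 0 := by
      rw [hBc]
      nlinarith [hm2, hm0, mul_pos hm0 hm0]
    have hdisc : 0 < Bc^2 - 8*(θ+1) := by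
      have hid : (Bc^2 - 8*(θ+1)) * (m:ℝ)
          = ((θ-1)*(m:ℝ)) * ((θ-1)*(m:ℝ)^2 - 8*((m:ℝ)+1)) := by rw [hBc]; ring
      have ht : 0 < (θ-1)*(m:ℝ) := mul_pos (by linarith) hm0
      have hpos : 0 < (Bc^2 - 8*(θ+1)) * (m:ℝ) := hid ▸ mul_pos ht (by linarith)
      by_contra hc
      push_neg at hc
      nlinarith [mul_nonpos_of_nonpos_of_nonneg hc hm0.le]
    obtain ⟨y₁, y₂, hy1, hy12, hfact⟩ := quad_roots (θ+1) Bc ha0 hBneg hdisc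
    have hy2 : 0 < y₂ := lt_trans hy1 hy12
    have hq_eq : ∀ x, qfun (θ+1) (m+1) x = 2*(θ+1)*(x-y₁)*(x-y₂) := by
      intro x; rw [hBval x]; exact hfact x
    have M1 : StrictMonoOn (hfun (θ+1) (m+1)) (Icc 0 y₁) := by
      apply strictMonoOn_hfun _ ha0 _ _ (convex_Icc _ _) Icc_subset_Ici_self
      intro x hx
      rw [interior_Icc] at hx
      rw [hq_eq x]
      nlinarith [mul_pos (mul_pos ha0 (sub_pos.2 hx.2)) (sub_pos.2 (lt_trans hx.2 hy12))]
    have A : StrictAntiOn (hfun (θ+1) (m+1)) (Icc y₁ y₂) := by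
      apply strictAntiOn_hfun _ ha0 _ _ (convex_Icc _ _)
        (Icc_subset_Ici_self.trans (Ici_subset_Ici.2 hy1.le))
      intro x hx
      rw [interior_Icc] at hx
      rw [hq_eq x]
      nlinarith [mul_pos (mul_pos ha0 (sub_pos.2 hx.1)) (sub_pos.2 hx.2)]
    have M2 : StrictMonoOn (hfun (θ+1) (m+1)) (Ici y₂) := by
      apply strictMonoOn_hfun _ ha0 _ _ (convex_Ici _) (Ici_subset_Ici.2 hy2.le)
      intro x hx
      rw [interior_Ici] at hx
      rw [hq_eq x]
      nlinarith [mul_pos (mul_pos ha0 (sub_pos.2 (lt_trans hy12 hx))) (sub_pos.2 hx)]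
    have hl1pos : 0 < hfun (θ+1) (m+1) y₁ := hfun_pos _ ha0 _ _ hy1
    have hl2pos : 0 < hfun (θ+1) (m+1) y₂ := hfun_pos _ ha0 _ _ hy2
    have hlamf : ∀ y : ℝ, 0 < y →
        (2^(m+1) * ((θ+1)*y) / (1+θ)^(m+1+1)) *
          ((1+θ+2*((θ+1)*y)) / (2*(1+(θ+1)*y)))^(m+1) = hfun (θ+1) (m+1) y := by
      intro y hy
      rw [show (1:ℝ)+θ = θ+1 from by ring]
      rw [lam_formula (θ+1) ha0 (m+1) ((θ+1)*y) (mul_pos ha0 hy)]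
      rw [mul_div_cancel_left₀ _ (ne_of_gt ha0)]
    have hr1 : 2*(θ+1)*y₁^2 + Bc*y₁ + 1 = 0 := by rw [hfact y₁]; ring
    have hr2 : 2*(θ+1)*y₂^2 + Bc*y₂ + 1 = 0 := by rw [hfact y₂]; ring
    rw [hBc] at hr1 hr2
    refine ⟨(θ+1)*y₁, (θ+1)*y₂, mul_pos ha0 hy1,
      mul_lt_mul_of_pos_left hy12 ha0, ?_, ?_, ?_, ?_⟩
    · push_cast
      linear_combination (θ+1) * hr1
    · push_cast
      linear_combination (θ+1) * hr2
    · rw [hlamf y₁ hy1, hlamf y₂ hy2]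
      exact A ⟨le_rfl, hy12.le⟩ ⟨hy12.le, le_rfl⟩ hy12
    · intro lam hlam
      have hsur : ∃ X, y₂ < X ∧ lam < hfun (θ+1) (m+1) X ∧
          hfun (θ+1) (m+1) y₁ < hfun (θ+1) (m+1) X := by
        set L1 := hfun (θ+1) (m+1) y₁ with hL1
        have hstep : (0:ℝ) < (θ+1)^(m+1)*(lam + L1 + 1) :=
          mul_pos (pow_pos ha0 (m+1)) (by linarith)
        refine ⟨(θ+1)^(m+1)*(lam + L1 + 1) + y₂, by linarith, ?_, ?_⟩
        all_goals {
          have hXpos : (0:ℝ) ≤ (θ+1)^(m+1)*(lam + L1 + 1) + y₂ := by linarith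
          have hlb := hfun_lb (θ+1) ha1 (m+1) ((θ+1)^(m+1)*(lam + L1 + 1) + y₂) hXpos
          have he : ((θ+1)^(m+1)*(lam + L1 + 1) + y₂)/(θ+1)^(m+1)
              = lam + L1 + 1 + y₂/(θ+1)^(m+1) := by field_simp
          have h2 : 0 ≤ y₂/(θ+1)^(m+1) := div_nonneg hy2.le (by positivity)
          rw [he] at hlb
          linarith }
      obtain ⟨C1, C2, C3⟩ := scount (hfun (θ+1) (m+1)) y₁ y₂ hy1 hy12 M1 A M2 cf f0
        hl2pos lam hlam hsur
      refine ⟨?_, ?_, ?_⟩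
      · intro hcase
        rw [hlamf y₁ hy1, hlamf y₂ hy2] at hcase
        rw [sys_eq_diag θ hθ (m+1) (Nat.succ_ne_zero m) lam, hdiag]
        exact C1 hcase
      · intro hcase
        rw [hlamf y₁ hy1, hlamf y₂ hy2] at hcase
        rw [sys_eq_diag θ hθ (m+1) (Nat.succ_ne_zero m) lam, hdiag]
        exact C2 hcase
      · intro hcase
        rw [hlamf y₁ hy1, hlamf y₂ hy2] at hcase
        rw [sys_eq_diag θ hθ (m+1) (Nat.succ_ne_zero m) lam, hdiag]
        exact C3 hcase
end

section
/- For any integer k ≥ 2, any λ > 0 and any θ with 0 < θ < 1, the equation x = λ·((1 + (1+θ)x)/(1 + 2x))^k has exactly one positive solution x*; equivalently, the fixed-point system (★) has exactly one positive solution on the diagonal y = x. -/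
/-- For `k ≥ 2`, `λ > 0`, `0 < θ < 1`, the diagonal equation
`x = λ·((1+(1+θ)x)/(1+2x))^k` has exactly one positive solution. -/
theorem stmt_4 (k : ℕ) (hk : 2 ≤ k) (lam θ : ℝ) (hlam : 0 < lam)
    (hθ0 : 0 < θ) (hθ1 : θ < 1) :
    ∃! x : ℝ, 0 < x ∧ x = lam * ((1 + (1 + θ) * x) / (1 + 2 * x)) ^ k := by
  set g : ℝ → ℝ := fun x => x - lam * ((1 + (1 + θ) * x) / (1 + 2 * x)) ^ k with hg
  have hb0 : ∀ x : ℝ, 0 ≤ x → 0 < 1 + 2 * x := fun x hx => by linarith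
  have hbnn : ∀ x : ℝ, 0 ≤ x → 0 ≤ (1 + (1 + θ) * x) / (1 + 2 * x) := fun x hx =>
    div_nonneg (by nlinarith) (le_of_lt (hb0 x hx))
  have hanti : ∀ x y : ℝ, 0 ≤ x → x ≤ y →
      (1 + (1 + θ) * y) / (1 + 2 * y) ≤ (1 + (1 + θ) * x) / (1 + 2 * x) := by
    intro x y hx hxy
    rw [div_le_div_iff₀ (hb0 y (le_trans hx hxy)) (hb0 x hx)]
    nlinarith
  have hmono : StrictMonoOn g (Set.Ici (0:ℝ)) := by
    intro x hx y hy hxy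
    have h1 : ((1 + (1 + θ) * y) / (1 + 2 * y)) ^ k ≤ ((1 + (1 + θ) * x) / (1 + 2 * x)) ^ k :=
      pow_le_pow_left₀ (hbnn y hy) (hanti x y hx (le_of_lt hxy)) k
    have h2 : lam * ((1 + (1 + θ) * y) / (1 + 2 * y)) ^ k ≤
        lam * ((1 + (1 + θ) * x) / (1 + 2 * x)) ^ k :=
      mul_le_mul_of_nonneg_left h1 hlam.le
    simp only [hg]
    linarith
  have hcont : ContinuousOn g (Set.Icc (0:ℝ) lam) := by
    apply ContinuousOn.sub continuousOn_id
    apply ContinuousOn.mul continuousOn_const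
    apply ContinuousOn.pow
    apply ContinuousOn.div
    · fun_prop
    · fun_prop
    · intro x hx; exact ne_of_gt (hb0 x hx.1)
  have hg0 : g 0 < 0 := by
    simp only [hg]
    norm_num
    exact hlam
  have hglam : 0 < g lam := by
    have hblt : (1 + (1 + θ) * lam) / (1 + 2 * lam) < 1 := by
      rw [div_lt_one (hb0 lam hlam.le)]
      nlinarith
    have hpow : ((1 + (1 + θ) * lam) / (1 + 2 * lam)) ^ k < 1 :=
      pow_lt_one₀ (hbnn lam hlam.le) hblt (by omega)
    have : lam * ((1 + (1 + θ) * lam) / (1 + 2 * lam)) ^ k < lam * 1 :=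
      (mul_lt_mul_iff_right₀ hlam).mpr hpow
    simp only [hg]
    linarith
  have h0mem : (0:ℝ) ∈ Set.Icc (g 0) (g lam) := ⟨hg0.le, hglam.le⟩
  obtain ⟨c, hcmem, hgc⟩ := intermediate_value_Icc hlam.le hcont h0mem
  have hcpos : 0 < c := by
    rcases lt_or_eq_of_le hcmem.1 with h | h
    · exact h
    · exfalso; rw [← h] at hgc; rw [hgc] at hg0; exact lt_irrefl 0 hg0
  refine ⟨c, ⟨hcpos, ?_⟩, ?_⟩
  · have : c - lam * ((1 + (1 + θ) * c) / (1 + 2 * c)) ^ k = 0 := hgc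
    linarith
  · rintro x ⟨hxpos, hxeq⟩
    have hgx : g x = 0 := by simp only [hg]; linarith
    exact hmono.injOn (Set.mem_Ici.mpr hxpos.le) (Set.mem_Ici.mpr hcpos.le) (by rw [hgx, hgc])
end

section
/- Let k = 2 and 0 < θ < 1. If (x, y) is a positive solution of the fixed-point system (★) with x ≠ y, then 1 + x + y = (λ(1−θ²) + (1−θ)·√(λ²(1+θ)² + 4λ))/2. -/
/-- For `k = 2`, `0 < θ < 1`: any positive solution of (★) with `x ≠ y` satisfies
`1 + x + y = (λ(1−θ²) + (1−θ)√(λ²(1+θ)² + 4λ))/2`. -/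
theorem stmt_5 (lam θ : ℝ) (hlam : 0 < lam) (hθ0 : 0 < θ) (hθ1 : θ < 1)
    (x y : ℝ) (hx : 0 < x) (hy : 0 < y) (hxy : x ≠ y)
    (h1 : x = lam * ((1 + x + θ * y) / (1 + x + y)) ^ 2)
    (h2 : y = lam * ((1 + θ * x + y) / (1 + x + y)) ^ 2) :
    1 + x + y =
      (lam * (1 - θ ^ 2) + (1 - θ) * Real.sqrt (lam ^ 2 * (1 + θ) ^ 2 + 4 * lam)) / 2 := by
  have hs : (0:ℝ) < 1 + x + y := by linarith
  have hsne : (1 + x + y) ≠ 0 := ne_of_gt hs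
  have e1 : x * (1 + x + y) ^ 2 = lam * (1 + x + θ * y) ^ 2 := by
    field_simp at h1
    linarith
  have e2 : y * (1 + x + y) ^ 2 = lam * (1 + θ * x + y) ^ 2 := by
    field_simp at h2
    linarith
  have hd : x - y ≠ 0 := sub_ne_zero.mpr hxy
  have hprod : (x - y) * ((1 + x + y) ^ 2 -
      (lam * (1 - θ ^ 2) * (1 + x + y) + lam * (1 - θ) ^ 2)) = 0 := by
    linear_combination e1 - e2
  have hkey : (1 + x + y) ^ 2 =
      lam * (1 - θ ^ 2) * (1 + x + y) + lam * (1 - θ) ^ 2 := by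
    rcases mul_eq_zero.mp hprod with h | h
    · exact absurd h hd
    · linarith
  set r := Real.sqrt (lam ^ 2 * (1 + θ) ^ 2 + 4 * lam) with hr
  have hnn : 0 ≤ lam ^ 2 * (1 + θ) ^ 2 + 4 * lam := by positivity
  have hr2 : r ^ 2 = lam ^ 2 * (1 + θ) ^ 2 + 4 * lam := Real.sq_sqrt hnn
  have hrnn : 0 ≤ r := Real.sqrt_nonneg _
  have hθ' : 0 < 1 - θ := by linarith
  -- s > b = lam*(1-θ^2)
  have hsb : lam * (1 - θ ^ 2) < 1 + x + y := by
    nlinarith [sq_nonneg (1 - θ), mul_pos hlam (mul_pos hθ' hθ')]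
  -- (2s - b)^2 = ((1-θ) r)^2
  have hsq : (2 * (1 + x + y) - lam * (1 - θ ^ 2)) ^ 2 = ((1 - θ) * r) ^ 2 := by
    linear_combination 4 * hkey - (1 - θ) ^ 2 * hr2
  have hpos1 : 0 ≤ 2 * (1 + x + y) - lam * (1 - θ ^ 2) := by linarith
  have hpos2 : 0 ≤ (1 - θ) * r := mul_nonneg (le_of_lt hθ') hrnn
  have hpos1' : 0 < 2 * (1 + x + y) - lam * (1 - θ ^ 2) := by linarith
  have hfac : (2 * (1 + x + y) - lam * (1 - θ ^ 2) - (1 - θ) * r) *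
      (2 * (1 + x + y) - lam * (1 - θ ^ 2) + (1 - θ) * r) = 0 := by
    linear_combination hsq
  have heq : 2 * (1 + x + y) - lam * (1 - θ ^ 2) = (1 - θ) * r := by
    rcases mul_eq_zero.mp hfac with h | h
    · linarith
    · linarith
  linarith
end

section
/- Let k = 3 and 0 < θ < 1. If (u, v) is a positive solution of the system (★★) with u ≠ v, then, writing s = u + v, one has (1+2θ)·s·uv = 1 + θs³ and s·(s³ − 2) = a·((1+θ)s³ − 1). -/
/-- For `k = 3`, `0 < θ < 1`: if `(u, v)` is a positive solution of (★★) with `u ≠ v`,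
then, with `s = u + v`, one has `(1+2θ)·s·uv = 1 + θs³` and `s(s³ − 2) = a((1+θ)s³ − 1)`. -/
theorem stmt_7 (a θ : ℝ) (ha : 0 < a) (hθ0 : 0 < θ) (hθ1 : θ < 1)
    (u v : ℝ) (hu : 0 < u) (hv : 0 < v) (huv : u ≠ v)
    (h1 : u * (1 + u ^ 3 + v ^ 3) = a * (1 + u ^ 3 + θ * v ^ 3))
    (h2 : v * (1 + u ^ 3 + v ^ 3) = a * (1 + θ * u ^ 3 + v ^ 3)) :
    (1 + 2 * θ) * (u + v) * (u * v) = 1 + θ * (u + v) ^ 3 ∧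
      (u + v) * ((u + v) ^ 3 - 2) = a * ((1 + θ) * (u + v) ^ 3 - 1) := by
  have hane : a ≠ 0 := ne_of_gt ha
  have hvu : v - u ≠ 0 := sub_ne_zero.mpr (Ne.symm huv)
  have hbr0 : a * (v - u) * (1 - u * v * (u + v) + θ * (u + v) * (u ^ 2 + v ^ 2)) = 0 := by
    linear_combination u * h2 - v * h1
  have hbr : 1 - u * v * (u + v) + θ * (u + v) * (u ^ 2 + v ^ 2) = 0 := by
    rcases mul_eq_zero.mp hbr0 with h | h
    · rcases mul_eq_zero.mp h with h | h
      · exact absurd h hane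
      · exact absurd h hvu
    · exact h
  have g1 : (1 + 2 * θ) * (u + v) * (u * v) = 1 + θ * (u + v) ^ 3 := by
    linear_combination -hbr
  refine ⟨g1, ?_⟩
  have hθne : 1 - θ ≠ 0 := by linarith
  have key : (1 - θ) * ((u + v) * ((u + v) ^ 3 - 2) - a * ((1 + θ) * (u + v) ^ 3 - 1)) = 0 := by
    linear_combination (1 + 2 * θ) * h1 + (1 + 2 * θ) * h2 + (3 * (u + v) - 3 * a * (1 + θ)) * g1
  have := (mul_eq_zero.mp key).resolve_left hθne
  linarith [this]
end

section
/- Let k = 3 and 0 < θ < 1 (ferromagnetic case). (1) If θ ≥ 1/2, then for every λ > 0 the system (★) has exactly one positive solution. (2) If θ < 1/2 and λ ≤ (1/(2−4θ))·(4/3)³, then (★) has exactly one positive solution. (3) If θ < 1/2 and λ > (1/(2−4θ))·(4/3)³, then (★) has exactly three positive solutions. -/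
open Set

/-- Solution set of the soft-core Widom–Rowlinson fixed point system in `(a,b)` coordinates,
where `x = lam*a^3`, `y = lam*b^3`. -/
def WRSab (lam θ : ℝ) : Set (ℝ × ℝ) :=
  {q | 0 < q.1 ∧ 0 < q.2 ∧
    q.1 * (1 + lam * q.1 ^ 3 + lam * q.2 ^ 3) = 1 + lam * q.1 ^ 3 + θ * (lam * q.2 ^ 3) ∧
    q.2 * (1 + lam * q.1 ^ 3 + lam * q.2 ^ 3) = 1 + θ * (lam * q.1 ^ 3) + lam * q.2 ^ 3}

theorem WRimage (lam θ : ℝ) (hlam : 0 < lam) (hθ0 : 0 < θ) :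
    {p : ℝ × ℝ | 0 < p.1 ∧ 0 < p.2 ∧
        p.1 = lam * ((1 + p.1 + θ * p.2) / (1 + p.1 + p.2)) ^ 3 ∧
        p.2 = lam * ((1 + θ * p.1 + p.2) / (1 + p.1 + p.2)) ^ 3}
      = (fun q : ℝ × ℝ => (lam * q.1 ^ 3, lam * q.2 ^ 3)) '' WRSab lam θ := by
  ext ⟨x, y⟩
  simp only [mem_setOf_eq, mem_image, Prod.mk.injEq, Prod.exists]
  constructor
  · rintro ⟨hx, hy, ex, ey⟩
    have hS : (0:ℝ) < 1 + x + y := by linarith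
    refine ⟨(1 + x + θ * y) / (1 + x + y), (1 + θ * x + y) / (1 + x + y), ⟨?_, ?_, ?_, ?_⟩, ex.symm, ey.symm⟩
    · positivity
    · positivity
    · have hT : 1 + lam * ((1 + x + θ * y) / (1 + x + y)) ^ 3
          + lam * ((1 + θ * x + y) / (1 + x + y)) ^ 3 = 1 + x + y := by rw [← ex, ← ey]
      dsimp only
      rw [hT, div_mul_cancel₀ _ (ne_of_gt hS), ← ex, ← ey]
    · have hT : 1 + lam * ((1 + x + θ * y) / (1 + x + y)) ^ 3
          + lam * ((1 + θ * x + y) / (1 + x + y)) ^ 3 = 1 + x + y := by rw [← ex, ← ey]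
      dsimp only
      rw [hT, div_mul_cancel₀ _ (ne_of_gt hS), ← ex, ← ey]
  · rintro ⟨a, b, ⟨ha, hb, e1, e2⟩, hx, hy⟩
    have hT : (0:ℝ) < 1 + lam * a ^ 3 + lam * b ^ 3 := by positivity
    have hx' : (0:ℝ) < x := hx ▸ by positivity
    have hy' : (0:ℝ) < y := hy ▸ by positivity
    refine ⟨hx', hy', ?_, ?_⟩
    · have hTxy : 1 + x + y = 1 + lam * a ^ 3 + lam * b ^ 3 := by rw [← hx, ← hy]
      have hnum : 1 + x + θ * y = a * (1 + x + y) := by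
        rw [hTxy, ← hx, ← hy, e1]
      rw [hnum, mul_div_assoc, div_self (by rw [hTxy]; exact ne_of_gt hT), mul_one, ← hx]
    · have hTxy : 1 + x + y = 1 + lam * a ^ 3 + lam * b ^ 3 := by rw [← hx, ← hy]
      have hnum : 1 + θ * x + y = b * (1 + x + y) := by
        rw [hTxy, ← hx, ← hy, e2]
      rw [hnum, mul_div_assoc, div_self (by rw [hTxy]; exact ne_of_gt hT), mul_one, ← hy]

theorem WRinj (lam θ : ℝ) (hlam : 0 < lam) :
    InjOn (fun q : ℝ × ℝ => (lam * q.1 ^ 3, lam * q.2 ^ 3)) (WRSab lam θ) := by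
  rintro ⟨a, b⟩ ⟨ha, hb, -⟩ ⟨a', b'⟩ ⟨ha', hb', -⟩ h
  simp only [Prod.mk.injEq] at h
  obtain ⟨h1, h2⟩ := h
  have e1 : a ^ 3 = a' ^ 3 := mul_left_cancel₀ (ne_of_gt hlam) h1
  have e2 : b ^ 3 = b' ^ 3 := mul_left_cancel₀ (ne_of_gt hlam) h2
  have inj : Set.InjOn (fun x : ℝ => x ^ 3) (Set.Ici 0) :=
    (pow_left_strictMonoOn₀ (by norm_num : (3:ℕ) ≠ 0)).injOn
  have : a = a' := inj (le_of_lt ha) (le_of_lt ha') e1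
  have : b = b' := inj (le_of_lt hb) (le_of_lt hb') e2
  simp_all

theorem WRoffdiag_props (lam θ : ℝ) (hlam : 0 < lam) (hθ0 : 0 < θ) (hθ1 : θ < 1)
    {a b : ℝ} (ha : 0 < a) (hb : 0 < b)
    (e1 : a * (1 + lam * a ^ 3 + lam * b ^ 3) = 1 + lam * a ^ 3 + θ * (lam * b ^ 3))
    (e2 : b * (1 + lam * a ^ 3 + lam * b ^ 3) = 1 + θ * (lam * a ^ 3) + lam * b ^ 3)
    (hab : a ≠ b) :
    1 + θ < a + b ∧ a + b < 3 / 2 ∧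
      lam * (a + b) ^ 3 * ((a + b) - 1 - θ) = 2 * (a + b) - 1 ∧
      (a * b) * (2 * (a + b) - 1) = ((a + b) - 1) * (a + b) ^ 2 := by
  have hc : lam * (a ^ 3 + b ^ 3) * ((a + b) - 1 - θ) = 2 - (a + b) := by
    linear_combination e1 + e2
  have h2 : (a - b) * (1 + lam * (a ^ 3 + b ^ 3))
      = (a - b) * ((1 - θ) * lam * (a ^ 2 + a * b + b ^ 2)) := by
    linear_combination e1 - e2
  have h3 : 1 + lam * (a ^ 3 + b ^ 3) = (1 - θ) * lam * (a ^ 2 + a * b + b ^ 2) :=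
    mul_left_cancel₀ (sub_ne_zero.mpr hab) h2
  have hcpos : 0 < lam * (a ^ 3 + b ^ 3) := by positivity
  have hsgt : 1 + θ < a + b := by nlinarith [hc, hcpos]
  have hd : (0:ℝ) < (a + b) - 1 - θ := by linarith
  have hw2 : 2 * (1 - θ) * (lam * (a * b) * (a + b) * ((a + b) - 1 - θ))
      = 2 * (1 - θ) * ((a + b) - 1) := by
    linear_combination (-(a + b) * ((a + b) - 1 - θ)) * h3 + ((a + b) - 1 + θ) * hc
  have hw : lam * (a * b) * (a + b) * ((a + b) - 1 - θ) = (a + b) - 1 :=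
    mul_left_cancel₀ (by nlinarith : (2 * (1 - θ) : ℝ) ≠ 0) hw2
  have hu : lam * (a + b) ^ 3 * ((a + b) - 1 - θ) = 2 * (a + b) - 1 := by
    linear_combination hc + 3 * hw
  have hp : (a * b) * (2 * (a + b) - 1) = ((a + b) - 1) * (a + b) ^ 2 := by
    linear_combination (a + b) ^ 2 * hw - (a * b) * hu
  have key : ((a + b) ^ 2) * (3 - 2 * (a + b)) = (2 * (a + b) - 1) * (a - b) ^ 2 := by
    linear_combination 4 * hp
  have habsq : 0 < (a - b) ^ 2 := by
    have := sub_ne_zero.mpr hab; positivity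
  have hs1 : 1 < a + b := by linarith
  have h32 : a + b < 3 / 2 := by nlinarith [key, habsq, sq_nonneg (a + b)]
  exact ⟨hsgt, h32, hu, hp⟩

theorem WRdiag_bounds (lam θ : ℝ) (hlam : 0 < lam) (hθ1 : θ < 1)
    {a : ℝ} (ha : 0 < a) (he : a * (1 + 2 * lam * a ^ 3) = 1 + (1 + θ) * (lam * a ^ 3)) :
    1 + θ < 2 * a ∧ a < 1 := by
  have key : lam * a ^ 3 * (2 * a - 1 - θ) = 1 - a := by linear_combination he
  have hA : 0 < lam * a ^ 3 := by positivity
  have h1 : a < 1 := by nlinarith [key, hA]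
  have h2 : 1 + θ < 2 * a := by nlinarith [key, hA]
  exact ⟨h2, h1⟩

theorem WRdiag_unique (lam θ : ℝ) (hlam : 0 < lam) (hθ1 : θ < 1)
    {a a' : ℝ} (ha : 0 < a) (ha' : 0 < a')
    (he : a * (1 + 2 * lam * a ^ 3) = 1 + (1 + θ) * (lam * a ^ 3))
    (he' : a' * (1 + 2 * lam * a' ^ 3) = 1 + (1 + θ) * (lam * a' ^ 3)) :
    a = a' := by
  obtain ⟨hb1, hb2⟩ := WRdiag_bounds lam θ hlam hθ1 ha he
  obtain ⟨hb1', hb2'⟩ := WRdiag_bounds lam θ hlam hθ1 ha' he'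
  have k : lam * a ^ 3 * (2 * a - 1 - θ) = 1 - a := by linear_combination he
  have k' : lam * a' ^ 3 * (2 * a' - 1 - θ) = 1 - a' := by linear_combination he'
  have cross : lam * (a ^ 3 * (2 * a - 1 - θ) * (1 - a'))
      = lam * (a' ^ 3 * (2 * a' - 1 - θ) * (1 - a)) := by
    linear_combination (1 - a') * k - (1 - a) * k'
  have cross' : a ^ 3 * (2 * a - 1 - θ) * (1 - a') = a' ^ 3 * (2 * a' - 1 - θ) * (1 - a) :=
    mul_left_cancel₀ (ne_of_gt hlam) cross
  have main : ∀ u v : ℝ, 0 < u → 0 < v → 1 + θ < 2 * u → u < 1 → 1 + θ < 2 * v → v < 1 →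
      u < v → u ^ 3 * (2 * u - 1 - θ) * (1 - v) = v ^ 3 * (2 * v - 1 - θ) * (1 - u) → False := by
    intro u v hu hv hu1 hu2 hv1 hv2 huv hcr
    have p1 : u ^ 3 < v ^ 3 := pow_lt_pow_left₀ huv hu.le (by norm_num)
    have s1 : u ^ 3 * (2 * u - 1 - θ) < v ^ 3 * (2 * v - 1 - θ) :=
      mul_lt_mul p1 (by linarith) (by linarith) (by positivity)
    have hX' : 0 < v ^ 3 * (2 * v - 1 - θ) := mul_pos (by positivity) (by linarith)
    have c1 : u ^ 3 * (2 * u - 1 - θ) * (1 - v) < v ^ 3 * (2 * v - 1 - θ) * (1 - v) :=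
      mul_lt_mul_of_pos_right s1 (by linarith)
    have c2 : v ^ 3 * (2 * v - 1 - θ) * (1 - v) < v ^ 3 * (2 * v - 1 - θ) * (1 - u) :=
      mul_lt_mul_of_pos_left (by linarith) hX'
    linarith
  rcases lt_trichotomy a a' with h | h | h
  · exact absurd cross' (by intro hcr; exact main a a' ha ha' hb1 hb2 hb1' hb2' h hcr)
  · exact h
  · exact absurd cross'.symm (by intro hcr; exact main a' a ha' ha hb1' hb2' hb1 hb2 h hcr)

theorem WRdiag_exists (lam θ : ℝ) (hlam : 0 < lam) (hθ0 : 0 < θ) (hθ1 : θ < 1) :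
    ∃ a : ℝ, 0 < a ∧ a * (1 + 2 * lam * a ^ 3) = 1 + (1 + θ) * (lam * a ^ 3) := by
  set G : ℝ → ℝ := fun a => a * (1 + 2 * lam * a ^ 3) - (1 + (1 + θ) * (lam * a ^ 3)) with hG
  have hcont : ContinuousOn G (Set.Icc 0 1) := by fun_prop
  have h0 : G 0 = -1 := by simp [hG]
  have h1 : G 1 = (1 - θ) * lam := by simp [hG]; ring
  have hmem : (0:ℝ) ∈ Set.Ioo (G 0) (G 1) := by
    rw [h0, h1]; constructor <;> nlinarith
  obtain ⟨a, haI, haG⟩ := intermediate_value_Ioo (by norm_num : (0:ℝ) ≤ 1) hcont hmem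
  exact ⟨a, haI.1, by simpa [hG, sub_eq_zero] using haG⟩

theorem WRphi_inj (lam θ : ℝ) (hlam : 0 < lam) (hθ0 : 0 < θ)
    {s s' : ℝ} (hs : 1 + θ < s) (hs' : 1 + θ < s') (h32 : s < 3 / 2) (h32' : s' < 3 / 2)
    (h : lam * s ^ 3 * (s - 1 - θ) = 2 * s - 1)
    (h' : lam * s' ^ 3 * (s' - 1 - θ) = 2 * s' - 1) :
    s = s' := by
  have hs1 : 1 < s := by linarith
  have hs1' : 1 < s' := by linarith
  have cross : lam * ((2 * s - 1) * (s' ^ 3 * (s' - 1 - θ)))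
      = lam * ((2 * s' - 1) * (s ^ 3 * (s - 1 - θ))) := by
    linear_combination (2 * s - 1) * h' - (2 * s' - 1) * h
  have cross' : (2 * s - 1) * (s' ^ 3 * (s' - 1 - θ))
      = (2 * s' - 1) * (s ^ 3 * (s - 1 - θ)) := mul_left_cancel₀ (ne_of_gt hlam) cross
  have main : ∀ u v : ℝ, 1 + θ < u → 1 + θ < v → 1 < u → 1 < v → u < v →
      (2 * u - 1) * (v ^ 3 * (v - 1 - θ)) = (2 * v - 1) * (u ^ 3 * (u - 1 - θ)) → False := by
    intro u v hu hv hu1 hv1 huv hcr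
    have hbr : 0 < 2 * u ^ 2 * v + 2 * u * v ^ 2 - u ^ 2 - u * v - v ^ 2 := by
      have e : 2 * u ^ 2 * v + 2 * u * v ^ 2 - u ^ 2 - u * v - v ^ 2
          = u ^ 2 * (2 * v - 1) + u * v * (v - 1) + v ^ 2 * (u - 1) := by ring
      rw [e]
      have t1 : 0 < u ^ 2 * (2 * v - 1) := mul_pos (by positivity) (by linarith)
      have t2 : 0 ≤ u * v * (v - 1) := mul_nonneg (by positivity) (by linarith)
      have t3 : 0 ≤ v ^ 2 * (u - 1) := mul_nonneg (by positivity) (by linarith)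
      linarith
    have k1 : u ^ 3 * (2 * v - 1) < v ^ 3 * (2 * u - 1) := by
      have e : v ^ 3 * (2 * u - 1) - u ^ 3 * (2 * v - 1)
          = (v - u) * (2 * u ^ 2 * v + 2 * u * v ^ 2 - u ^ 2 - u * v - v ^ 2) := by ring
      nlinarith [mul_pos (sub_pos.2 huv) hbr]
    have k2 : (0:ℝ) < u - 1 - θ := by linarith
    have c1 : u ^ 3 * (2 * v - 1) * (u - 1 - θ) < v ^ 3 * (2 * u - 1) * (u - 1 - θ) :=
      mul_lt_mul_of_pos_right k1 k2
    have hX : 0 < v ^ 3 * (2 * u - 1) := mul_pos (by positivity) (by linarith)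
    have c2 : v ^ 3 * (2 * u - 1) * (u - 1 - θ) < v ^ 3 * (2 * u - 1) * (v - 1 - θ) :=
      mul_lt_mul_of_pos_left (by linarith) hX
    nlinarith [hcr, c1, c2]
  rcases lt_trichotomy s s' with hlt | heq | hgt
  · exact absurd cross' (by intro hcr; exact main s s' hs hs' hs1 hs1' hlt hcr)
  · exact heq
  · exact absurd cross'.symm (by intro hcr; exact main s' s hs' hs hs1' hs1 hgt hcr)

theorem WRno_off_le (lam θ : ℝ) (hlam : 0 < lam) (hθ0 : 0 < θ) (hθ2 : θ < 1 / 2)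
    (hle : lam ≤ 1 / (2 - 4 * θ) * (4 / 3) ^ 3)
    {s : ℝ} (hs1 : 1 + θ < s) (hs2 : s < 3 / 2)
    (hφ : lam * s ^ 3 * (s - 1 - θ) = 2 * s - 1) : False := by
  have h2θ : (0:ℝ) < 1 - 2 * θ := by linarith
  have hs0 : (1:ℝ) < s := by linarith
  have hsd : (0:ℝ) < s - 1 - θ := by linarith
  have hg : (0:ℝ) < 16 * s ^ 3 + 8 * (1 - 2 * θ) * s ^ 2 + 12 * (1 - 2 * θ) * s - 9 * (1 - 2 * θ) := by
    nlinarith [mul_pos h2θ (show (0:ℝ) < 8 * s ^ 2 + 12 * s - 9 by nlinarith)]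
  have hpoly : 32 * (s ^ 3 * (s - 1 - θ)) < 27 * (1 - 2 * θ) * (2 * s - 1) := by
    have e : 27 * (1 - 2 * θ) * (2 * s - 1) - 32 * (s ^ 3 * (s - 1 - θ))
        = (3 - 2 * s) * (16 * s ^ 3 + 8 * (1 - 2 * θ) * s ^ 2 + 12 * (1 - 2 * θ) * s
            - 9 * (1 - 2 * θ)) := by ring
    nlinarith [mul_pos (show (0:ℝ) < 3 - 2 * s by linarith) hg]
  have hle' : lam * (27 * (1 - 2 * θ)) ≤ 32 := by
    rw [div_mul_eq_mul_div, one_mul, le_div_iff₀ (by linarith : (0:ℝ) < 2 - 4 * θ)] at hle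
    nlinarith [hle]
  have h1 : (2 * s - 1) * (27 * (1 - 2 * θ)) ≤ 32 * (s ^ 3 * (s - 1 - θ)) := by
    calc (2 * s - 1) * (27 * (1 - 2 * θ)) = lam * (27 * (1 - 2 * θ)) * (s ^ 3 * (s - 1 - θ)) := by
          rw [← hφ]; ring
    _ ≤ 32 * (s ^ 3 * (s - 1 - θ)) := by
          exact mul_le_mul_of_nonneg_right hle' (by positivity)
  nlinarith [h1, hpoly]

theorem WRs_exists (lam θ : ℝ) (hlam : 0 < lam) (hθ0 : 0 < θ) (hθ2 : θ < 1 / 2)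
    (hgt : 1 / (2 - 4 * θ) * (4 / 3) ^ 3 < lam) :
    ∃ s : ℝ, 1 + θ < s ∧ s < 3 / 2 ∧ lam * s ^ 3 * (s - 1 - θ) = 2 * s - 1 := by
  set F : ℝ → ℝ := fun s => lam * s ^ 3 * (s - 1 - θ) - (2 * s - 1) with hF
  have hcont : ContinuousOn F (Set.Icc (1 + θ) (3 / 2)) := by fun_prop
  have hle : (1 + θ : ℝ) ≤ 3 / 2 := by linarith
  have hFa : F (1 + θ) = -(1 + 2 * θ) := by simp [hF]; ring
  have hFb : 0 < F (3 / 2) := by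
    have h2θ : (0:ℝ) < 1 - 2 * θ := by linarith
    have h32 : 32 / (27 * (1 - 2 * θ)) < lam := by
      rw [div_lt_iff₀ (by positivity)]
      rw [div_mul_eq_mul_div, one_mul, div_lt_iff₀ (by linarith : (0:ℝ) < 2 - 4 * θ)] at hgt
      nlinarith [hgt]
    have h32' : 32 < lam * (27 * (1 - 2 * θ)) := by
      rw [div_lt_iff₀ (by positivity)] at h32; linarith
    simp only [hF]
    nlinarith [h32']
  have hmem : (0:ℝ) ∈ Set.Ioo (F (1 + θ)) (F (3 / 2)) := by
    rw [hFa]; exact ⟨by linarith, hFb⟩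
  obtain ⟨s, hsI, hsF⟩ := intermediate_value_Ioo hle hcont hmem
  exact ⟨s, hsI.1, hsI.2, by have := hsF; simp only [hF] at this; linarith⟩

theorem WRoff_construct (lam θ : ℝ) (hlam : 0 < lam) (hθ0 : 0 < θ) (hθ1 : θ < 1)
    {s : ℝ} (hs1 : 1 + θ < s) (hs2 : s < 3 / 2)
    (hφ : lam * s ^ 3 * (s - 1 - θ) = 2 * s - 1) :
    ∃ a b : ℝ, 0 < b ∧ b < a ∧ a + b = s ∧
      a * (1 + lam * a ^ 3 + lam * b ^ 3) = 1 + lam * a ^ 3 + θ * (lam * b ^ 3) ∧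
      b * (1 + lam * a ^ 3 + lam * b ^ 3) = 1 + θ * (lam * a ^ 3) + lam * b ^ 3 := by
  have hs0 : (0:ℝ) < s := by linarith
  have hsd : (0:ℝ) < s - 1 - θ := by linarith
  have h2s1 : (0:ℝ) < 2 * s - 1 := by linarith
  have hs32 : (0:ℝ) < 3 - 2 * s := by linarith
  set p : ℝ := (s - 1) * s ^ 2 / (2 * s - 1) with hpdef
  have hppos : 0 < p := by
    exact div_pos (mul_pos (by linarith) (by positivity)) h2s1
  set D : ℝ := s ^ 2 * (3 - 2 * s) / (2 * s - 1) with hDdef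
  have hDpos : 0 < D := by positivity
  have hDp : D = s ^ 2 - 4 * p := by
    rw [hDdef, hpdef]; field_simp [(by linarith : (0:ℝ) < s * 2 - 1).ne']; ring
  set d : ℝ := Real.sqrt D with hddef
  have hd0 : 0 < d := Real.sqrt_pos.2 hDpos
  have hdd : d ^ 2 = D := Real.sq_sqrt hDpos.le
  have hds : d < s := by
    have hd2 : d ^ 2 < s ^ 2 := by rw [hdd, hDp]; linarith
    nlinarith [hd2, hd0, hs0]
  refine ⟨(s + d) / 2, (s - d) / 2, by linarith, by linarith, by ring, ?_, ?_⟩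
  all_goals {
    have hsab : (s + d) / 2 + (s - d) / 2 = s := by ring
    have hpab : (s + d) / 2 * ((s - d) / 2) = p := by
      have : (s + d) / 2 * ((s - d) / 2) = (s ^ 2 - d ^ 2) / 4 := by ring
      rw [this, hdd, hDp]; ring
    have hlameq : lam = (2 * s - 1) / (s ^ 3 * (s - 1 - θ)) := by
      field_simp
      linarith [hφ]
    have h3sp : 1 + lam * (s ^ 3 - 3 * s * p) = (1 - θ) * lam * (s ^ 2 - p) := by
      rw [hlameq, hpdef]
      field_simp
      ring
    have hSsp : s * (1 + lam * (s ^ 3 - 3 * s * p)) = 2 + (1 + θ) * (lam * (s ^ 3 - 3 * s * p)) := by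
      rw [hlameq, hpdef]
      field_simp [(by linarith : (0:ℝ) < s * 2 - 1).ne']
      ring
    set a : ℝ := (s + d) / 2
    set b : ℝ := (s - d) / 2
    have hq : 1 + lam * ((a + b) ^ 3 - 3 * (a + b) * (a * b))
        = (1 - θ) * lam * ((a + b) ^ 2 - a * b) := by rw [hsab, hpab]; exact h3sp
    have hQ : (a + b) * (1 + lam * ((a + b) ^ 3 - 3 * (a + b) * (a * b)))
        = 2 + (1 + θ) * (lam * ((a + b) ^ 3 - 3 * (a + b) * (a * b))) := by
      rw [hsab, hpab]; exact hSsp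
    have hD' : (a - b) * (1 + lam * (a ^ 3 + b ^ 3)) = (1 - θ) * lam * (a ^ 3 - b ^ 3) := by
      linear_combination (a - b) * hq
    have hS' : (a + b) * (1 + lam * (a ^ 3 + b ^ 3)) = 2 + (1 + θ) * (lam * (a ^ 3 + b ^ 3)) := by
      linear_combination hQ
    first
      | exact (by linear_combination (1/2 : ℝ) * hS' + (1/2 : ℝ) * hD' :
          a * (1 + lam * a ^ 3 + lam * b ^ 3) = 1 + lam * a ^ 3 + θ * (lam * b ^ 3))
      | exact (by linear_combination (1/2 : ℝ) * hS' - (1/2 : ℝ) * hD' :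
          b * (1 + lam * a ^ 3 + lam * b ^ 3) = 1 + θ * (lam * a ^ 3) + lam * b ^ 3)
  }

/-- When there is no admissible `s`, the `(a,b)` solution set is a singleton (diagonal). -/
theorem WRsab_singleton (lam θ : ℝ) (hlam : 0 < lam) (hθ0 : 0 < θ) (hθ1 : θ < 1)
    (hno : ∀ s : ℝ, 1 + θ < s → s < 3 / 2 → lam * s ^ 3 * (s - 1 - θ) = 2 * s - 1 → False) :
    ∃ a₀ : ℝ, WRSab lam θ = {((a₀ : ℝ), (a₀ : ℝ))} := by
  obtain ⟨a₀, ha₀, he₀⟩ := WRdiag_exists lam θ hlam hθ0 hθ1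
  refine ⟨a₀, ?_⟩
  ext ⟨a, b⟩
  simp only [WRSab, mem_setOf_eq, mem_singleton_iff, Prod.mk.injEq]
  constructor
  · rintro ⟨ha, hb, e1, e2⟩
    by_cases hab : a = b
    · subst hab
      have he : a * (1 + 2 * lam * a ^ 3) = 1 + (1 + θ) * (lam * a ^ 3) := by
        linear_combination e1
      have := WRdiag_unique lam θ hlam hθ1 ha ha₀ he he₀
      exact ⟨this, this⟩
    · obtain ⟨hg, hl, hu, -⟩ := WRoffdiag_props lam θ hlam hθ0 hθ1 ha hb e1 e2 hab
      exact absurd hu (by intro h; exact hno (a + b) hg hl h)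
  · rintro ⟨rfl, rfl⟩
    exact ⟨ha₀, ha₀, by linear_combination he₀, by linear_combination he₀⟩

/-- With an admissible `s`, the `(a,b)` solution set has exactly three elements. -/
theorem WRsab_triple (lam θ : ℝ) (hlam : 0 < lam) (hθ0 : 0 < θ) (hθ1 : θ < 1)
    {s : ℝ} (hs1 : 1 + θ < s) (hs2 : s < 3 / 2)
    (hφ : lam * s ^ 3 * (s - 1 - θ) = 2 * s - 1) :
    ∃ a₀ A B : ℝ, B < A ∧ WRSab lam θ = {((a₀:ℝ), (a₀:ℝ)), (A, B), (B, A)} := by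
  obtain ⟨a₀, ha₀, he₀⟩ := WRdiag_exists lam θ hlam hθ0 hθ1
  obtain ⟨A, B, hB, hBA, hABs, eA, eB⟩ := WRoff_construct lam θ hlam hθ0 hθ1 hs1 hs2 hφ
  have hA : 0 < A := lt_trans hB hBA
  refine ⟨a₀, A, B, hBA, ?_⟩
  ext ⟨a, b⟩
  simp only [WRSab, mem_setOf_eq, mem_insert_iff, mem_singleton_iff, Prod.mk.injEq]
  constructor
  · rintro ⟨ha, hb, e1, e2⟩
    by_cases hab : a = b
    · subst hab
      have he : a * (1 + 2 * lam * a ^ 3) = 1 + (1 + θ) * (lam * a ^ 3) := by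
        linear_combination e1
      have := WRdiag_unique lam θ hlam hθ1 ha ha₀ he he₀
      exact Or.inl ⟨this, this⟩
    · obtain ⟨hg, hl, hu, hp⟩ := WRoffdiag_props lam θ hlam hθ0 hθ1 ha hb e1 e2 hab
      obtain ⟨hg', hl', hu', hp'⟩ := WRoffdiag_props lam θ hlam hθ0 hθ1 hA hB eA eB (ne_of_gt hBA)
      have hsum : a + b = A + B := WRphi_inj lam θ hlam hθ0 hg hg' hl hl' hu hu'
      have h2s : (2 * (a + b) - 1 : ℝ) ≠ 0 := by
        have : 1 < a + b := by linarith
        intro h; nlinarith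
      have hprod : a * b = A * B := by
        have e : (a * b) * (2 * (a + b) - 1) = (A * B) * (2 * (a + b) - 1) := by
          rw [hp, hsum, ← hp']
        exact mul_right_cancel₀ h2s e
      have hroot : (a - A) * (a - B) = 0 := by
        linear_combination a * hsum - hprod
      rcases mul_eq_zero.1 hroot with h | h
      · have haA : a = A := by linarith [sub_eq_zero.1 h]
        have hbB : b = B := by rw [haA] at hsum; linarith
        exact Or.inr (Or.inl ⟨haA, hbB⟩)
      · have haB : a = B := by linarith [sub_eq_zero.1 h]
        have hbA : b = A := by rw [haB] at hsum; linarith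
        exact Or.inr (Or.inr ⟨haB, hbA⟩)
  · rintro (⟨rfl, rfl⟩ | ⟨rfl, rfl⟩ | ⟨rfl, rfl⟩)
    · exact ⟨ha₀, ha₀, by linear_combination he₀, by linear_combination he₀⟩
    · exact ⟨hA, hB, eA, eB⟩
    · exact ⟨hB, hA, by linear_combination eB, by linear_combination eA⟩


/-- Ferromagnetic case, `k = 3`: the system (★) has exactly one positive solution if
`θ ≥ 1/2`, or if `θ < 1/2` and `λ ≤ (1/(2−4θ))·(4/3)³`; and exactly three positive
solutions if `θ < 1/2` and `λ > (1/(2−4θ))·(4/3)³`. -/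
theorem stmt_8 (lam θ : ℝ) (hlam : 0 < lam) (hθ0 : 0 < θ) (hθ1 : θ < 1) :
    ((1 : ℝ) / 2 ≤ θ →
      {p : ℝ × ℝ | 0 < p.1 ∧ 0 < p.2 ∧
        p.1 = lam * ((1 + p.1 + θ * p.2) / (1 + p.1 + p.2)) ^ 3 ∧
        p.2 = lam * ((1 + θ * p.1 + p.2) / (1 + p.1 + p.2)) ^ 3}.encard = 1) ∧
    (θ < 1 / 2 → lam ≤ (1 / (2 - 4 * θ)) * (4 / 3) ^ 3 →
      {p : ℝ × ℝ | 0 < p.1 ∧ 0 < p.2 ∧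
        p.1 = lam * ((1 + p.1 + θ * p.2) / (1 + p.1 + p.2)) ^ 3 ∧
        p.2 = lam * ((1 + θ * p.1 + p.2) / (1 + p.1 + p.2)) ^ 3}.encard = 1) ∧
    (θ < 1 / 2 → (1 / (2 - 4 * θ)) * (4 / 3) ^ 3 < lam →
      {p : ℝ × ℝ | 0 < p.1 ∧ 0 < p.2 ∧
        p.1 = lam * ((1 + p.1 + θ * p.2) / (1 + p.1 + p.2)) ^ 3 ∧
        p.2 = lam * ((1 + θ * p.1 + p.2) / (1 + p.1 + p.2)) ^ 3}.encard = 3) := by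
  have himg := WRimage lam θ hlam hθ0
  have hinj := (WRinj lam θ hlam).encard_image
  refine ⟨?_, ?_, ?_⟩
  · intro hθhalf
    rw [himg, hinj]
    obtain ⟨a₀, hset⟩ := WRsab_singleton lam θ hlam hθ0 hθ1
      (fun s hg hl _ => by linarith)
    rw [hset, Set.encard_singleton]
  · intro hθhalf hle
    rw [himg, hinj]
    obtain ⟨a₀, hset⟩ := WRsab_singleton lam θ hlam hθ0 hθ1
      (fun s hg hl h => WRno_off_le lam θ hlam hθ0 hθhalf hle hg hl h)
    rw [hset, Set.encard_singleton]
  · intro hθhalf hgt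
    rw [himg, hinj]
    obtain ⟨s, hs1, hs2, hφ⟩ := WRs_exists lam θ hlam hθ0 hθhalf hgt
    obtain ⟨a₀, A, B, hBA, hset⟩ := WRsab_triple lam θ hlam hθ0 hθ1 hs1 hs2 hφ
    rw [hset]
    have h1 : ((a₀:ℝ), (a₀:ℝ)) ∉ ({(A, B), (B, A)} : Set (ℝ × ℝ)) := by
      simp only [mem_insert_iff, mem_singleton_iff, Prod.mk.injEq]
      rintro (⟨h1, h2⟩ | ⟨h1, h2⟩) <;> exact absurd (h1.symm.trans h2) (by intro h; subst h; exact lt_irrefl _ hBA)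
    have h2 : ((A:ℝ), (B:ℝ)) ∉ ({(B, A)} : Set (ℝ × ℝ)) := by
      simp only [mem_singleton_iff, Prod.mk.injEq]
      rintro ⟨h1, h2⟩; exact absurd h1 (ne_of_gt hBA)
    rw [Set.encard_insert_of_notMem h1, Set.encard_insert_of_notMem h2,
      Set.encard_singleton]
    rfl
end

section
/- For every x in the closed interval [aθ, a], the derivative of γ satisfies γ′(x) = −(x^{2k} + (k+1)x^k − kaθx^{k−1})/(x^k + 1)² < 0; in particular γ is strictly decreasing on [aθ, a]. -/
/-- For every `x ∈ [aθ, a]`, the map `γ(u) = a(1+θ) − u + (u − aθ)/(1 + u^k)` has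
derivative `−(x^{2k} + (k+1)x^k − kaθx^{k−1})/(x^k + 1)²`, which is negative;
in particular `γ` is strictly decreasing on `[aθ, a]`. -/
theorem stmt_10 (k : ℕ) (hk : 2 ≤ k) (a θ : ℝ) (ha : 0 < a) (hθ0 : 0 < θ) (hθ1 : θ < 1) :
    (∀ x ∈ Set.Icc (a * θ) a,
      HasDerivAt (fun u : ℝ => a * (1 + θ) - u + (u - a * θ) / (1 + u ^ k))
        (-((x ^ (2 * k) + ((k : ℝ) + 1) * x ^ k - (k : ℝ) * a * θ * x ^ (k - 1)) /
          (x ^ k + 1) ^ 2)) x ∧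
      -((x ^ (2 * k) + ((k : ℝ) + 1) * x ^ k - (k : ℝ) * a * θ * x ^ (k - 1)) /
          (x ^ k + 1) ^ 2) < 0) ∧
    StrictAntiOn (fun u : ℝ => a * (1 + θ) - u + (u - a * θ) / (1 + u ^ k))
      (Set.Icc (a * θ) a) := by
  obtain ⟨m, rfl⟩ : ∃ m, k = m + 1 := ⟨k - 1, by omega⟩
  have haθ : 0 < a * θ := mul_pos ha hθ0
  have key : ∀ x ∈ Set.Icc (a * θ) a,
      HasDerivAt (fun u : ℝ => a * (1 + θ) - u + (u - a * θ) / (1 + u ^ (m + 1)))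
        (-((x ^ (2 * (m + 1)) + ((m + 1 : ℕ) + 1 : ℝ) * x ^ (m + 1)
            - ((m + 1 : ℕ) : ℝ) * a * θ * x ^ (m + 1 - 1)) /
          (x ^ (m + 1) + 1) ^ 2)) x ∧
      -((x ^ (2 * (m + 1)) + ((m + 1 : ℕ) + 1 : ℝ) * x ^ (m + 1)
            - ((m + 1 : ℕ) : ℝ) * a * θ * x ^ (m + 1 - 1)) /
          (x ^ (m + 1) + 1) ^ 2) < 0 := by
    intro x hx
    have hx0 : 0 < x := lt_of_lt_of_le haθ hx.1
    have hden : (0 : ℝ) < 1 + x ^ (m + 1) := by positivity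
    have h1 : HasDerivAt (fun u : ℝ => a * (1 + θ) - u) (-1) x := by
      simpa using (hasDerivAt_const x (a * (1 + θ))).fun_sub (hasDerivAt_id x)
    have h2 : HasDerivAt (fun u : ℝ => u - a * θ) 1 x := by
      simpa using (hasDerivAt_id x).fun_sub (hasDerivAt_const x (a * θ))
    have h3 : HasDerivAt (fun u : ℝ => 1 + u ^ (m + 1))
        (((m + 1 : ℕ) : ℝ) * x ^ m) x := by
      simpa using (hasDerivAt_const x (1 : ℝ)).fun_add (hasDerivAt_pow (m + 1) x)
    have hdiv := h2.div h3 (ne_of_gt hden)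
    have hsum := h1.add hdiv
    have heq : -1 + (1 * (1 + x ^ (m + 1)) - (x - a * θ) * (((m + 1 : ℕ) : ℝ) * x ^ m))
          / (1 + x ^ (m + 1)) ^ 2
        = -((x ^ (2 * (m + 1)) + ((m + 1 : ℕ) + 1 : ℝ) * x ^ (m + 1)
            - ((m + 1 : ℕ) : ℝ) * a * θ * x ^ (m + 1 - 1)) /
          (x ^ (m + 1) + 1) ^ 2) := by
      have hne : (1 + x ^ (m + 1)) ^ 2 ≠ 0 := by positivity
      have hne' : (x ^ (m + 1) + 1) ^ 2 ≠ 0 := by positivity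
      simp only [Nat.add_sub_cancel]
      field_simp
      push_cast
      ring
    refine ⟨heq ▸ hsum, ?_⟩
    have hpos : 0 < x ^ (2 * (m + 1)) + ((m + 1 : ℕ) + 1 : ℝ) * x ^ (m + 1)
        - ((m + 1 : ℕ) : ℝ) * a * θ * x ^ (m + 1 - 1) := by
      simp only [Nat.add_sub_cancel]
      push_cast
      have h1 : a * θ * x ^ m ≤ x * x ^ m :=
        mul_le_mul_of_nonneg_right hx.1 (le_of_lt (pow_pos hx0 m))
      have h2 : (0 : ℝ) < x ^ (2 * (m + 1)) := pow_pos hx0 _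
      have h3 : x * x ^ m = x ^ (m + 1) := by ring
      have h4 : (0 : ℝ) < x ^ (m + 1) := pow_pos hx0 _
      nlinarith [Nat.cast_nonneg (α := ℝ) m]
    have : (0:ℝ) < (x ^ (m + 1) + 1) ^ 2 := by positivity
    have := div_pos hpos this
    linarith
  refine ⟨key, ?_⟩
  apply strictAntiOn_of_deriv_neg (convex_Icc _ _)
  · exact fun x hx => ((key x hx).1).continuousAt.continuousWithinAt
  · intro x hx
    rw [interior_Icc] at hx
    have hx' : x ∈ Set.Icc (a * θ) a := Set.mem_Icc_of_Ioo hx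
    rw [((key x hx').1).deriv]
    exact (key x hx').2
end

section
/- The map γ sends the interval [aθ, a] into itself (indeed γ(aθ) = a and aθ < γ(a) < a), and the equation γ(x) = x has exactly one solution ξ in [aθ, a]; moreover ξ lies in the open interval (aθ, a) and satisfies ξ = a(1 + (1+θ)ξ^k)/(1 + 2ξ^k). -/
/-- Auxiliary: uniqueness of positive solutions of `x(1+2x^k) = a(1+(1+θ)x^k)`. -/
lemma stmt_11_aux (k : ℕ) (hk : 2 ≤ k) (a θ : ℝ) (ha : 0 < a) (hθ0 : 0 < θ) (hθ1 : θ < 1)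
    (x y : ℝ) (hx : 0 < x) (hy : 0 < y)
    (h1 : x * (1 + 2 * x ^ k) = a * (1 + (1 + θ) * x ^ k))
    (h2 : y * (1 + 2 * y ^ k) = a * (1 + (1 + θ) * y ^ k)) : x = y := by
  -- write x^k = x * x^(k-1)
  obtain ⟨m, rfl⟩ : ∃ m, k = m + 1 := ⟨k - 1, by omega⟩
  set s := x ^ m with hs
  set t := y ^ m with ht
  have hxk : x ^ (m + 1) = x * s := by rw [pow_succ, mul_comm]
  have hyk : y ^ (m + 1) = y * t := by rw [pow_succ, mul_comm]
  rw [hxk] at h1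
  rw [hyk] at h2
  have hs0 : 0 < s := pow_pos hx m
  have ht0 : 0 < t := pow_pos hy m
  rcases lt_trichotomy x y with hxy | hxy | hxy
  · exfalso
    have hst : s ≤ t := pow_le_pow_left₀ hx.le hxy.le m
    have key : (x + 2 * x ^ 2 * s) * (1 + (1 + θ) * y * t)
        = (y + 2 * y ^ 2 * t) * (1 + (1 + θ) * x * s) := by
      linear_combination (1 + (1 + θ) * y * t) * h1 - (1 + (1 + θ) * x * s) * h2
    nlinarith [mul_pos (sub_pos.mpr hxy) (add_pos (mul_pos hy ht0) (mul_pos hx hs0)),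
      mul_nonneg (mul_nonneg (mul_nonneg (sub_nonneg.mpr hθ1.le) (sub_nonneg.mpr hst)) hx.le) hy.le,
      mul_nonneg (mul_nonneg (mul_nonneg (mul_nonneg (sub_pos.mpr hxy).le hx.le) hs0.le) hy.le) ht0.le,
      hθ0.le]
  · exact hxy
  · exfalso
    have hst : t ≤ s := pow_le_pow_left₀ hy.le hxy.le m
    have key : (y + 2 * y ^ 2 * t) * (1 + (1 + θ) * x * s)
        = (x + 2 * x ^ 2 * s) * (1 + (1 + θ) * y * t) := by
      linear_combination (1 + (1 + θ) * x * s) * h2 - (1 + (1 + θ) * y * t) * h1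
    nlinarith [mul_pos (sub_pos.mpr hxy) (add_pos (mul_pos hx hs0) (mul_pos hy ht0)),
      mul_nonneg (mul_nonneg (mul_nonneg (sub_nonneg.mpr hθ1.le) (sub_nonneg.mpr hst)) hy.le) hx.le,
      mul_nonneg (mul_nonneg (mul_nonneg (mul_nonneg (sub_pos.mpr hxy).le hy.le) ht0.le) hx.le) hs0.le,
      hθ0.le]

/-- `γ` maps `[aθ, a]` into itself (with `γ(aθ) = a` and `aθ < γ(a) < a`), and `γ` has a
unique fixed point `ξ` in `[aθ, a]`; moreover `ξ ∈ (aθ, a)` and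
`ξ = a(1 + (1+θ)ξ^k)/(1 + 2ξ^k)`. -/
theorem stmt_11 (k : ℕ) (hk : 2 ≤ k) (a θ : ℝ) (ha : 0 < a) (hθ0 : 0 < θ) (hθ1 : θ < 1) :
    Set.MapsTo (fun u : ℝ => a * (1 + θ) - u + (u - a * θ) / (1 + u ^ k))
      (Set.Icc (a * θ) a) (Set.Icc (a * θ) a) ∧
    (a * (1 + θ) - a * θ + (a * θ - a * θ) / (1 + (a * θ) ^ k)) = a ∧
    a * θ < (a * (1 + θ) - a + (a - a * θ) / (1 + a ^ k)) ∧
    (a * (1 + θ) - a + (a - a * θ) / (1 + a ^ k)) < a ∧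
    ∃ ξ : ℝ, ξ ∈ Set.Ioo (a * θ) a ∧
      (a * (1 + θ) - ξ + (ξ - a * θ) / (1 + ξ ^ k)) = ξ ∧
      ξ = a * (1 + (1 + θ) * ξ ^ k) / (1 + 2 * ξ ^ k) ∧
      ∀ x ∈ Set.Icc (a * θ) a,
        (a * (1 + θ) - x + (x - a * θ) / (1 + x ^ k)) = x → x = ξ := by
  have haθ : 0 < a * θ := mul_pos ha hθ0
  have haθa : a * θ < a := by nlinarith
  have hden : ∀ u : ℝ, 0 < u → 0 < 1 + u ^ k := fun u hu => by positivity
  refine ⟨?_, ?_, ?_, ?_, ?_⟩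
  · intro u hu
    obtain ⟨hu1, hu2⟩ := hu
    have hu0 : 0 < u := lt_of_lt_of_le haθ hu1
    have hd := hden u hu0
    constructor
    · have h1 : 0 ≤ (u - a * θ) / (1 + u ^ k) := div_nonneg (by linarith) hd.le
      simp only
      nlinarith
    · simp only
      have : (u - a * θ) / (1 + u ^ k) ≤ u - a * θ := by
        rw [div_le_iff₀ hd]
        nlinarith [pow_pos hu0 k]
      linarith
  · rw [sub_self, zero_div]; ring
  · have hd := hden a ha
    have : 0 < (a - a * θ) / (1 + a ^ k) := div_pos (by linarith) hd
    linarith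
  · have hd := hden a ha
    have : (a - a * θ) / (1 + a ^ k) < a - a * θ := by
      rw [div_lt_iff₀ hd]
      nlinarith [pow_pos ha k]
    linarith
  · -- IVT for f(x) = x(1+2x^k) - a(1+(1+θ)x^k)
    set f : ℝ → ℝ := fun x => x * (1 + 2 * x ^ k) - a * (1 + (1 + θ) * x ^ k) with hf
    have hfc : Continuous f := by fun_prop
    have hfl : f (a * θ) < 0 := by
      have : f (a * θ) = a * (θ - 1) * (1 + (a * θ) ^ k) := by simp only [hf]; ring
      rw [this]
      have := hden (a * θ) haθ
      nlinarith
    have hfr : 0 < f a := by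
      have : f a = a * a ^ k * (1 - θ) := by simp only [hf]; ring
      rw [this]
      have := pow_pos ha k
      nlinarith
    obtain ⟨ξ, hξmem, hξ0⟩ :=
      intermediate_value_Icc haθa.le hfc.continuousOn ⟨hfl.le, hfr.le⟩
    have hξne1 : ξ ≠ a * θ := fun h => by rw [h] at hξ0; linarith
    have hξne2 : ξ ≠ a := fun h => by rw [h] at hξ0; linarith
    have hξIoo : ξ ∈ Set.Ioo (a * θ) a :=
      ⟨lt_of_le_of_ne hξmem.1 (Ne.symm hξne1), lt_of_le_of_ne hξmem.2 hξne2⟩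
    have hξ0' : ξ * (1 + 2 * ξ ^ k) = a * (1 + (1 + θ) * ξ ^ k) := by
      have : f ξ = 0 := hξ0
      simp only [hf] at this
      linarith
    have hξpos : 0 < ξ := lt_trans haθ hξIoo.1
    have hdξ := hden ξ hξpos
    have hd2ξ : (0:ℝ) < 1 + 2 * ξ ^ k := by have := pow_pos hξpos k; linarith
    refine ⟨ξ, hξIoo, ?_, ?_, ?_⟩
    · field_simp
      nlinarith [hξ0']
    · rw [eq_div_iff (ne_of_gt hd2ξ)]
      linarith [hξ0']
    · intro x hx hfix
      have hx0 : 0 < x := lt_of_lt_of_le haθ hx.1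
      have hdx := hden x hx0
      have hx' : x * (1 + 2 * x ^ k) = a * (1 + (1 + θ) * x ^ k) := by
        field_simp at hfix
        nlinarith [hfix]
      exact stmt_11_aux k hk a θ ha hθ0 hθ1 x ξ hx0 hξpos hx' hξ0'
end

section
/- Suppose either θ ≥ (k−1)/k, or θ < (k−1)/k and a^k < 1/(k−1−kθ). Then for every ξ₀ ∈ [aθ, a] the iterates γ⁽ⁿ⁾(ξ₀) converge as n → ∞ to ξ, the unique fixed point of γ in [aθ, a]. Consequently, under these conditions the equation γ(γ(x)) = x has x = ξ as its unique solution in [aθ, a]. -/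
set_option maxHeartbeats 1000000 in
/-- If `θ ≥ (k−1)/k`, or `θ < (k−1)/k` and `a^k < 1/(k−1−kθ)`, then the iterates of `γ`
starting from any `ξ₀ ∈ [aθ, a]` converge to `ξ`, the unique fixed point of `γ` in
`[aθ, a]`; consequently `γ(γ(x)) = x` has `x = ξ` as its unique solution in `[aθ, a]`. -/
theorem stmt_12 (k : ℕ) (hk : 2 ≤ k) (a θ : ℝ) (ha : 0 < a) (hθ0 : 0 < θ) (hθ1 : θ < 1)
    (hcond : ((k : ℝ) - 1) / k ≤ θ ∨
      (θ < ((k : ℝ) - 1) / k ∧ a ^ k < 1 / ((k : ℝ) - 1 - k * θ))) :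
    ∃ ξ ∈ Set.Icc (a * θ) a,
      (fun u : ℝ => a * (1 + θ) - u + (u - a * θ) / (1 + u ^ k)) ξ = ξ ∧
      (∀ x ∈ Set.Icc (a * θ) a,
        (fun u : ℝ => a * (1 + θ) - u + (u - a * θ) / (1 + u ^ k)) x = x → x = ξ) ∧
      (∀ ξ₀ ∈ Set.Icc (a * θ) a,
        Filter.Tendsto
          (fun n : ℕ => (fun u : ℝ => a * (1 + θ) - u + (u - a * θ) / (1 + u ^ k))^[n] ξ₀)
          Filter.atTop (nhds ξ)) ∧
      (∀ x ∈ Set.Icc (a * θ) a,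
        (fun u : ℝ => a * (1 + θ) - u + (u - a * θ) / (1 + u ^ k))
          ((fun u : ℝ => a * (1 + θ) - u + (u - a * θ) / (1 + u ^ k)) x) = x → x = ξ) := by
  set f : ℝ → ℝ := fun u : ℝ => a * (1 + θ) - u + (u - a * θ) / (1 + u ^ k) with hfdef
  have hk1 : (1 : ℝ) ≤ (k : ℝ) - 1 := by
    have : (2 : ℝ) ≤ (k : ℝ) := by exact_mod_cast hk
    linarith
  have hkpos : (0 : ℝ) < (k : ℝ) := by linarith
  set I : Set ℝ := Set.Icc (a * θ) a with hIdef
  have haθ : 0 < a * θ := by positivity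
  have haθa : a * θ ≤ a := by nlinarith
  have hupos : ∀ u ∈ I, 0 < u := fun u hu => lt_of_lt_of_le haθ hu.1
  -- the constants
  set M : ℝ := max (a ^ k * ((k : ℝ) - 1 - k * θ)) 0 with hMdef
  have hM0 : 0 ≤ M := le_max_right _ _
  have hM1 : M < 1 := by
    rcases hcond with h | ⟨h1, h2⟩
    · have hc : (k : ℝ) - 1 - k * θ ≤ 0 := by
        have := (div_le_iff₀ hkpos).mp h
        linarith
      have : a ^ k * ((k : ℝ) - 1 - k * θ) ≤ 0 :=
        mul_nonpos_of_nonneg_of_nonpos (by positivity) hc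
      exact max_lt (lt_of_le_of_lt this one_pos) one_pos
    · have hc : 0 < (k : ℝ) - 1 - k * θ := by
        have := (lt_div_iff₀ hkpos).mp h1
        linarith
      have h3 : a ^ k * ((k : ℝ) - 1 - k * θ) < 1 := by
        have := (lt_div_iff₀ hc).mp h2
        linarith
      exact max_lt h3 one_pos
  have hA : (0 : ℝ) < 1 + a ^ k := by positivity
  set ε : ℝ := (1 - M) / (1 + a ^ k) ^ 2 with hεdef
  have hε0 : 0 < ε := by
    apply div_pos (by linarith) (by positivity)
  have hε1 : ε ≤ 1 := by
    rw [hεdef, div_le_one (by positivity)]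
    nlinarith [pow_nonneg ha.le k]
  set L : ℝ := 1 - ε with hLdef
  have hL0 : 0 ≤ L := by linarith
  have hL1 : L < 1 := by
    rw [hLdef]; linarith
  -- f maps I to I
  have hmaps : ∀ u ∈ I, f u ∈ I := by
    intro u hu
    obtain ⟨h1, h2⟩ := hu
    have hu0 : 0 < u := lt_of_lt_of_le haθ h1
    have huk : (0 : ℝ) ≤ u ^ k := by positivity
    have hD : (1 : ℝ) ≤ 1 + u ^ k := by linarith
    have hnum : 0 ≤ u - a * θ := by linarith
    have hq1 : 0 ≤ (u - a * θ) / (1 + u ^ k) := by positivity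
    have hq2 : (u - a * θ) / (1 + u ^ k) ≤ u - a * θ := div_le_self hnum hD
    simp only [hfdef]
    constructor
    · linarith
    · linarith
  -- derivative
  have hkk : k - 1 + 1 = k := Nat.sub_add_cancel (by omega : 1 ≤ k)
  set d : ℝ → ℝ := fun u : ℝ =>
    -1 + (1 * (1 + u ^ k) - (u - a * θ) * ((k : ℝ) * u ^ (k - 1))) / ((1 + u ^ k) ^ 2)
    with hddef
  have hderiv : ∀ u : ℝ, 0 < u → HasDerivAt f (d u) u := by
    intro u hu
    have hD : (1 : ℝ) + u ^ k ≠ 0 := by positivity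
    have h1 : HasDerivAt (fun u : ℝ => u - a * θ) 1 u := (hasDerivAt_id u).sub_const _
    have h2 : HasDerivAt (fun u : ℝ => 1 + u ^ k) ((k : ℝ) * u ^ (k - 1)) u := by
      simpa using (hasDerivAt_pow k u).const_add (1 : ℝ)
    have h3 := h1.div h2 hD
    have h4 : HasDerivAt (fun u : ℝ => a * (1 + θ) - u) (-1) u := by
      simpa using (hasDerivAt_id u).const_sub (a * (1 + θ))
    simpa [hfdef, hddef, Pi.add_def, Pi.div_def] using h4.add h3
  -- bound on the derivative
  have hdbound : ∀ u ∈ I, |d u| ≤ L := by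
    intro u hu
    obtain ⟨h1, h2⟩ := hu
    have hu0 : 0 < u := lt_of_lt_of_le haθ h1
    have huk : (0 : ℝ) ≤ u ^ k := by positivity
    have hD1 : (1 : ℝ) ≤ 1 + u ^ k := by linarith
    have hDsq : (0 : ℝ) < (1 + u ^ k) ^ 2 := by positivity
    have hpow : u ^ k = u ^ (k - 1) * u := by rw [← pow_succ, hkk]
    have hukle : u ^ k ≤ a ^ k := pow_le_pow_left₀ hu0.le h2 k
    have hup : (0 : ℝ) ≤ u ^ (k - 1) := by positivity
    have hupa : u ^ (k - 1) ≤ a ^ (k - 1) := pow_le_pow_left₀ hu0.le h2 _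
    simp only [hddef]
    set N : ℝ := 1 * (1 + u ^ k) - (u - a * θ) * ((k : ℝ) * u ^ (k - 1)) with hNdef
    have hNupper : N ≤ (1 + u ^ k) ^ 2 := by
      have hnn : 0 ≤ (u - a * θ) * ((k : ℝ) * u ^ (k - 1)) :=
        mul_nonneg (by linarith) (by positivity)
      nlinarith [mul_nonneg huk (by linarith : (0 : ℝ) ≤ 1 + u ^ k)]
    have hfrac_le : N / (1 + u ^ k) ^ 2 ≤ 1 := (div_le_one hDsq).mpr hNupper
    have hkey : u ^ (k - 1) * (((k : ℝ) - 1) * u - (k : ℝ) * (a * θ)) ≤ M := by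
      rcases le_or_gt (((k : ℝ) - 1) * u - (k : ℝ) * (a * θ)) 0 with hneg | hpos
      · exact le_trans (mul_nonpos_of_nonneg_of_nonpos hup hneg) hM0
      · have step1 : u ^ (k - 1) * (((k : ℝ) - 1) * u - (k : ℝ) * (a * θ)) ≤
            a ^ (k - 1) * (((k : ℝ) - 1) * a - (k : ℝ) * (a * θ)) := by
          apply mul_le_mul hupa (by nlinarith) hpos.le (by positivity)
        have hak : a ^ (k - 1) * a = a ^ k := by rw [← pow_succ, hkk]
        have heq : a ^ (k - 1) * (((k : ℝ) - 1) * a - (k : ℝ) * (a * θ)) =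
            a ^ k * ((k : ℝ) - 1 - (k : ℝ) * θ) := by
          rw [← hak]; ring
        rw [heq] at step1
        exact le_trans step1 (le_max_left _ _)
    have hNlower : 1 - M ≤ N := by
      have heq : N = 1 - u ^ (k - 1) * (((k : ℝ) - 1) * u - (k : ℝ) * (a * θ)) := by
        rw [hNdef, hpow]; ring
      rw [heq]; linarith
    have hsq : (1 + u ^ k) ^ 2 ≤ (1 + a ^ k) ^ 2 :=
      pow_le_pow_left₀ (by linarith) (by linarith) 2
    have hfrac_ge : (1 - M) / (1 + a ^ k) ^ 2 ≤ N / (1 + u ^ k) ^ 2 :=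
      div_le_div₀ (by linarith) hNlower hDsq hsq
    have hLeq : -L = -1 + (1 - M) / (1 + a ^ k) ^ 2 := by
      rw [hLdef, hεdef]; ring
    rw [abs_le]
    constructor
    · rw [hLeq]; linarith
    · linarith
  -- Lipschitz estimate on I
  have key : ∀ u ∈ I, ∀ v ∈ I, |f u - f v| ≤ L * |u - v| := by
    intro u hu v hv
    have := Convex.norm_image_sub_le_of_norm_hasDerivWithin_le (f := f) (f' := d) (s := I)
      (fun x hx => (hderiv x (hupos x hx)).hasDerivWithinAt)
      (fun x hx => by rw [Real.norm_eq_abs]; exact hdbound x hx)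
      (convex_Icc _ _) hv hu
    simpa [Real.norm_eq_abs] using this
  -- continuity on I
  have hcont : ContinuousOn f I := fun x hx =>
    (hderiv x (hupos x hx)).continuousAt.continuousWithinAt
  -- existence of fixed point via IVT
  obtain ⟨ξ, hξI, hξfix⟩ : ∃ ξ ∈ I, f ξ = ξ := by
    have hgc : ContinuousOn (fun u => f u - u) I := hcont.sub continuousOn_id
    have h0mem : (0 : ℝ) ∈ Set.Icc (f a - a) (f (a * θ) - a * θ) := by
      constructor
      · have := (hmaps a ⟨haθa, le_refl a⟩).2; simp; linarith
      · have := (hmaps (a * θ) ⟨le_refl _, haθa⟩).1; simp; linarith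
    have := intermediate_value_Icc' haθa hgc h0mem
    obtain ⟨ξ, hξI, hξ0⟩ := this
    exact ⟨ξ, hξI, by dsimp at hξ0; linarith⟩
  -- uniqueness of fixed point
  have huniq : ∀ x ∈ I, f x = x → x = ξ := by
    intro x hx hfx
    have h := key x hx ξ hξI
    rw [hfx, hξfix] at h
    have habs : 0 ≤ |x - ξ| := abs_nonneg _
    have h0 : |x - ξ| ≤ 0 := by nlinarith
    have : x - ξ = 0 := abs_eq_zero.mp (le_antisymm h0 habs)
    linarith
  refine ⟨ξ, hξI, hξfix, huniq, ?_, ?_⟩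
  · -- convergence of iterates
    intro ξ₀ h0
    have hmem : ∀ n : ℕ, f^[n] ξ₀ ∈ I := by
      intro n
      induction n with
      | zero => simpa using h0
      | succ n ih => rw [Function.iterate_succ_apply']; exact hmaps _ ih
    have hbound : ∀ n : ℕ, |f^[n] ξ₀ - ξ| ≤ L ^ n * |ξ₀ - ξ| := by
      intro n
      induction n with
      | zero => simp
      | succ n ih =>
        rw [Function.iterate_succ_apply']
        have hstep : |f (f^[n] ξ₀) - ξ| ≤ L * |f^[n] ξ₀ - ξ| := by
          have := key (f^[n] ξ₀) (hmem n) ξ hξI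
          rwa [hξfix] at this
        calc |f (f^[n] ξ₀) - ξ| ≤ L * |f^[n] ξ₀ - ξ| := hstep
          _ ≤ L * (L ^ n * |ξ₀ - ξ|) := mul_le_mul_of_nonneg_left ih hL0
          _ = L ^ (n + 1) * |ξ₀ - ξ| := by ring
    rw [tendsto_iff_dist_tendsto_zero]
    have hto0 : Filter.Tendsto (fun n : ℕ => L ^ n * |ξ₀ - ξ|) Filter.atTop (nhds 0) := by
      have := (tendsto_pow_atTop_nhds_zero_of_lt_one hL0 hL1).mul_const |ξ₀ - ξ|
      simpa using this
    apply squeeze_zero (fun n => dist_nonneg) (fun n => ?_) hto0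
    rw [Real.dist_eq]
    exact hbound n
  · -- uniqueness for f ∘ f
    intro x hx h2
    have hfxI : f x ∈ I := hmaps x hx
    have e2 : |f x - f ξ| ≤ L * |x - ξ| := key x hx ξ hξI
    have e1 : |f (f x) - f (f ξ)| ≤ L * |f x - f ξ| :=
      key (f x) hfxI (f ξ) (by rw [hξfix]; exact hξI)
    rw [hξfix, hξfix, h2] at e1
    have habs : 0 ≤ |x - ξ| := abs_nonneg _
    have hfabs : 0 ≤ |f x - f ξ| := abs_nonneg _
    have e2' : |f x - ξ| ≤ L * |x - ξ| := by rw [hξfix] at e2; exact e2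
    have hchain : |x - ξ| ≤ L * (L * |x - ξ|) :=
      le_trans e1 (mul_le_mul_of_nonneg_left e2' hL0)
    have hle0 : |x - ξ| ≤ 0 := by nlinarith
    have : x - ξ = 0 := abs_eq_zero.mp (le_antisymm hle0 habs)
    linarith
end

section
/- Let k ≥ 4 and 0 < θ < 1 (ferromagnetic case). If θ < (k−1)/(k+1) and λ > (1/(k−1−θ(k+1)))·((k+1)/k)^k, then the fixed-point system (★) has at least three positive solutions: one of the form (ξ^k, ξ^k) on the diagonal and two off-diagonal solutions (x₀, y₀) and (y₀, x₀) with x₀ ≠ y₀. -/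
open Set Filter Topology

private lemma diag_exists (k : ℕ) (hk0 : k ≠ 0) (lam θ : ℝ) (hlam : 0 < lam)
    (hθ0 : 0 < θ) (hθ1 : θ < 1) :
    ∃ ξ : ℝ, 0 < ξ ∧ ξ ^ k = lam * ((1 + ξ ^ k + θ * ξ ^ k) / (1 + ξ ^ k + ξ ^ k)) ^ k := by
  set f : ℝ → ℝ := fun s => lam * ((1 + s + θ * s) / (1 + s + s)) ^ k - s with hf_def
  have hcont : ContinuousOn f (Icc 0 lam) := by
    apply ContinuousOn.sub _ continuousOn_id
    apply continuousOn_const.mul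
    apply ContinuousOn.pow
    apply ContinuousOn.div
    · fun_prop
    · fun_prop
    · intro x hx
      have : 0 ≤ x := hx.1
      intro h; nlinarith
  have hf0 : f 0 = lam := by simp [hf_def]
  have hflam : f lam ≤ 0 := by
    have hd : (0:ℝ) < 1 + lam + lam := by linarith
    have hratio : (1 + lam + θ * lam) / (1 + lam + lam) ≤ 1 := by
      rw [div_le_one hd]; nlinarith
    have hratio0 : 0 ≤ (1 + lam + θ * lam) / (1 + lam + lam) := by positivity
    have : ((1 + lam + θ * lam) / (1 + lam + lam)) ^ k ≤ 1 := pow_le_one₀ hratio0 hratio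
    have : lam * ((1 + lam + θ * lam) / (1 + lam + lam)) ^ k ≤ lam * 1 :=
      mul_le_mul_of_nonneg_left this hlam.le
    simp only [hf_def]; linarith
  have h0mem : (0:ℝ) ∈ Icc (f lam) (f 0) := ⟨hflam, by rw [hf0]; exact hlam.le⟩
  obtain ⟨s, hsmem, hs⟩ := intermediate_value_Icc' hlam.le hcont h0mem
  have hs' : s = lam * ((1 + s + θ * s) / (1 + s + s)) ^ k := by
    simp only [hf_def] at hs; linarith
  have hspos : 0 < s := by
    rw [hs']
    have hs0 : 0 ≤ s := hsmem.1
    have : 0 < (1 + s + θ * s) / (1 + s + s) := by positivity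
    positivity
  refine ⟨s ^ ((k:ℝ))⁻¹, Real.rpow_pos_of_pos hspos _, ?_⟩
  rw [Real.rpow_inv_natCast_pow hspos.le hk0]
  exact hs'

set_option maxHeartbeats 1000000 in
private lemma offdiag_exists (k : ℕ) (hk : 4 ≤ k) (lam θ : ℝ) (hlam : 0 < lam)
    (hθ0 : 0 < θ) (hθ1 : θ < 1)
    (hθc : θ < ((k : ℝ) - 1) / ((k : ℝ) + 1))
    (hlamc : (1 / ((k : ℝ) - 1 - θ * ((k : ℝ) + 1))) * (((k : ℝ) + 1) / k) ^ k < lam) :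
    ∃ x₀ y₀ : ℝ, 0 < x₀ ∧ 0 < y₀ ∧ x₀ ≠ y₀ ∧
      x₀ = lam * ((1 + x₀ + θ * y₀) / (1 + x₀ + y₀)) ^ k ∧
      y₀ = lam * ((1 + θ * x₀ + y₀) / (1 + x₀ + y₀)) ^ k := by
  have hk0 : k ≠ 0 := by omega
  have hK4 : (4:ℝ) ≤ (k:ℝ) := by exact_mod_cast hk
  have hKpos : (0:ℝ) < (k:ℝ) := by linarith
  set c : ℝ := (k:ℝ) - 1 - θ * ((k:ℝ) + 1) with hc_def
  have hc : 0 < c := by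
    have h1 : (0:ℝ) < (k:ℝ) + 1 := by linarith
    have := (lt_div_iff₀ h1).mp hθc
    simp only [hc_def]; linarith
  set a : ℝ := lam ^ ((k:ℝ))⁻¹ with ha_def
  have ha : 0 < a := Real.rpow_pos_of_pos hlam _
  have hak : a ^ k = lam := Real.rpow_inv_natCast_pow hlam.le hk0
  set P : ℝ → ℝ := fun t => θ + t ^ k - t - θ * t ^ (k + 1) with hP_def
  have hPcont : Continuous P := by fun_prop
  set q : ℝ → ℝ := fun t => (t - 1) / P t with hq_def
  set u : ℝ → ℝ := fun t => (q t) ^ ((k:ℝ))⁻¹ with hu_def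
  set h : ℝ → ℝ :=
    fun t => u t * (1 + q t * (1 + t ^ k)) - a * (1 + q t * (1 + θ * t ^ k)) with hh_def
  -- derivative of P at 1 is c
  have hP1 : P 1 = 0 := by simp [hP_def]
  have hPd : HasDerivAt P c 1 := by
    have h1 : HasDerivAt (fun t : ℝ => t ^ k) ((k:ℝ) * 1 ^ (k - 1)) 1 := hasDerivAt_pow k 1
    have h2 : HasDerivAt (fun t : ℝ => t ^ (k + 1)) (((k:ℝ) + 1) * 1 ^ k) 1 := by
      have := hasDerivAt_pow (k + 1) (1:ℝ)
      simpa [pow_succ] using this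
    have := (((hasDerivAt_const (1:ℝ) θ).add h1).sub (hasDerivAt_id 1)).sub (h2.const_mul θ)
    have hcv : c = 0 + (k:ℝ) * 1 ^ (k - 1) - 1 - θ * (((k:ℝ) + 1) * 1 ^ k) := by
      rw [hc_def, one_pow, one_pow]; ring
    rw [hcv]
    exact this
  -- q tends to c⁻¹ as t → 1⁺
  have hqlim : Tendsto q (𝓝[>] (1:ℝ)) (𝓝 c⁻¹) := by
    have hslope : Tendsto (slope P 1) (𝓝[≠] (1:ℝ)) (𝓝 c) :=
      hasDerivAt_iff_tendsto_slope.mp hPd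
    have h1 : Tendsto (fun t => (slope P 1 t)⁻¹) (𝓝[≠] (1:ℝ)) (𝓝 c⁻¹) := hslope.inv₀ hc.ne'
    have h2 : (fun t => (slope P 1 t)⁻¹) = q := by
      funext t
      rw [slope_def_field, hP1]
      simp [hq_def, div_eq_mul_inv]
    rw [h2] at h1
    exact h1.mono_left (nhdsWithin_mono 1 (fun t ht => ne_of_gt ht))
  -- limit of h as t → 1⁺
  set u1 : ℝ := (c⁻¹) ^ ((k:ℝ))⁻¹ with hu1_def
  have hu1pos : 0 < u1 := Real.rpow_pos_of_pos (inv_pos.mpr hc) _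
  have hu1k : u1 ^ k = c⁻¹ := Real.rpow_inv_natCast_pow (inv_pos.mpr hc).le hk0
  have htk : Tendsto (fun t : ℝ => t ^ k) (𝓝[>] (1:ℝ)) (𝓝 (1:ℝ)) := by
    have : ContinuousAt (fun t : ℝ => t ^ k) 1 := (continuous_pow k).continuousAt
    simpa using this.tendsto.mono_left nhdsWithin_le_nhds
  have hulim : Tendsto u (𝓝[>] (1:ℝ)) (𝓝 u1) :=
    ((Real.continuousAt_rpow_const _ _ (Or.inl (inv_ne_zero hc.ne'))).tendsto).comp hqlim
  have hhlim : Tendsto h (𝓝[>] (1:ℝ))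
      (𝓝 (u1 * (1 + c⁻¹ * (1 + 1)) - a * (1 + c⁻¹ * (1 + θ * 1)))) := by
    apply Tendsto.sub
    · exact hulim.mul (tendsto_const_nhds.add (hqlim.mul (tendsto_const_nhds.add htk)))
    · exact tendsto_const_nhds.mul
        (tendsto_const_nhds.add (hqlim.mul (tendsto_const_nhds.add (htk.const_mul θ))))
  -- the limit value is negative
  have hneg : u1 * (1 + c⁻¹ * (1 + 1)) - a * (1 + c⁻¹ * (1 + θ * 1)) < 0 := by
    have ha1 : u1 * (((k:ℝ) + 1) / k) < a := by
      refine lt_of_pow_lt_pow_left₀ k ha.le ?_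
      rw [mul_pow, hu1k, hak]
      rw [inv_eq_one_div]
      exact hlamc
    have key : ((k:ℝ) + 1) / k * (1 + c⁻¹ * (1 + θ * 1)) = 1 + c⁻¹ * (1 + 1) := by
      rw [hc_def]
      have hcne : (k:ℝ) - 1 - θ * ((k:ℝ) + 1) ≠ 0 := by rw [hc_def] at hc; exact hc.ne'
      rw [div_mul_eq_mul_div, div_eq_iff hKpos.ne']
      have hinv := inv_mul_cancel₀ hcne
      linear_combination (-1) * hinv
    have hfac : 0 < 1 + c⁻¹ * (1 + θ * 1) := by
      have := mul_pos (inv_pos.mpr hc) (by linarith : (0:ℝ) < 1 + θ * 1)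
      linarith
    have := mul_lt_mul_of_pos_right ha1 hfac
    rw [mul_assoc, key] at this
    linarith
  -- pick t₁ > 1 with h t₁ < 0 and q t₁ > 0
  have hev : ∀ᶠ t in 𝓝[>] (1:ℝ), h t < 0 ∧ 0 < q t ∧ 1 < t := by
    refine (hhlim.eventually_lt_const hneg).and ((hqlim.eventually_const_lt (inv_pos.mpr hc)).and ?_)
    exact eventually_mem_nhdsWithin
  obtain ⟨t₁, ht₁h, ht₁q, ht₁1⟩ := hev.exists
  have hPt₁ : 0 < P t₁ := by
    rcases lt_trichotomy (P t₁) 0 with hlt | heq | hgt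
    · exfalso
      have : q t₁ < 0 := div_neg_of_pos_of_neg (by linarith) hlt
      linarith
    · exfalso
      have : q t₁ = 0 := by simp [hq_def, heq]
      linarith
    · exact hgt
  -- T : P T < 0
  set T : ℝ := max (t₁ + 1) (2 / θ) with hT_def
  have hTt₁ : t₁ + 1 ≤ T := le_max_left _ _
  have hT1 : 1 < T := by linarith
  have hθT : 2 ≤ θ * T := by
    have h1 : 2 / θ ≤ T := le_max_right _ _
    have := (div_le_iff₀ hθ0).mp h1
    linarith
  have hPT : P T < 0 := by
    have hTk : 0 < T ^ k := pow_pos (by linarith) k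
    have hps : θ * T ^ (k + 1) = (θ * T) * T ^ k := by rw [pow_succ]; ring
    have h2 : 2 * T ^ k ≤ θ * T ^ (k + 1) := by
      rw [hps]; exact mul_le_mul_of_nonneg_right hθT hTk.le
    simp only [hP_def]
    linarith [h2, hTk, hθ1, hT1]
  -- first zero of P after t₁
  set S : Set ℝ := Icc t₁ T ∩ {t | P t ≤ 0} with hS_def
  have hScl : IsClosed S := isClosed_Icc.inter (isClosed_le hPcont continuous_const)
  have hSne : S.Nonempty := ⟨T, ⟨by linarith, le_refl T⟩, hPT.le⟩
  have hSbdd : BddBelow S := ⟨t₁, fun x hx => hx.1.1⟩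
  set ts : ℝ := sInf S with hts_def
  have hts_mem : ts ∈ S := hScl.csInf_mem hSne hSbdd
  have hts_lb : t₁ ≤ ts := hts_mem.1.1
  have hts_ub : ts ≤ T := hts_mem.1.2
  have hts_gt : t₁ < ts := by
    rcases lt_or_eq_of_le hts_lb with hlt | heq
    · exact hlt
    · exfalso
      have : P ts ≤ 0 := hts_mem.2
      rw [← heq] at this
      linarith
  have hPpos : ∀ t, t₁ ≤ t → t < ts → 0 < P t := by
    intro t h1 h2
    by_contra hle
    push_neg at hle
    have hmem : t ∈ S := ⟨⟨h1, by linarith⟩, hle⟩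
    have := csInf_le hSbdd hmem
    linarith
  -- find t' close to ts with q t' huge
  set B : ℝ := a * (1 + θ * T ^ k) + a + 1 with hB_def
  have hTkpos : 0 < T ^ k := pow_pos (by linarith) k
  have hBpos : 0 < B := by
    have h0 : 0 < θ * T ^ k := mul_pos hθ0 hTkpos
    have h1 : 0 < a * (1 + θ * T ^ k) := mul_pos ha (by linarith)
    simp only [hB_def]
    linarith
  set M : ℝ := max (B ^ k) 1 with hM_def
  have hM1 : (1:ℝ) ≤ M := le_max_right _ _
  have hMpos : 0 < M := by linarith
  set ε : ℝ := (t₁ - 1) / M with hε_def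
  have hεpos : 0 < ε := div_pos (by linarith) hMpos
  have hPts_lt : ∀ᶠ t in 𝓝[<] ts, P t < ε :=
    ((hPcont.tendsto ts).mono_left nhdsWithin_le_nhds).eventually_lt_const
      (lt_of_le_of_lt hts_mem.2 hεpos)
  have hIoo : Ioo t₁ ts ∈ 𝓝[<] ts := Ioo_mem_nhdsLT_of_mem ⟨hts_gt, le_refl ts⟩
  obtain ⟨t', ht'P, ht'I⟩ := (hPts_lt.and (eventually_of_mem hIoo (fun x hx => hx))).exists
  have hPt' : 0 < P t' := hPpos t' ht'I.1.le ht'I.2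
  have hqt' : M < q t' := by
    have h1 : (t₁ - 1) / P t' ≤ (t' - 1) / P t' := by
      gcongr <;> linarith [ht'I.1]
    have h2 : (t₁ - 1) / ε < (t₁ - 1) / P t' :=
      div_lt_div_of_pos_left (by linarith) hPt' ht'P
    have h3 : (t₁ - 1) / ε = M := by
      rw [hε_def, div_div_eq_mul_div, mul_div_assoc, mul_comm]
      exact div_mul_cancel₀ M (by intro hh; rw [sub_eq_zero] at hh; linarith)
    simp only [hq_def]
    rw [h3] at h2
    linarith
  -- h t' > 0
  have hqt'pos : 0 < q t' := by linarith
  have hut'k : (u t') ^ k = q t' := Real.rpow_inv_natCast_pow hqt'pos.le hk0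
  have hut'pos : 0 < u t' := Real.rpow_pos_of_pos hqt'pos _
  have hBu : B < u t' := by
    refine lt_of_pow_lt_pow_left₀ k hut'pos.le ?_
    rw [hut'k]
    exact lt_of_le_of_lt (le_max_left _ _) hqt'
  have hht' : 0 < h t' := by
    have hq1 : 1 < q t' := lt_of_le_of_lt hM1 hqt'
    have htk'pos : 0 < t' ^ k := pow_pos (by linarith [ht'I.1]) k
    have hbound : θ * t' ^ k ≤ θ * T ^ k := by
      have h1 : t' ^ k ≤ T ^ k :=
        pow_le_pow_left₀ (by linarith [ht'I.1] : (0:ℝ) ≤ t') (by linarith [ht'I.2, hts_ub]) k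
      exact mul_le_mul_of_nonneg_left h1 hθ0.le
    have s1 : a * (1 + q t' * (1 + θ * t' ^ k)) ≤ a + q t' * (a * (1 + θ * T ^ k)) := by
      have := mul_le_mul_of_nonneg_left hbound (mul_pos ha hqt'pos).le
      linarith [this]
    have s2 : a + q t' * (a * (1 + θ * T ^ k)) = q t' * B - ((a + 1) * q t' - a) := by
      simp only [hB_def]; ring
    have s3 : (1:ℝ) ≤ (a + 1) * q t' - a := by
      linarith [mul_pos ha (sub_pos.mpr hq1)]
    have s4 : q t' * B < q t' * u t' := mul_lt_mul_of_pos_left hBu hqt'pos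
    have s5 : u t' * q t' ≤ u t' * (1 + q t' * (1 + t' ^ k)) := by
      have hin : q t' ≤ 1 + q t' * (1 + t' ^ k) := by
        linarith [mul_pos hqt'pos htk'pos]
      exact mul_le_mul_of_nonneg_left hin hut'pos.le
    simp only [hh_def]
    linarith [s1, s2, s3, s4, s5]
  -- IVT for h on [t₁, t']
  have ht₁t' : t₁ ≤ t' := ht'I.1.le
  have hPIcc : ∀ x ∈ Icc t₁ t', 0 < P x :=
    fun x hx => hPpos x hx.1 (lt_of_le_of_lt hx.2 ht'I.2)
  have hqIcc : ∀ x ∈ Icc t₁ t', 0 < q x := by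
    intro x hx
    exact div_pos (by linarith [hx.1]) (hPIcc x hx)
  have hqcont : ContinuousOn q (Icc t₁ t') := by
    apply ContinuousOn.div
    · fun_prop
    · exact hPcont.continuousOn
    · exact fun x hx => (hPIcc x hx).ne'
  have hucont : ContinuousOn u (Icc t₁ t') :=
    hqcont.rpow_const (fun x hx => Or.inl (hqIcc x hx).ne')
  have hhcont : ContinuousOn h (Icc t₁ t') := by
    apply ContinuousOn.sub
    · exact hucont.mul (continuousOn_const.add (hqcont.mul
        (continuousOn_const.add (continuous_pow k).continuousOn)))
    · exact continuousOn_const.mul (continuousOn_const.add (hqcont.mul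
        (continuousOn_const.add (continuousOn_const.mul (continuous_pow k).continuousOn))))
  have h0mem : (0:ℝ) ∈ Icc (h t₁) (h t') := ⟨ht₁h.le, hht'.le⟩
  obtain ⟨t₀, ht₀mem, ht₀⟩ := intermediate_value_Icc ht₁t' hhcont h0mem
  -- properties of t₀
  have ht₀1 : 1 < t₀ := lt_of_lt_of_le ht₁1 ht₀mem.1
  have hP₀ : 0 < P t₀ := hPIcc t₀ ht₀mem
  have hQ₀ : 0 < q t₀ := hqIcc t₀ ht₀mem
  have hU₀ : 0 < u t₀ := Real.rpow_pos_of_pos hQ₀ _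
  have hUk₀ : (u t₀) ^ k = q t₀ := Real.rpow_inv_natCast_pow hQ₀.le hk0
  have htk₀ : 1 < t₀ ^ k := one_lt_pow₀ ht₀1 hk0
  have hQP : q t₀ * P t₀ = t₀ - 1 := div_mul_cancel₀ _ hP₀.ne'
  have hD₀ : 0 < 1 + q t₀ * (1 + t₀ ^ k) := by
    have : 0 < q t₀ * (1 + t₀ ^ k) := mul_pos hQ₀ (by linarith)
    linarith
  have hE1 : u t₀ * (1 + q t₀ * (1 + t₀ ^ k)) = a * (1 + q t₀ * (1 + θ * t₀ ^ k)) := by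
    have : h t₀ = 0 := ht₀
    simp only [hh_def] at this
    linarith
  -- the off-diagonal solution
  refine ⟨q t₀, t₀ ^ k * q t₀, hQ₀, mul_pos (by linarith) hQ₀, ?_, ?_, ?_⟩
  · intro heq
    linarith [mul_pos (sub_pos.mpr htk₀) hQ₀, heq]
  · -- first equation
    have e1 : 1 + q t₀ + θ * (t₀ ^ k * q t₀) = 1 + q t₀ * (1 + θ * t₀ ^ k) := by ring
    have e2 : 1 + q t₀ + t₀ ^ k * q t₀ = 1 + q t₀ * (1 + t₀ ^ k) := by ring
    rw [e1, e2, ← hak, ← mul_pow]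
    have hr : a * ((1 + q t₀ * (1 + θ * t₀ ^ k)) / (1 + q t₀ * (1 + t₀ ^ k))) = u t₀ := by
      rw [mul_div_assoc', div_eq_iff hD₀.ne']
      linarith [hE1]
    rw [hr, hUk₀]
  · -- second equation
    have hN2 : 1 + θ * q t₀ + t₀ ^ k * q t₀ = t₀ * (1 + q t₀ * (1 + θ * t₀ ^ k)) := by
      simp only [hP_def] at hQP
      linear_combination hQP
    have e2 : 1 + q t₀ + t₀ ^ k * q t₀ = 1 + q t₀ * (1 + t₀ ^ k) := by ring
    rw [hN2, e2, ← hak, ← mul_pow]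
    have hr : a * (t₀ * (1 + q t₀ * (1 + θ * t₀ ^ k)) / (1 + q t₀ * (1 + t₀ ^ k)))
        = t₀ * u t₀ := by
      rw [mul_div_assoc', div_eq_iff hD₀.ne']
      linear_combination (-t₀) * hE1
    rw [hr, mul_pow, hUk₀]

/-- Ferromagnetic case, `k ≥ 4`: if `θ < (k−1)/(k+1)` and
`λ > (1/(k−1−θ(k+1)))·((k+1)/k)^k`, then (★) has at least three positive solutions:
one diagonal solution `(ξ^k, ξ^k)` and two off-diagonal solutions `(x₀, y₀)`, `(y₀, x₀)`. -/
theorem stmt_13 (k : ℕ) (hk : 4 ≤ k) (lam θ : ℝ) (hlam : 0 < lam)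
    (hθ0 : 0 < θ) (hθ1 : θ < 1)
    (hθc : θ < ((k : ℝ) - 1) / ((k : ℝ) + 1))
    (hlamc : (1 / ((k : ℝ) - 1 - θ * ((k : ℝ) + 1))) * (((k : ℝ) + 1) / k) ^ k < lam) :
    ∃ ξ x₀ y₀ : ℝ, 0 < ξ ∧ 0 < x₀ ∧ 0 < y₀ ∧ x₀ ≠ y₀ ∧
      (ξ ^ k = lam * ((1 + ξ ^ k + θ * ξ ^ k) / (1 + ξ ^ k + ξ ^ k)) ^ k) ∧
      (x₀ = lam * ((1 + x₀ + θ * y₀) / (1 + x₀ + y₀)) ^ k ∧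
        y₀ = lam * ((1 + θ * x₀ + y₀) / (1 + x₀ + y₀)) ^ k) ∧
      (y₀ = lam * ((1 + y₀ + θ * x₀) / (1 + y₀ + x₀)) ^ k ∧
        x₀ = lam * ((1 + θ * y₀ + x₀) / (1 + y₀ + x₀)) ^ k) := by
  obtain ⟨ξ, hξpos, hξeq⟩ := diag_exists k (by omega) lam θ hlam hθ0 hθ1
  obtain ⟨x₀, y₀, hx₀, hy₀, hne, heq1, heq2⟩ :=
    offdiag_exists k hk lam θ hlam hθ0 hθ1 hθc hlamc
  refine ⟨ξ, x₀, y₀, hξpos, hx₀, hy₀, hne, hξeq, ⟨heq1, heq2⟩, ?_, ?_⟩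
  · rw [show 1 + y₀ + θ * x₀ = 1 + θ * x₀ + y₀ from by ring,
      show 1 + y₀ + x₀ = 1 + x₀ + y₀ from by ring]
    exact heq2
  · rw [show 1 + θ * y₀ + x₀ = 1 + x₀ + θ * y₀ from by ring,
      show 1 + y₀ + x₀ = 1 + x₀ + y₀ from by ring]
    exact heq1
end

section
/- Let 0 < θ < 1 and λ > 0, and let (z1, z2) be a positive tree solution of the Widom–Rowlinson recursion. Then there exists a positive solution (z1⁻, z1⁺, z2⁻, z2⁺) of the boundary system (◇) such that for every vertex i ∈ V and every j ∈ {1, 2}: zj⁻ ≤ zj(i) ≤ zj⁺. -/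
namespace WRaux

noncomputable def f (θ x y : ℝ) : ℝ := (1 + x + θ * y) / (1 + x + y)

lemma den_pos {x y : ℝ} (hx : 0 ≤ x) (hy : 0 ≤ y) : 0 < 1 + x + y := by linarith

lemma theta_le_f {θ x y : ℝ} (hθ1 : θ ≤ 1) (hx : 0 ≤ x) (hy : 0 ≤ y) :
    θ ≤ f θ x y := by
  rw [f, le_div_iff₀ (den_pos hx hy)]
  nlinarith

lemma f_le_one {θ x y : ℝ} (hθ1 : θ ≤ 1) (hx : 0 ≤ x) (hy : 0 ≤ y) :
    f θ x y ≤ 1 := by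
  rw [f, div_le_one (den_pos hx hy)]
  nlinarith

lemma f_mono {θ x y x' y' : ℝ} (hθ1 : θ ≤ 1)
    (hx : 0 ≤ x) (hy' : 0 ≤ y') (hxx : x ≤ x') (hyy : y' ≤ y) :
    f θ x y ≤ f θ x' y' := by
  have hx' : 0 ≤ x' := le_trans hx hxx
  have hy : 0 ≤ y := le_trans hy' hyy
  rw [f, f, div_le_div_iff₀ (den_pos hx hy) (den_pos hx' hy')]
  nlinarith [mul_nonneg (sub_nonneg.2 hxx) (sub_nonneg.2 hyy),
    mul_nonneg (sub_nonneg.2 hxx) hy', mul_nonneg hx (sub_nonneg.2 hyy)]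

/-- The pair iteration: lower and upper bounding sequences. -/
noncomputable def seq (lam θ : ℝ) (k : ℕ) : ℕ → ℝ × ℝ
  | 0 => (lam * θ ^ k, lam)
  | n + 1 =>
      (lam * f θ (seq lam θ k n).1 (seq lam θ k n).2 ^ k,
       lam * f θ (seq lam θ k n).2 (seq lam θ k n).1 ^ k)

variable {lam θ : ℝ} {k : ℕ}

/-- Master invariant. -/
lemma seq_inv (hlam : 0 < lam) (hθ0 : 0 < θ) (hθ1 : θ < 1) (n : ℕ) :
    lam * θ ^ k ≤ (seq lam θ k n).1 ∧ (seq lam θ k n).1 ≤ (seq lam θ k n).2 ∧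
    (seq lam θ k n).2 ≤ lam ∧ (seq lam θ k n).1 ≤ (seq lam θ k (n+1)).1 ∧
    (seq lam θ k (n+1)).2 ≤ (seq lam θ k n).2 := by
  have hθk : (0:ℝ) < θ ^ k := pow_pos hθ0 k
  have key : ∀ a b : ℝ, lam * θ ^ k ≤ a → a ≤ b → b ≤ lam →
      (lam * θ ^ k ≤ lam * f θ a b ^ k ∧ lam * f θ a b ^ k ≤ lam * f θ b a ^ k ∧
       lam * f θ b a ^ k ≤ lam) := by
    intro a b ha hab hb
    have ha0 : 0 ≤ a := le_trans (by positivity) ha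
    have hb0 : 0 ≤ b := le_trans ha0 hab
    have h1 : θ ≤ f θ a b := theta_le_f hθ1.le ha0 hb0
    have h2 : f θ a b ≤ f θ b a := f_mono hθ1.le ha0 ha0 hab hab
    have h3 : f θ b a ≤ 1 := f_le_one hθ1.le hb0 ha0
    refine ⟨?_, ?_, ?_⟩
    · exact mul_le_mul_of_nonneg_left (pow_le_pow_left₀ hθ0.le h1 k) hlam.le
    · exact mul_le_mul_of_nonneg_left
        (pow_le_pow_left₀ (le_trans hθ0.le h1) h2 k) hlam.le
    · calc lam * f θ b a ^ k ≤ lam * 1 ^ k := mul_le_mul_of_nonneg_left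
            (pow_le_pow_left₀ (le_trans hθ0.le (le_trans h1 h2)) h3 k) hlam.le
        _ = lam := by ring
  -- monotone step under ordering of inputs
  have step : ∀ a b a' b' : ℝ, 0 ≤ a → 0 ≤ a' → a ≤ a' → a' ≤ b' → b' ≤ b →
      lam * f θ a b ^ k ≤ lam * f θ a' b' ^ k ∧
      lam * f θ b' a' ^ k ≤ lam * f θ b a ^ k := by
    intro a b a' b' ha ha' haa hab' hbb
    have hb'0 : 0 ≤ b' := le_trans ha' hab'
    have hb0 : 0 ≤ b := le_trans hb'0 hbb
    have hm1 : f θ a b ≤ f θ a' b' := f_mono hθ1.le ha hb'0 haa hbb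
    have hm2 : f θ b' a' ≤ f θ b a := f_mono hθ1.le hb'0 ha hbb haa
    have hfa : θ ≤ f θ a b := theta_le_f hθ1.le ha hb0
    have hfb : θ ≤ f θ b' a' := theta_le_f hθ1.le hb'0 ha'
    exact ⟨mul_le_mul_of_nonneg_left (pow_le_pow_left₀ (le_trans hθ0.le hfa) hm1 k) hlam.le,
      mul_le_mul_of_nonneg_left (pow_le_pow_left₀ (le_trans hθ0.le hfb) hm2 k) hlam.le⟩
  induction n with
  | zero =>
      have h0a : (seq lam θ k 0).1 = lam * θ ^ k := rfl
      have h0b : (seq lam θ k 0).2 = lam := rfl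
      have hab : lam * θ ^ k ≤ lam := by
        nlinarith [pow_le_one₀ hθ0.le hθ1.le (n := k)]
      have hk := key (lam * θ ^ k) lam le_rfl hab le_rfl
      refine ⟨le_rfl, hab, le_rfl, ?_, ?_⟩
      · exact hk.1
      · exact hk.2.2
  | succ n ih =>
      obtain ⟨h1, h2, h3, h4, h5⟩ := ih
      have ha0 : 0 ≤ (seq lam θ k n).1 := le_trans (by positivity) h1
      have ha1 : lam * θ ^ k ≤ (seq lam θ k (n+1)).1 := le_trans h1 h4
      have hb1 : (seq lam θ k (n+1)).2 ≤ lam := le_trans h5 h3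
      have hab1 : (seq lam θ k (n+1)).1 ≤ (seq lam θ k (n+1)).2 :=
        (key _ _ h1 h2 h3).2.1
      have hst := step (seq lam θ k n).1 (seq lam θ k n).2
        (seq lam θ k (n+1)).1 (seq lam θ k (n+1)).2 ha0
        (le_trans (by positivity) ha1) h4 hab1 h5
      exact ⟨ha1, hab1, hb1, hst.1, hst.2⟩

end WRaux

namespace Limits
open Filter Topology

variable {lam θ : ℝ} {k : ℕ}

lemma mono_a (hlam : 0 < lam) (hθ0 : 0 < θ) (hθ1 : θ < 1) :
    Monotone (fun n => (WRaux.seq lam θ k n).1) :=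
  monotone_nat_of_le_succ fun n => (WRaux.seq_inv hlam hθ0 hθ1 n).2.2.2.1

lemma anti_b (hlam : 0 < lam) (hθ0 : 0 < θ) (hθ1 : θ < 1) :
    Antitone (fun n => (WRaux.seq lam θ k n).2) :=
  antitone_nat_of_succ_le fun n => (WRaux.seq_inv hlam hθ0 hθ1 n).2.2.2.2

lemma main_limits (hlam : 0 < lam) (hθ0 : 0 < θ) (hθ1 : θ < 1) :
    ∃ A B : ℝ, lam * θ ^ k ≤ A ∧ lam * θ ^ k ≤ B ∧
      A = lam * WRaux.f θ A B ^ k ∧ B = lam * WRaux.f θ B A ^ k ∧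
      (∀ x : ℝ, (∀ n, (WRaux.seq lam θ k n).1 ≤ x) → A ≤ x) ∧
      (∀ x : ℝ, (∀ n, x ≤ (WRaux.seq lam θ k n).2) → x ≤ B) := by
  set a : ℕ → ℝ := fun n => (WRaux.seq lam θ k n).1 with ha
  set b : ℕ → ℝ := fun n => (WRaux.seq lam θ k n).2 with hb
  have inv := WRaux.seq_inv (lam := lam) (θ := θ) (k := k) hlam hθ0 hθ1
  have hbdda : BddAbove (Set.range a) :=
    ⟨lam, by rintro x ⟨n, rfl⟩; exact le_trans (inv n).2.1 (inv n).2.2.1⟩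
  have hbddb : BddBelow (Set.range b) :=
    ⟨lam * θ ^ k, by rintro x ⟨n, rfl⟩; exact le_trans (inv n).1 (inv n).2.1⟩
  set A := iSup a with hA
  set B := iInf b with hB
  have hta : Tendsto a atTop (𝓝 A) :=
    tendsto_atTop_ciSup (mono_a hlam hθ0 hθ1) hbdda
  have htb : Tendsto b atTop (𝓝 B) :=
    tendsto_atTop_ciInf (anti_b hlam hθ0 hθ1) hbddb
  have hle_a : ∀ n, a n ≤ A := fun n => le_ciSup hbdda n
  have hle_b : ∀ n, B ≤ b n := fun n => ciInf_le hbddb n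
  have hA0 : lam * θ ^ k ≤ A := le_trans (inv 0).1 (hle_a 0)
  have hB0 : lam * θ ^ k ≤ B := by
    refine le_ciInf fun n => le_trans (inv n).1 (inv n).2.1
  have hApos : 0 < A := lt_of_lt_of_le (by positivity) hA0
  have hBpos : 0 < B := lt_of_lt_of_le (by positivity) hB0
  have hden : (1 : ℝ) + A + B ≠ 0 := by positivity
  have hdenB : (1 : ℝ) + B + A ≠ 0 := by positivity
  -- limit of the recursion step
  have hFA : Tendsto (fun n => lam * WRaux.f θ (a n) (b n) ^ k) atTop (𝓝 (lam * WRaux.f θ A B ^ k)) := by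
    unfold WRaux.f
    exact tendsto_const_nhds.mul
      ((((tendsto_const_nhds.add hta).add (tendsto_const_nhds.mul htb)).div
        ((tendsto_const_nhds.add hta).add htb) hden).pow k)
  have hFB : Tendsto (fun n => lam * WRaux.f θ (b n) (a n) ^ k) atTop (𝓝 (lam * WRaux.f θ B A ^ k)) := by
    unfold WRaux.f
    exact tendsto_const_nhds.mul
      ((((tendsto_const_nhds.add htb).add (tendsto_const_nhds.mul hta)).div
        ((tendsto_const_nhds.add htb).add hta) hdenB).pow k)
  have hshA : Tendsto (fun n => a (n + 1)) atTop (𝓝 A) :=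
    hta.comp (tendsto_add_atTop_nat 1)
  have hshB : Tendsto (fun n => b (n + 1)) atTop (𝓝 B) :=
    htb.comp (tendsto_add_atTop_nat 1)
  have heqA : (fun n => a (n + 1)) = fun n => lam * WRaux.f θ (a n) (b n) ^ k := rfl
  have heqB : (fun n => b (n + 1)) = fun n => lam * WRaux.f θ (b n) (a n) ^ k := rfl
  rw [heqA] at hshA; rw [heqB] at hshB
  exact ⟨A, B, hA0, hB0, tendsto_nhds_unique hshA hFA,
    tendsto_nhds_unique hshB hFB, fun x hx => ciSup_le hx, fun x hx => le_ciInf hx⟩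

end Limits


lemma WRaux.prod_bound {V : Type*} (s : Finset V) (g : V → ℝ) {c d : ℝ} (hc : 0 ≤ c)
    (h : ∀ j ∈ s, c ≤ g j ∧ g j ≤ d) :
    c ^ s.card ≤ ∏ j ∈ s, g j ∧ (∏ j ∈ s, g j) ≤ d ^ s.card := by
  constructor
  · rw [← Finset.prod_const]
    exact Finset.prod_le_prod (fun j _ => hc) (fun j hj => (h j hj).1)
  · rw [← Finset.prod_const]
    exact Finset.prod_le_prod (fun j hj => le_trans hc (h j hj).1) (fun j hj => (h j hj).2)




/-- Any positive tree solution `(z1, z2)` of the Widom–Rowlinson recursion on a rooted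
Cayley tree of order `k` is bounded between the components of some positive solution
`(z1⁻, z1⁺, z2⁻, z2⁺)` of the boundary system (◇). -/
theorem stmt_15 (k : ℕ) (hk : 2 ≤ k) (lam θ : ℝ) (hlam : 0 < lam)
    (hθ0 : 0 < θ) (hθ1 : θ < 1)
    (V : Type*) (S : V → Finset V) (hS : ∀ i, (S i).card = k)
    (z1 z2 : V → ℝ) (hz1 : ∀ i, 0 < z1 i) (hz2 : ∀ i, 0 < z2 i)
    (hrec1 : ∀ i, z1 i = lam * ∏ j ∈ S i, (1 + z1 j + θ * z2 j) / (1 + z1 j + z2 j))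
    (hrec2 : ∀ i, z2 i = lam * ∏ j ∈ S i, (1 + z2 j + θ * z1 j) / (1 + z2 j + z1 j)) :
    ∃ z1m z1p z2m z2p : ℝ, 0 < z1m ∧ 0 < z1p ∧ 0 < z2m ∧ 0 < z2p ∧
      z1m = lam * ((1 + z1m + θ * z2p) / (1 + z1m + z2p)) ^ k ∧
      z1p = lam * ((1 + z1p + θ * z2m) / (1 + z1p + z2m)) ^ k ∧
      z2m = lam * ((1 + z2m + θ * z1p) / (1 + z2m + z1p)) ^ k ∧
      z2p = lam * ((1 + z2p + θ * z1m) / (1 + z2p + z1m)) ^ k ∧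
      (∀ i, z1m ≤ z1 i ∧ z1 i ≤ z1p) ∧ (∀ i, z2m ≤ z2 i ∧ z2 i ≤ z2p) := by
  set a : ℕ → ℝ := fun n => (WRaux.seq lam θ k n).1 with ha
  set b : ℕ → ℝ := fun n => (WRaux.seq lam θ k n).2 with hb
  have inv := WRaux.seq_inv (lam := lam) (θ := θ) (k := k) hlam hθ0 hθ1
  -- the factors are f-values
  have hfac1 : ∀ j, (1 + z1 j + θ * z2 j) / (1 + z1 j + z2 j) = WRaux.f θ (z1 j) (z2 j) :=
    fun j => rfl
  have hfac2 : ∀ j, (1 + z2 j + θ * z1 j) / (1 + z2 j + z1 j) = WRaux.f θ (z2 j) (z1 j) :=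
    fun j => rfl
  -- the key bounds by induction on n
  have bounds : ∀ n : ℕ, ∀ i : V,
      a n ≤ z1 i ∧ z1 i ≤ b n ∧ a n ≤ z2 i ∧ z2 i ≤ b n := by
    intro n
    induction n with
    | zero =>
        intro i
        have key : ∀ (w1 w2 : V → ℝ), (∀ j, 0 < w1 j) → (∀ j, 0 < w2 j) →
            (∀ i, w1 i = lam * ∏ j ∈ S i, WRaux.f θ (w1 j) (w2 j)) →
            lam * θ ^ k ≤ w1 i ∧ w1 i ≤ lam := by
          intro w1 w2 hw1 hw2 hrec
          have hb := WRaux.prod_bound (S i) (fun j => WRaux.f θ (w1 j) (w2 j)) hθ0.le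
            (fun j _ => ⟨WRaux.theta_le_f hθ1.le (hw1 j).le (hw2 j).le,
              WRaux.f_le_one hθ1.le (hw1 j).le (hw2 j).le⟩)
          rw [hS i] at hb
          constructor
          · rw [hrec i]; exact mul_le_mul_of_nonneg_left hb.1 hlam.le
          · rw [hrec i]
            calc lam * ∏ j ∈ S i, WRaux.f θ (w1 j) (w2 j)
                ≤ lam * 1 ^ k := mul_le_mul_of_nonneg_left hb.2 hlam.le
              _ = lam := by ring
        have h1 := key z1 z2 hz1 hz2 (by intro i; rw [hrec1 i]; simp only [hfac1])
        have h2 := key z2 z1 hz2 hz1 (by intro i; rw [hrec2 i]; simp only [hfac2])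
        exact ⟨h1.1, h1.2, h2.1, h2.2⟩
    | succ n ih =>
        intro i
        have ha0 : 0 ≤ a n := le_trans (by positivity) (inv n).1
        have key : ∀ (w1 w2 : V → ℝ), (∀ j, 0 < w1 j) → (∀ j, 0 < w2 j) →
            (∀ i, w1 i = lam * ∏ j ∈ S i, WRaux.f θ (w1 j) (w2 j)) →
            (∀ j, a n ≤ w1 j ∧ w1 j ≤ b n ∧ a n ≤ w2 j ∧ w2 j ≤ b n) →
            lam * WRaux.f θ (a n) (b n) ^ k ≤ w1 i ∧
            w1 i ≤ lam * WRaux.f θ (b n) (a n) ^ k := by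
          intro w1 w2 hw1 hw2 hrec hbd
          have hcpos : 0 ≤ WRaux.f θ (a n) (b n) :=
            le_trans hθ0.le (WRaux.theta_le_f hθ1.le ha0
              (le_trans ha0 (inv n).2.1))
          have hb := WRaux.prod_bound (S i) (fun j => WRaux.f θ (w1 j) (w2 j)) hcpos
            (fun j _ => ⟨WRaux.f_mono hθ1.le ha0 (hw2 j).le (hbd j).1 (hbd j).2.2.2,
              WRaux.f_mono hθ1.le (hw1 j).le ha0 (hbd j).2.1 (hbd j).2.2.1⟩)
          rw [hS i] at hb
          exact ⟨by rw [hrec i]; exact mul_le_mul_of_nonneg_left hb.1 hlam.le,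
            by rw [hrec i]; exact mul_le_mul_of_nonneg_left hb.2 hlam.le⟩
        have h1 := key z1 z2 hz1 hz2 (by intro i; rw [hrec1 i]; simp only [hfac1])
          (fun j => ih j)
        have h2 := key z2 z1 hz2 hz1 (by intro i; rw [hrec2 i]; simp only [hfac2])
          (fun j => ⟨(ih j).2.2.1, (ih j).2.2.2, (ih j).1, (ih j).2.1⟩)
        exact ⟨h1.1, h1.2, h2.1, h2.2⟩
  obtain ⟨A, B, hA0, hB0, hAeq, hBeq, hAsup, hBinf⟩ :=
    Limits.main_limits (lam := lam) (θ := θ) (k := k) hlam hθ0 hθ1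
  have hApos : 0 < A := lt_of_lt_of_le (by positivity) hA0
  have hBpos : 0 < B := lt_of_lt_of_le (by positivity) hB0
  refine ⟨A, B, A, B, hApos, hBpos, hApos, hBpos, hAeq, hBeq, hAeq, hBeq, ?_, ?_⟩
  · intro i
    exact ⟨hAsup (z1 i) (fun n => (bounds n i).1), hBinf (z1 i) (fun n => (bounds n i).2.1)⟩
  · intro i
    exact ⟨hAsup (z2 i) (fun n => (bounds n i).2.2.1),
      hBinf (z2 i) (fun n => (bounds n i).2.2.2)⟩
end

section
/- If (z1⁻, z1⁺, z2⁻, z2⁺) is a positive solution of the boundary system (◇), then z1⁻ = z1⁺ if and only if z2⁻ = z2⁺. -/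
lemma aux_inj (k : ℕ) (hk : 2 ≤ k) (θ : ℝ) (hθ0 : 0 < θ) (hθ1 : θ < 1)
    (x y1 y2 : ℝ) (hx : 0 < x) (hy1 : 0 < y1) (hy2 : 0 < y2)
    (h : ((1 + x + θ * y1) / (1 + x + y1)) ^ k = ((1 + x + θ * y2) / (1 + x + y2)) ^ k) :
    y1 = y2 := by
  have hd1 : (0:ℝ) < 1 + x + y1 := by linarith
  have hd2 : (0:ℝ) < 1 + x + y2 := by linarith
  have hn1 : (0:ℝ) < 1 + x + θ * y1 := by nlinarith
  have hn2 : (0:ℝ) < 1 + x + θ * y2 := by nlinarith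
  have hF1 : (0:ℝ) ≤ (1 + x + θ * y1) / (1 + x + y1) := le_of_lt (div_pos hn1 hd1)
  have hF2 : (0:ℝ) ≤ (1 + x + θ * y2) / (1 + x + y2) := le_of_lt (div_pos hn2 hd2)
  have hF : (1 + x + θ * y1) / (1 + x + y1) = (1 + x + θ * y2) / (1 + x + y2) :=
    (pow_left_strictMonoOn₀ (by omega : k ≠ 0)).injOn hF1 hF2 h
  rw [div_eq_div_iff (ne_of_gt hd1) (ne_of_gt hd2)] at hF
  nlinarith [mul_pos (sub_pos.2 hθ1) hx]

/-- For any positive solution `(z1⁻, z1⁺, z2⁻, z2⁺)` of the boundary system (◇):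
`z1⁻ = z1⁺` if and only if `z2⁻ = z2⁺`. -/
theorem stmt_16 (k : ℕ) (hk : 2 ≤ k) (lam θ : ℝ) (hlam : 0 < lam)
    (hθ0 : 0 < θ) (hθ1 : θ < 1)
    (z1m z1p z2m z2p : ℝ) (h1m : 0 < z1m) (h1p : 0 < z1p) (h2m : 0 < z2m) (h2p : 0 < z2p)
    (e1 : z1m = lam * ((1 + z1m + θ * z2p) / (1 + z1m + z2p)) ^ k)
    (e2 : z1p = lam * ((1 + z1p + θ * z2m) / (1 + z1p + z2m)) ^ k)
    (e3 : z2m = lam * ((1 + z2m + θ * z1p) / (1 + z2m + z1p)) ^ k)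
    (e4 : z2p = lam * ((1 + z2p + θ * z1m) / (1 + z2p + z1m)) ^ k) :
    z1m = z1p ↔ z2m = z2p := by
  constructor
  · intro h
    apply aux_inj k hk θ hθ0 hθ1 z1m z2m z2p h1m h2m h2p
    have : lam * ((1 + z1m + θ * z2m) / (1 + z1m + z2m)) ^ k
        = lam * ((1 + z1m + θ * z2p) / (1 + z1m + z2p)) ^ k := by
      rw [← e1]; rw [h] at *; exact e2.symm
    exact (mul_left_cancel₀ (ne_of_gt hlam) this)
  · intro h
    apply aux_inj k hk θ hθ0 hθ1 z2m z1m z1p h2m h1m h1p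
    have : lam * ((1 + z2m + θ * z1m) / (1 + z2m + z1m)) ^ k
        = lam * ((1 + z2m + θ * z1p) / (1 + z2m + z1p)) ^ k := by
      rw [← e3]; rw [h] at *; exact e4.symm
    exact (mul_left_cancel₀ (ne_of_gt hlam) this)
end

section
/- Let k = 2, 0 < θ < 1/3 and λ > 9/(4(1−3θ)), and let x₁* < x₂* be the two coordinates of the off-diagonal positive solutions (x₁*, x₂*), (x₂*, x₁*) of the fixed-point system x = λ((1+x+θy)/(1+x+y))², y = λ((1+θx+y)/(1+x+y))². Then every positive tree solution (z1, z2) of the Widom–Rowlinson recursion satisfies x₁* ≤ zj(i) ≤ x₂* for all vertices i ∈ V and j ∈ {1, 2}. -/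
open Filter Topology

set_option maxHeartbeats 1000000

/-- The one-step map of the recursion. -/
noncomputable def Gmap (lam θ u v : ℝ) : ℝ := lam * ((1 + u + θ * v) / (1 + u + v)) ^ 2

lemma F_theta_le (θ x y : ℝ) (hθ1 : θ ≤ 1) (hx : 0 ≤ x) (hy : 0 ≤ y) :
    θ ≤ (1 + x + θ * y) / (1 + x + y) := by
  rw [le_div_iff₀ (by linarith : (0:ℝ) < 1 + x + y)]
  nlinarith

lemma F_le_one (θ x y : ℝ) (hθ1 : θ ≤ 1) (hx : 0 ≤ x) (hy : 0 ≤ y) :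
    (1 + x + θ * y) / (1 + x + y) ≤ 1 := by
  rw [div_le_one (by linarith : (0:ℝ) < 1 + x + y)]
  nlinarith

lemma F_mono (θ x x' y y' : ℝ) (hθ0 : 0 ≤ θ) (hθ1 : θ ≤ 1)
    (hx : 0 ≤ x) (hy' : 0 ≤ y') (hxx : x ≤ x') (hyy : y' ≤ y) :
    (1 + x + θ * y) / (1 + x + y) ≤ (1 + x' + θ * y') / (1 + x' + y') := by
  have hy : 0 ≤ y := hy'.trans hyy
  have hx' : 0 ≤ x' := hx.trans hxx
  rw [div_le_div_iff₀ (by linarith) (by linarith)]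
  nlinarith [mul_nonneg (mul_nonneg (sub_nonneg.2 hθ1) (sub_nonneg.2 hyy)) hx',
    mul_nonneg (mul_nonneg (sub_nonneg.2 hθ1) hy') (sub_nonneg.2 hxx),
    mul_nonneg (sub_nonneg.2 hθ1) (sub_nonneg.2 hyy)]

lemma G_mono (lam θ x x' y y' : ℝ) (hlam : 0 ≤ lam) (hθ0 : 0 ≤ θ) (hθ1 : θ ≤ 1)
    (hx : 0 ≤ x) (hy' : 0 ≤ y') (hxx : x ≤ x') (hyy : y' ≤ y) :
    Gmap lam θ x y ≤ Gmap lam θ x' y' := by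
  unfold Gmap
  have h := F_mono θ x x' y y' hθ0 hθ1 hx hy' hxx hyy
  have h0 : 0 ≤ (1 + x + θ * y) / (1 + x + y) :=
    hθ0.trans (F_theta_le θ x y hθ1 hx (hy'.trans hyy))
  exact mul_le_mul_of_nonneg_left (pow_le_pow_left₀ h0 h 2) hlam

lemma G_bounds (lam θ u v : ℝ) (hlam : 0 ≤ lam) (hθ0 : 0 ≤ θ) (hθ1 : θ ≤ 1)
    (hu : 0 ≤ u) (hv : 0 ≤ v) :
    lam * θ ^ 2 ≤ Gmap lam θ u v ∧ Gmap lam θ u v ≤ lam := by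
  unfold Gmap
  have hF := F_theta_le θ u v hθ1 hu hv
  have hF1 := F_le_one θ u v hθ1 hu hv
  have h0 : 0 ≤ (1 + u + θ * v) / (1 + u + v) := hθ0.trans hF
  constructor
  · exact mul_le_mul_of_nonneg_left (pow_le_pow_left₀ hθ0 hF 2) hlam
  · calc lam * ((1 + u + θ * v) / (1 + u + v)) ^ 2
        ≤ lam * 1 := mul_le_mul_of_nonneg_left (by nlinarith) hlam
      _ = lam := mul_one lam

lemma prod_bounds {V : Type*} (s : Finset V) (h2 : s.card = 2) (f : V → ℝ) (c d : ℝ)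
    (hc : 0 ≤ c) (hb : ∀ j ∈ s, c ≤ f j ∧ f j ≤ d) :
    c ^ 2 ≤ (∏ j ∈ s, f j) ∧ (∏ j ∈ s, f j) ≤ d ^ 2 := by
  constructor
  · calc c ^ 2 = ∏ _j ∈ s, c := by rw [Finset.prod_const, h2]
      _ ≤ ∏ j ∈ s, f j := Finset.prod_le_prod (fun j _ => hc) (fun j hj => (hb j hj).1)
  · calc (∏ j ∈ s, f j) ≤ ∏ _j ∈ s, d :=
        Finset.prod_le_prod (fun j hj => hc.trans (hb j hj).1) (fun j hj => (hb j hj).2)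
      _ = d ^ 2 := by rw [Finset.prod_const, h2]

/-- Uniqueness of the off-diagonal positive solution of the fixed-point system. -/
lemma uniq_offdiag (lam θ x y x' y' : ℝ) (hθ0 : 0 < θ) (hθ1 : θ < 1 / 3)
    (hlam : 9 / (4 * (1 - 3 * θ)) < lam)
    (hx : 0 < x) (hxy : x < y) (hx' : 0 < x') (hxy' : x' < y')
    (h1 : x = lam * ((1 + x + θ * y) / (1 + x + y)) ^ 2)
    (h2 : y = lam * ((1 + θ * x + y) / (1 + x + y)) ^ 2)
    (h1' : x' = lam * ((1 + x' + θ * y') / (1 + x' + y')) ^ 2)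
    (h2' : y' = lam * ((1 + θ * x' + y') / (1 + x' + y')) ^ 2) :
    x = x' ∧ y = y' := by
  have h3θ : 0 < 1 - 3 * θ := by linarith
  have hlam0 : 0 < lam := lt_trans (div_pos (by norm_num) (by linarith)) hlam
  have h94 : 9 < lam * (4 * (1 - 3 * θ)) := (div_lt_iff₀ (by linarith)).1 hlam
  have hy0 : 0 < y := hx.trans hxy
  have hy0' : 0 < y' := hx'.trans hxy'
  have hD : ((1:ℝ) + x + y) ≠ 0 := by positivity
  have hD' : ((1:ℝ) + x' + y') ≠ 0 := by positivity
  have e1 : x * (1 + x + y) ^ 2 = lam * (1 + x + θ * y) ^ 2 := by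
    rw [div_pow, ← mul_div_assoc, eq_div_iff (pow_ne_zero 2 hD)] at h1
    exact h1
  have e2 : y * (1 + x + y) ^ 2 = lam * (1 + θ * x + y) ^ 2 := by
    rw [div_pow, ← mul_div_assoc, eq_div_iff (pow_ne_zero 2 hD)] at h2
    exact h2
  have e1' : x' * (1 + x' + y') ^ 2 = lam * (1 + x' + θ * y') ^ 2 := by
    rw [div_pow, ← mul_div_assoc, eq_div_iff (pow_ne_zero 2 hD')] at h1'
    exact h1'
  have e2' : y' * (1 + x' + y') ^ 2 = lam * (1 + θ * x' + y') ^ 2 := by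
    rw [div_pow, ← mul_div_assoc, eq_div_iff (pow_ne_zero 2 hD')] at h2'
    exact h2'
  have key1 : (x - y) * ((1 + x + y) ^ 2 - lam * (1 - θ) * (2 + (1 + θ) * (x + y))) = 0 := by
    linear_combination e1 - e2
  have EqI : (1 + x + y) ^ 2 = lam * (1 - θ) * (2 + (1 + θ) * (x + y)) := by
    rcases mul_eq_zero.1 key1 with h | h
    · exact absurd h (sub_ne_zero.2 hxy.ne)
    · linarith [sub_eq_zero.1 h]
  have key1' : (x' - y') * ((1 + x' + y') ^ 2 - lam * (1 - θ) * (2 + (1 + θ) * (x' + y'))) = 0 := by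
    linear_combination e1' - e2'
  have EqI' : (1 + x' + y') ^ 2 = lam * (1 - θ) * (2 + (1 + θ) * (x' + y')) := by
    rcases mul_eq_zero.1 key1' with h | h
    · exact absurd h (sub_ne_zero.2 hxy'.ne)
    · linarith [sub_eq_zero.1 h]
  have key2 : ((x + y) - (x' + y')) * ((x + y) + (x' + y') + 2 - lam * (1 - θ ^ 2)) = 0 := by
    linear_combination EqI - EqI'
  have hSsum : x + y = x' + y' := by
    rcases mul_eq_zero.1 key2 with h | h
    · linarith [sub_eq_zero.1 h]
    · exfalso
      have hprod : (x + y) * (x' + y') = 1 - 2 * lam * (1 - θ) := by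
        linear_combination -EqI + (x + y) * h
      linarith [mul_pos (by linarith : (0:ℝ) < x + y) (by linarith : (0:ℝ) < x' + y'),
        mul_pos hlam0 hθ0]
  have hy'sub : y' = x + y - x' := by linarith
  rw [hy'sub] at e1' e2'
  have key3 : (2 * lam * (1 - θ) ^ 2) * (x * y - x' * (x + y - x')) = 0 := by
    linear_combination (e1 + e2) - (e1' + e2')
  have hfac : (0:ℝ) < 2 * lam * (1 - θ) ^ 2 :=
    mul_pos (mul_pos two_pos hlam0) (pow_pos (by linarith) 2)
  have hP : x * y = x' * y' := by
    rcases mul_eq_zero.1 key3 with h | h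
    · exact absurd h (ne_of_gt hfac)
    · rw [hy'sub]; linarith [sub_eq_zero.1 h]
  have key4 : (x - x') * (x - y') = 0 := by
    linear_combination -hP + x * hSsum
  rcases mul_eq_zero.1 key4 with h | h
  · have hxx' : x = x' := by linarith [sub_eq_zero.1 h]
    exact ⟨hxx', by linarith⟩
  · exfalso
    have hxy'' : x = y' := by linarith [sub_eq_zero.1 h]
    linarith

/-- For `k = 2`, `θ < 1/3`, `λ > 9/(4(1−3θ))`: every positive tree solution of the
Widom–Rowlinson recursion is bounded between the coordinates `x₁* < x₂*` of the
off-diagonal positive solutions of the fixed-point system. -/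
theorem stmt_17 (lam θ : ℝ) (hlam : 9 / (4 * (1 - 3 * θ)) < lam)
    (hθ0 : 0 < θ) (hθ1 : θ < 1 / 3)
    (x₁ x₂ : ℝ) (hx₁ : 0 < x₁) (hx₁x₂ : x₁ < x₂)
    (hfp1 : x₁ = lam * ((1 + x₁ + θ * x₂) / (1 + x₁ + x₂)) ^ 2)
    (hfp2 : x₂ = lam * ((1 + θ * x₁ + x₂) / (1 + x₁ + x₂)) ^ 2)
    (V : Type*) (S : V → Finset V) (hS : ∀ i, (S i).card = 2)
    (z1 z2 : V → ℝ) (hz1 : ∀ i, 0 < z1 i) (hz2 : ∀ i, 0 < z2 i)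
    (hrec1 : ∀ i, z1 i = lam * ∏ j ∈ S i, (1 + z1 j + θ * z2 j) / (1 + z1 j + z2 j))
    (hrec2 : ∀ i, z2 i = lam * ∏ j ∈ S i, (1 + z2 j + θ * z1 j) / (1 + z2 j + z1 j)) :
    ∀ i, (x₁ ≤ z1 i ∧ z1 i ≤ x₂) ∧ (x₁ ≤ z2 i ∧ z2 i ≤ x₂) := by
  have hθ1' : θ ≤ 1 := by linarith
  have hθ0' : 0 ≤ θ := hθ0.le
  have hlam0 : 0 < lam := lt_trans (div_pos (by norm_num) (by linarith)) hlam
  have hx₂ : 0 < x₂ := hx₁.trans hx₁x₂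
  have hfp1' : x₁ = Gmap lam θ x₁ x₂ := hfp1
  have hfp2' : x₂ = Gmap lam θ x₂ x₁ := by
    unfold Gmap; linear_combination hfp2
  obtain ⟨A, B, hA0, hB0, hAs, hBs⟩ : ∃ A B : ℕ → ℝ, A 0 = lam * θ ^ 2 ∧ B 0 = lam ∧
      (∀ n, A (n + 1) = Gmap lam θ (A n) (B n)) ∧
      (∀ n, B (n + 1) = Gmap lam θ (B n) (A n)) := by
    refine ⟨fun n => (Nat.rec (motive := fun _ => ℝ × ℝ) (lam * θ ^ 2, lam)
        (fun _ p => (Gmap lam θ p.1 p.2, Gmap lam θ p.2 p.1)) n).1,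
      fun n => (Nat.rec (motive := fun _ => ℝ × ℝ) (lam * θ ^ 2, lam)
        (fun _ p => (Gmap lam θ p.1 p.2, Gmap lam θ p.2 p.1)) n).2,
      rfl, rfl, fun n => rfl, fun n => rfl⟩
  -- the main invariant
  have key : ∀ n, 0 < A n ∧ A n ≤ x₁ ∧ x₂ ≤ B n ∧ A n ≤ A (n + 1) ∧ B (n + 1) ≤ B n ∧
      ∀ i, (A n ≤ z1 i ∧ z1 i ≤ B n) ∧ (A n ≤ z2 i ∧ z2 i ≤ B n) := by
    intro n
    induction n with
    | zero =>
      have hbase : ∀ i, (lam * θ ^ 2 ≤ z1 i ∧ z1 i ≤ lam) ∧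
          (lam * θ ^ 2 ≤ z2 i ∧ z2 i ≤ lam) := by
        intro i
        have hb1 : ∀ j ∈ S i, θ ≤ (1 + z1 j + θ * z2 j) / (1 + z1 j + z2 j) ∧
            (1 + z1 j + θ * z2 j) / (1 + z1 j + z2 j) ≤ 1 := fun j _ =>
          ⟨F_theta_le θ (z1 j) (z2 j) hθ1' (hz1 j).le (hz2 j).le,
           F_le_one θ (z1 j) (z2 j) hθ1' (hz1 j).le (hz2 j).le⟩
        have hb2 : ∀ j ∈ S i, θ ≤ (1 + z2 j + θ * z1 j) / (1 + z2 j + z1 j) ∧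
            (1 + z2 j + θ * z1 j) / (1 + z2 j + z1 j) ≤ 1 := fun j _ =>
          ⟨F_theta_le θ (z2 j) (z1 j) hθ1' (hz2 j).le (hz1 j).le,
           F_le_one θ (z2 j) (z1 j) hθ1' (hz2 j).le (hz1 j).le⟩
        obtain ⟨hl1, hu1⟩ := prod_bounds (S i) (hS i) _ θ 1 hθ0' hb1
        obtain ⟨hl2, hu2⟩ := prod_bounds (S i) (hS i) _ θ 1 hθ0' hb2
        constructor
        · constructor
          · rw [hrec1 i]; exact mul_le_mul_of_nonneg_left hl1 hlam0.le
          · rw [hrec1 i]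
            have := mul_le_mul_of_nonneg_left hu1 hlam0.le
            simpa using this
        · constructor
          · rw [hrec2 i]; exact mul_le_mul_of_nonneg_left hl2 hlam0.le
          · rw [hrec2 i]
            have := mul_le_mul_of_nonneg_left hu2 hlam0.le
            simpa using this
      refine ⟨by rw [hA0]; positivity, ?_, ?_, ?_, ?_, ?_⟩
      · rw [hA0, hfp1']
        exact (G_bounds lam θ x₁ x₂ hlam0.le hθ0' hθ1' hx₁.le hx₂.le).1
      · rw [hB0, hfp2']
        exact (G_bounds lam θ x₂ x₁ hlam0.le hθ0' hθ1' hx₂.le hx₁.le).2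
      · rw [hAs 0, hA0, hB0]
        exact (G_bounds lam θ (lam * θ ^ 2) lam hlam0.le hθ0' hθ1' (by positivity)
          hlam0.le).1
      · rw [hBs 0, hA0, hB0]
        exact (G_bounds lam θ lam (lam * θ ^ 2) hlam0.le hθ0' hθ1' hlam0.le
          (by positivity)).2
      · intro i
        rw [hA0, hB0]
        exact hbase i
    | succ n ih =>
      obtain ⟨hpos, hAx, hxB, hAm, hBm, hz⟩ := ih
      have hBpos : 0 < B n := hx₂.trans_le hxB
      have hposA1 : 0 < A (n + 1) := hpos.trans_le hAm
      have hAx1 : A (n + 1) ≤ x₁ := by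
        rw [hAs n, hfp1']
        exact G_mono lam θ (A n) x₁ (B n) x₂ hlam0.le hθ0' hθ1' hpos.le hx₂.le hAx hxB
      have hxB1 : x₂ ≤ B (n + 1) := by
        rw [hBs n, hfp2']
        exact G_mono lam θ x₂ (B n) x₁ (A n) hlam0.le hθ0' hθ1' hx₂.le hpos.le hxB hAx
      refine ⟨hposA1, hAx1, hxB1, ?_, ?_, ?_⟩
      · rw [hAs n, hAs (n + 1)]
        exact G_mono lam θ (A n) (A (n + 1)) (B n) (B (n + 1)) hlam0.le hθ0' hθ1'
          hpos.le (hx₂.trans_le hxB1).le hAm hBm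
      · rw [hBs n, hBs (n + 1)]
        exact G_mono lam θ (B (n + 1)) (B n) (A (n + 1)) (A n) hlam0.le hθ0' hθ1'
          (hx₂.trans_le hxB1).le hpos.le hBm hAm
      · intro i
        have hc : 0 ≤ (1 + A n + θ * B n) / (1 + A n + B n) :=
          hθ0'.trans (F_theta_le θ (A n) (B n) hθ1' hpos.le hBpos.le)
        have hb1 : ∀ j ∈ S i,
            (1 + A n + θ * B n) / (1 + A n + B n) ≤
              (1 + z1 j + θ * z2 j) / (1 + z1 j + z2 j) ∧
            (1 + z1 j + θ * z2 j) / (1 + z1 j + z2 j) ≤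
              (1 + B n + θ * A n) / (1 + B n + A n) := fun j _ =>
          ⟨F_mono θ (A n) (z1 j) (B n) (z2 j) hθ0' hθ1' hpos.le (hz2 j).le
            ((hz j).1.1) ((hz j).2.2),
           F_mono θ (z1 j) (B n) (z2 j) (A n) hθ0' hθ1' (hz1 j).le hpos.le
            ((hz j).1.2) ((hz j).2.1)⟩
        have hb2 : ∀ j ∈ S i,
            (1 + A n + θ * B n) / (1 + A n + B n) ≤
              (1 + z2 j + θ * z1 j) / (1 + z2 j + z1 j) ∧
            (1 + z2 j + θ * z1 j) / (1 + z2 j + z1 j) ≤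
              (1 + B n + θ * A n) / (1 + B n + A n) := fun j _ =>
          ⟨F_mono θ (A n) (z2 j) (B n) (z1 j) hθ0' hθ1' hpos.le (hz1 j).le
            ((hz j).2.1) ((hz j).1.2),
           F_mono θ (z2 j) (B n) (z1 j) (A n) hθ0' hθ1' (hz2 j).le hpos.le
            ((hz j).2.2) ((hz j).1.1)⟩
        obtain ⟨hl1, hu1⟩ := prod_bounds (S i) (hS i) _ _ _ hc hb1
        obtain ⟨hl2, hu2⟩ := prod_bounds (S i) (hS i) _ _ _ hc hb2
        refine ⟨⟨?_, ?_⟩, ?_, ?_⟩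
        · rw [hAs n, hrec1 i]
          exact mul_le_mul_of_nonneg_left hl1 hlam0.le
        · rw [hBs n, hrec1 i]
          exact mul_le_mul_of_nonneg_left hu1 hlam0.le
        · rw [hAs n, hrec2 i]
          exact mul_le_mul_of_nonneg_left hl2 hlam0.le
        · rw [hBs n, hrec2 i]
          exact mul_le_mul_of_nonneg_left hu2 hlam0.le
  -- limits
  have monoA : Monotone A := monotone_nat_of_le_succ fun n => (key n).2.2.2.1
  have antiB : Antitone B := antitone_nat_of_succ_le fun n => (key n).2.2.2.2.1
  have bddA : BddAbove (Set.range A) := ⟨x₁, by rintro _ ⟨n, rfl⟩; exact (key n).2.1⟩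
  have bddB : BddBelow (Set.range B) := ⟨x₂, by rintro _ ⟨n, rfl⟩; exact (key n).2.2.1⟩
  set α := ⨆ n, A n with hαdef
  set β := ⨅ n, B n with hβdef
  have hαx : α ≤ x₁ := ciSup_le fun n => (key n).2.1
  have hxβ : x₂ ≤ β := le_ciInf fun n => (key n).2.2.1
  have hα0 : 0 < α := lt_of_lt_of_le (key 0).1 (le_ciSup bddA 0)
  have hβ0 : 0 < β := lt_of_lt_of_le hx₂ hxβ
  have hAlim : Tendsto A atTop (𝓝 α) := tendsto_atTop_ciSup monoA bddA
  have hBlim : Tendsto B atTop (𝓝 β) := tendsto_atTop_ciInf antiB bddB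
  have hden_ne : ((1:ℝ) + α + β) ≠ 0 := by positivity
  have hnum : Tendsto (fun n => 1 + A n + θ * B n) atTop (𝓝 (1 + α + θ * β)) :=
    (hAlim.const_add 1).add (hBlim.const_mul θ)
  have hnum' : Tendsto (fun n => 1 + B n + θ * A n) atTop (𝓝 (1 + β + θ * α)) :=
    (hBlim.const_add 1).add (hAlim.const_mul θ)
  have hden : Tendsto (fun n => 1 + A n + B n) atTop (𝓝 (1 + α + β)) :=
    (hAlim.const_add 1).add hBlim
  have hden' : Tendsto (fun n => 1 + B n + A n) atTop (𝓝 (1 + β + α)) :=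
    (hBlim.const_add 1).add hAlim
  have hden_ne' : ((1:ℝ) + β + α) ≠ 0 := by positivity
  have hGA : Tendsto (fun n => Gmap lam θ (A n) (B n)) atTop (𝓝 (Gmap lam θ α β)) := by
    unfold Gmap
    exact ((hnum.div hden hden_ne).pow 2).const_mul lam
  have hGB : Tendsto (fun n => Gmap lam θ (B n) (A n)) atTop (𝓝 (Gmap lam θ β α)) := by
    unfold Gmap
    exact ((hnum'.div hden' hden_ne').pow 2).const_mul lam
  have hA1 : Tendsto (fun n => A (n + 1)) atTop (𝓝 α) := hAlim.comp (tendsto_add_atTop_nat 1)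
  have hB1 : Tendsto (fun n => B (n + 1)) atTop (𝓝 β) := hBlim.comp (tendsto_add_atTop_nat 1)
  have hfixα : α = Gmap lam θ α β :=
    tendsto_nhds_unique (hA1.congr fun n => hAs n) hGA
  have hfixβ : β = Gmap lam θ β α :=
    tendsto_nhds_unique (hB1.congr fun n => hBs n) hGB
  have hcomm : Gmap lam θ β α = lam * ((1 + θ * α + β) / (1 + α + β)) ^ 2 := by
    unfold Gmap; ring
  obtain ⟨hax, hbx⟩ := uniq_offdiag lam θ α β x₁ x₂ hθ0 hθ1 hlam hα0
    (by linarith) hx₁ hx₁x₂ hfixα (hfixβ.trans hcomm) hfp1 hfp2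
  intro i
  refine ⟨⟨?_, ?_⟩, ?_, ?_⟩
  · calc x₁ = α := hax.symm
      _ ≤ z1 i := ciSup_le fun n => ((key n).2.2.2.2.2 i).1.1
  · calc z1 i ≤ β := le_ciInf fun n => ((key n).2.2.2.2.2 i).1.2
      _ = x₂ := hbx
  · calc x₁ = α := hax.symm
      _ ≤ z2 i := ciSup_le fun n => ((key n).2.2.2.2.2 i).2.1
  · calc z2 i ≤ β := le_ciInf fun n => ((key n).2.2.2.2.2 i).2.2
      _ = x₂ := hbx
end

section
/- Let θ > 0 and define f(x, y) = ln((1 + e^x + θe^y)/(1 + e^x + e^y)) on ℝ². Then for all (x, y) ∈ ℝ²: |∂f/∂x (x, y)| ≤ |1−√θ|/(1+√θ) and |∂f/∂y (x, y)| ≤ |1−√θ|/(1+√θ); moreover for all x, u, y ∈ ℝ: |f(x, y) − f(u, y)| ≤ (|1−√θ|/(1+√θ))·|x − u|. -/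
open Real

noncomputable def D18 (θ y x : ℝ) : ℝ :=
  Real.exp x / (1 + Real.exp x + θ * Real.exp y) - Real.exp x / (1 + Real.exp x + Real.exp y)

lemma aux_deriv18 (θ : ℝ) (hθ : 0 < θ) (y x : ℝ) :
    HasDerivAt
      (fun t : ℝ =>
        Real.log ((1 + Real.exp t + θ * Real.exp y) / (1 + Real.exp t + Real.exp y)))
      (D18 θ y x) x := by
  have hA : (0:ℝ) < 1 + Real.exp x + θ * Real.exp y := by positivity
  have hB : (0:ℝ) < 1 + Real.exp x + Real.exp y := by positivity
  have h1 : HasDerivAt (fun t : ℝ => 1 + Real.exp t + θ * Real.exp y) (Real.exp x) x := by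
    simpa using ((Real.hasDerivAt_exp x).const_add 1).add_const (θ * Real.exp y)
  have h2 : HasDerivAt (fun t : ℝ => 1 + Real.exp t + Real.exp y) (Real.exp x) x := by
    simpa using ((Real.hasDerivAt_exp x).const_add 1).add_const (Real.exp y)
  have hlA := h1.log hA.ne'
  have hlB := h2.log hB.ne'
  have := hlA.sub hlB
  have heq : ∀ t : ℝ,
      Real.log ((1 + Real.exp t + θ * Real.exp y) / (1 + Real.exp t + Real.exp y)) =
        Real.log (1 + Real.exp t + θ * Real.exp y) - Real.log (1 + Real.exp t + Real.exp y) := by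
    intro t
    have hA' : (0:ℝ) < 1 + Real.exp t + θ * Real.exp y := by positivity
    have hB' : (0:ℝ) < 1 + Real.exp t + Real.exp y := by positivity
    exact Real.log_div hA'.ne' hB'.ne'
  simp only [heq]
  exact this

lemma key18 (r s b : ℝ) : (1 + r) ^ 2 * (s * b) ≤ (s + r ^ 2 * b) * (s + b) := by
  nlinarith [sq_nonneg (s - r * b)]

lemma aux_bound18 (θ : ℝ) (hθ : 0 < θ) (y x : ℝ) :
    |D18 θ y x| ≤ |1 - Real.sqrt θ| / (1 + Real.sqrt θ) := by
  have hr : (0:ℝ) ≤ Real.sqrt θ := Real.sqrt_nonneg θ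
  have hr2 : Real.sqrt θ ^ 2 = θ := Real.sq_sqrt hθ.le
  have hA : (0:ℝ) < 1 + Real.exp x + θ * Real.exp y := by positivity
  have hB : (0:ℝ) < 1 + Real.exp x + Real.exp y := by positivity
  have hd : D18 θ y x =
      Real.exp x * ((1 - θ) * Real.exp y) /
        ((1 + Real.exp x + θ * Real.exp y) * (1 + Real.exp x + Real.exp y)) := by
    rw [D18, div_sub_div _ _ hA.ne' hB.ne']
    congr 1
    ring
  rw [hd, abs_div, abs_of_pos (show (0:ℝ) < (1 + Real.exp x + θ * Real.exp y) * (1 + Real.exp x + Real.exp y) by positivity)]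
  rw [div_le_div_iff₀ (by positivity) (by positivity)]
  have hfac : |1 - θ| = |1 - Real.sqrt θ| * (1 + Real.sqrt θ) := by
    rw [← abs_of_pos (show (0:ℝ) < 1 + Real.sqrt θ by positivity), ← abs_mul]
    congr 1
    nlinarith [hr2]
  have habs : |Real.exp x * ((1 - θ) * Real.exp y)| =
      |1 - θ| * (Real.exp x * Real.exp y) := by
    rw [abs_mul, abs_mul, abs_of_pos (Real.exp_pos x), abs_of_pos (Real.exp_pos y)]
    ring
  rw [habs, hfac]
  have key : (1 + Real.sqrt θ) ^ 2 * (Real.exp x * Real.exp y) ≤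
      (1 + Real.exp x + θ * Real.exp y) * (1 + Real.exp x + Real.exp y) := by
    have h1 := key18 (Real.sqrt θ) (1 + Real.exp x) (Real.exp y)
    rw [hr2] at h1
    refine le_trans ?_ h1
    have : Real.exp x * Real.exp y ≤ (1 + Real.exp x) * Real.exp y := by
      nlinarith [Real.exp_pos y]
    nlinarith [sq_nonneg (1 + Real.sqrt θ)]
  calc |1 - Real.sqrt θ| * (1 + Real.sqrt θ) * (Real.exp x * Real.exp y) * (1 + Real.sqrt θ)
      = |1 - Real.sqrt θ| * ((1 + Real.sqrt θ) ^ 2 * (Real.exp x * Real.exp y)) := by ring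
    _ ≤ |1 - Real.sqrt θ| *
        ((1 + Real.exp x + θ * Real.exp y) * (1 + Real.exp x + Real.exp y)) :=
        mul_le_mul_of_nonneg_left key (abs_nonneg _)

/-- Bounds on the partial derivatives and a Lipschitz estimate for
`f(x, y) = ln((1 + eˣ + θ·e^y)/(1 + eˣ + e^y))`. -/
theorem stmt_18 (θ : ℝ) (hθ : 0 < θ) :
    (∀ x y : ℝ,
      ∃ d : ℝ,
        HasDerivAt
          (fun t : ℝ =>
            Real.log ((1 + Real.exp t + θ * Real.exp y) / (1 + Real.exp t + Real.exp y)))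
          d x ∧
        |d| ≤ |1 - Real.sqrt θ| / (1 + Real.sqrt θ)) ∧
    (∀ x y : ℝ,
      ∃ d : ℝ,
        HasDerivAt
          (fun t : ℝ =>
            Real.log ((1 + Real.exp x + θ * Real.exp t) / (1 + Real.exp x + Real.exp t)))
          d y ∧
        |d| ≤ |1 - Real.sqrt θ| / (1 + Real.sqrt θ)) ∧
    (∀ x u y : ℝ,
      |Real.log ((1 + Real.exp x + θ * Real.exp y) / (1 + Real.exp x + Real.exp y)) -
          Real.log ((1 + Real.exp u + θ * Real.exp y) / (1 + Real.exp u + Real.exp y))| ≤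
        |1 - Real.sqrt θ| / (1 + Real.sqrt θ) * |x - u|) := by
  refine ⟨fun x y => ⟨D18 θ y x, aux_deriv18 θ hθ y x, aux_bound18 θ hθ y x⟩, ?_, ?_⟩
  · intro x y
    -- derivative in y
    have hA : (0:ℝ) < 1 + Real.exp x + θ * Real.exp y := by positivity
    have hB : (0:ℝ) < 1 + Real.exp x + Real.exp y := by positivity
    have hr : (0:ℝ) ≤ Real.sqrt θ := Real.sqrt_nonneg θ
    have hr2 : Real.sqrt θ ^ 2 = θ := Real.sq_sqrt hθ.le
    refine ⟨θ * Real.exp y / (1 + Real.exp x + θ * Real.exp y)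
        - Real.exp y / (1 + Real.exp x + Real.exp y), ?_, ?_⟩
    · have h1 : HasDerivAt (fun t : ℝ => 1 + Real.exp x + θ * Real.exp t)
          (θ * Real.exp y) y := by
        simpa using ((Real.hasDerivAt_exp y).const_mul θ).const_add (1 + Real.exp x)
      have h2 : HasDerivAt (fun t : ℝ => 1 + Real.exp x + Real.exp t) (Real.exp y) y := by
        simpa using (Real.hasDerivAt_exp y).const_add (1 + Real.exp x)
      have := (h1.log hA.ne').sub (h2.log hB.ne')
      have heq : ∀ t : ℝ,
          Real.log ((1 + Real.exp x + θ * Real.exp t) / (1 + Real.exp x + Real.exp t)) =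
            Real.log (1 + Real.exp x + θ * Real.exp t) -
              Real.log (1 + Real.exp x + Real.exp t) := by
        intro t
        have hA' : (0:ℝ) < 1 + Real.exp x + θ * Real.exp t := by positivity
        have hB' : (0:ℝ) < 1 + Real.exp x + Real.exp t := by positivity
        exact Real.log_div hA'.ne' hB'.ne'
      simp only [heq]
      exact this
    · have hd : θ * Real.exp y / (1 + Real.exp x + θ * Real.exp y)
          - Real.exp y / (1 + Real.exp x + Real.exp y) =
          ((θ - 1) * ((1 + Real.exp x) * Real.exp y)) /
            ((1 + Real.exp x + θ * Real.exp y) * (1 + Real.exp x + Real.exp y)) := by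
        rw [div_sub_div _ _ hA.ne' hB.ne']
        congr 1
        ring
      rw [hd, abs_div, abs_of_pos (show (0:ℝ) < (1 + Real.exp x + θ * Real.exp y) * (1 + Real.exp x + Real.exp y) by positivity)]
      rw [div_le_div_iff₀ (by positivity) (by positivity)]
      have hfac : |θ - 1| = |1 - Real.sqrt θ| * (1 + Real.sqrt θ) := by
        rw [← abs_of_pos (show (0:ℝ) < 1 + Real.sqrt θ by positivity), ← abs_mul,
          show (θ:ℝ) - 1 = -(1 - θ) by ring, abs_neg]
        congr 1
        nlinarith [hr2]
      have habs : |(θ - 1) * ((1 + Real.exp x) * Real.exp y)| =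
          |θ - 1| * ((1 + Real.exp x) * Real.exp y) := by
        rw [abs_mul, abs_of_pos (by positivity : (0:ℝ) < (1 + Real.exp x) * Real.exp y)]
      rw [habs, hfac]
      have key : (1 + Real.sqrt θ) ^ 2 * ((1 + Real.exp x) * Real.exp y) ≤
          (1 + Real.exp x + θ * Real.exp y) * (1 + Real.exp x + Real.exp y) := by
        have h1 := key18 (Real.sqrt θ) (1 + Real.exp x) (Real.exp y)
        rw [hr2] at h1
        exact h1
      calc |1 - Real.sqrt θ| * (1 + Real.sqrt θ) * ((1 + Real.exp x) * Real.exp y) *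
            (1 + Real.sqrt θ)
          = |1 - Real.sqrt θ| * ((1 + Real.sqrt θ) ^ 2 * ((1 + Real.exp x) * Real.exp y)) := by
            ring
        _ ≤ |1 - Real.sqrt θ| *
            ((1 + Real.exp x + θ * Real.exp y) * (1 + Real.exp x + Real.exp y)) :=
            mul_le_mul_of_nonneg_left key (abs_nonneg _)
  · intro x u y
    have h := Convex.norm_image_sub_le_of_norm_hasDerivWithin_le
      (f := fun t : ℝ =>
        Real.log ((1 + Real.exp t + θ * Real.exp y) / (1 + Real.exp t + Real.exp y)))
      (f' := fun t => D18 θ y t)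
      (C := |1 - Real.sqrt θ| / (1 + Real.sqrt θ))
      (fun t _ => (aux_deriv18 θ hθ y t).hasDerivWithinAt)
      (fun t _ => by simpa using aux_bound18 θ hθ y t)
      convex_univ (Set.mem_univ u) (Set.mem_univ x)
    simpa [Real.norm_eq_abs] using h
end

section
/- Let k ≥ 6, 0 < θ < (k² − 6k + 1)/(k+1)², and define s^± = (k − 3 − (k+1)θ ± √((1−θ)(k² − 6k + 1 − (k+1)²θ)))/(4(1+θ)) and λ^± = s^±·((1 + 2s^±)/(1 + (1+θ)s^±))^k. If λ^− < λ < λ^+, then the two-periodic system z = φ(t), t = φ(z), where φ(x) = λ·((1 + (1+θ)x)/(1 + 2x))^k, has at least three positive solutions: (x*, x*) with x* the unique positive fixed point of φ, and two solutions (x₀, x₁), (x₁, x₀) with x₀ ≠ x₁ satisfying φ(x₀) = x₁ and φ(x₁) = x₀. -/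
noncomputable def phiWR (k : ℕ) (θ lam x : ℝ) : ℝ := lam * ((1 + (1+θ)*x)/(1+2*x))^k


lemma phi_hasDerivAt (k : ℕ) (θ lam x : ℝ) (hx : 0 ≤ x) :
    HasDerivAt (phiWR k θ lam)
      (lam * ((k:ℝ) * ((1 + (1+θ)*x)/(1+2*x))^(k-1) * ((θ-1)/(1+2*x)^2))) x := by
  have hD : (1+2*x) ≠ 0 := by nlinarith
  have h1 : HasDerivAt (fun y : ℝ => 1+(1+θ)*y) (1+θ) x := by
    simpa using ((hasDerivAt_id x).const_mul (1+θ)).const_add 1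
  have h2 : HasDerivAt (fun y : ℝ => 1+2*y) 2 x := by
    simpa using ((hasDerivAt_id x).const_mul (2:ℝ)).const_add 1
  have hr := h1.div h2 hD
  have := (hr.pow k).const_mul lam
  have key : ((1+θ)*(1+2*x) - (1+(1+θ)*x)*2) = θ-1 := by ring
  rw [key] at this
  exact this

lemma phi_pos (k : ℕ) (θ lam x : ℝ) (hθ : 0 < θ) (hlam : 0 < lam) (hx : 0 ≤ x) :
    0 < phiWR k θ lam x := by
  have h1 : 0 < 1+(1+θ)*x := by nlinarith
  have h2 : 0 < 1+2*x := by nlinarith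
  exact mul_pos hlam (pow_pos (div_pos h1 h2) k)

lemma phi_le (k : ℕ) (θ lam x : ℝ) (hθ0 : 0 < θ) (hθ : θ < 1) (hlam : 0 < lam) (hx : 0 ≤ x) :
    phiWR k θ lam x ≤ lam := by
  have h1 : 0 < 1+(1+θ)*x := by nlinarith
  have h2 : 0 < 1+2*x := by nlinarith
  have hr : (1+(1+θ)*x)/(1+2*x) ≤ 1 := by
    rw [div_le_one h2]; nlinarith
  have := pow_le_one₀ (le_of_lt (div_pos h1 h2)) hr (n := k)
  calc phiWR k θ lam x = lam * ((1+(1+θ)*x)/(1+2*x))^k := rfl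
    _ ≤ lam * 1 := by nlinarith [pow_pos (div_pos h1 h2) k]
    _ = lam := mul_one lam

lemma phi_anti (k : ℕ) (θ lam : ℝ) (hθ0 : 0 < θ) (hθ : θ < 1) (hlam : 0 < lam)
    {a b : ℝ} (ha : 0 ≤ a) (hab : a ≤ b) : phiWR k θ lam b ≤ phiWR k θ lam a := by
  have hb : (0:ℝ) ≤ b := le_trans ha hab
  have h1a : 0 < 1+(1+θ)*a := by nlinarith
  have h2a : 0 < 1+2*a := by nlinarith
  have h1b : 0 < 1+(1+θ)*b := by nlinarith
  have h2b : 0 < 1+2*b := by nlinarith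
  have hr : (1+(1+θ)*b)/(1+2*b) ≤ (1+(1+θ)*a)/(1+2*a) := by
    rw [div_le_div_iff₀ h2b h2a]; nlinarith
  have hpow := pow_le_pow_left₀ (le_of_lt (div_pos h1b h2b)) hr k
  exact mul_le_mul_of_nonneg_left hpow (le_of_lt hlam)

lemma phi_continuousOn (k : ℕ) (θ lam : ℝ) :
    ContinuousOn (phiWR k θ lam) (Set.Ici 0) := fun x hx =>
  ((phi_hasDerivAt k θ lam x hx).continuousAt).continuousWithinAt

/-- monotone of s ↦ s * ((1+2s)/(1+(1+θ)s))^k on [0,∞) -/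
lemma lamFun_mono (k : ℕ) (θ : ℝ) (hθ0 : 0 < θ) (hθ : θ < 1)
    {a b : ℝ} (ha : 0 ≤ a) (hab : a ≤ b) :
    a * ((1 + 2*a)/(1 + (1+θ)*a))^k ≤ b * ((1 + 2*b)/(1 + (1+θ)*b))^k := by
  have hb : (0:ℝ) ≤ b := le_trans ha hab
  have h1a : 0 < 1+(1+θ)*a := by nlinarith
  have h2a : 0 < 1+2*a := by nlinarith
  have h1b : 0 < 1+(1+θ)*b := by nlinarith
  have h2b : 0 < 1+2*b := by nlinarith
  have hq : (1+2*a)/(1+(1+θ)*a) ≤ (1+2*b)/(1+(1+θ)*b) := by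
    rw [div_le_div_iff₀ h1a h1b]; nlinarith
  have hpow := pow_le_pow_left₀ (le_of_lt (div_pos h2a h1a)) hq k
  have hqb : 0 ≤ ((1+2*b)/(1+(1+θ)*b))^k := le_of_lt (pow_pos (div_pos h2b h1b) k)
  exact mul_le_mul hab hpow (le_of_lt (pow_pos (div_pos h2a h1a) k)) hb |>.trans_eq rfl

lemma fixed_point_exists (k : ℕ) (θ lam : ℝ) (hθ0 : 0 < θ) (hθ : θ < 1) (hlam : 0 < lam) :
    ∃ xs : ℝ, 0 < xs ∧ phiWR k θ lam xs = xs := by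
  set g : ℝ → ℝ := fun x => phiWR k θ lam x - x with hg
  have hgc : ContinuousOn g (Set.Icc 0 (lam+1)) := by
    apply ContinuousOn.sub
    · exact (phi_continuousOn k θ lam).mono (fun x hx => hx.1)
    · exact continuousOn_id
  have hg0 : g 0 = lam := by
    simp [hg, phiWR]
  have hgl : g (lam+1) ≤ -1 := by
    have := phi_le k θ lam (lam+1) hθ0 hθ hlam (by linarith)
    simp only [hg]; linarith
  have h0le : (0:ℝ) ≤ lam + 1 := by linarith
  have := intermediate_value_Icc' h0le hgc
  have h0mem : (0:ℝ) ∈ Set.Icc (g (lam+1)) (g 0) := by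
    constructor <;> [linarith; (rw [hg0]; linarith)]
  obtain ⟨xs, hxs, hfix⟩ := this h0mem
  refine ⟨xs, ?_, by simpa [hg, sub_eq_zero] using hfix⟩
  rcases lt_or_eq_of_le hxs.1 with h | h
  · exact h
  · exfalso; rw [← h] at hfix; simp [hg0] at hfix; linarith [hfix]

lemma fixed_point_unique (k : ℕ) (θ lam : ℝ) (hθ0 : 0 < θ) (hθ : θ < 1) (hlam : 0 < lam)
    {a b : ℝ} (ha : 0 ≤ a) (hb : 0 ≤ b)
    (hfa : phiWR k θ lam a = a) (hfb : phiWR k θ lam b = b) : a = b := by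
  by_contra hne
  rcases lt_or_gt_of_ne hne with h | h
  · have := phi_anti k θ lam hθ0 hθ hlam ha (le_of_lt h)
    rw [hfa, hfb] at this; linarith
  · have := phi_anti k θ lam hθ0 hθ hlam hb (le_of_lt h)
    rw [hfa, hfb] at this; linarith

lemma exists_lt_of_deriv_pos {F : ℝ → ℝ} {xs d : ℝ} (hxs : 0 < xs)
    (hF : HasDerivAt F d xs) (hd : 0 < d) (hF0 : F xs = 0) :
    ∃ x : ℝ, 0 < x ∧ x < xs ∧ F x < 0 := by
  have hslope := hasDerivAt_iff_tendsto_slope.mp hF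
  have hev : ∀ᶠ y in nhdsWithin xs {xs}ᶜ, 0 < slope F xs y :=
    hslope.eventually (eventually_gt_nhds hd)
  have hle : nhdsWithin xs (Set.Iio xs) ≤ nhdsWithin xs {xs}ᶜ :=
    nhdsWithin_mono xs (fun y hy => ne_of_lt hy)
  have hev2 : ∀ᶠ y in nhdsWithin xs (Set.Iio xs), 0 < slope F xs y := hle hev
  have hmem : Set.Ioo 0 xs ∈ nhdsWithin xs (Set.Iio xs) :=
    Ioo_mem_nhdsLT_of_mem ⟨hxs, le_refl xs⟩
  have hne : (nhdsWithin xs (Set.Iio xs)).NeBot := nhdsLT_neBot xs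
  have hev3 : ∀ᶠ y in nhdsWithin xs (Set.Iio xs), y ∈ Set.Ioo 0 xs :=
    Filter.eventually_iff.mpr hmem
  obtain ⟨y, hy1, hy2⟩ := (hev2.and hev3).exists
  refine ⟨y, hy2.1, hy2.2, ?_⟩
  rw [slope_def_field, div_pos_iff] at hy1
  rcases hy1 with ⟨h1, h2⟩ | ⟨h1, h2⟩
  · linarith [hy2.2]
  · linarith




set_option maxHeartbeats 2000000 in
/-- For `k ≥ 6`, `θ < (k²−6k+1)/(k+1)²` and `λ ∈ (λ⁻, λ⁺)`, the two-periodic system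
`z = φ(t)`, `t = φ(z)` with `φ(x) = λ((1+(1+θ)x)/(1+2x))^k` has at least three positive
solutions: the diagonal one `(x*, x*)` with `x*` the unique positive fixed point of `φ`,
and two off-diagonal ones `(x₀, x₁)`, `(x₁, x₀)` with `φ(x₀) = x₁`, `φ(x₁) = x₀`. -/
theorem stmt_19 (k : ℕ) (hk : 6 ≤ k) (lam θ : ℝ) (hθ0 : 0 < θ)
    (hθc : θ < ((k : ℝ) ^ 2 - 6 * k + 1) / ((k : ℝ) + 1) ^ 2)
    (sp sm lp lm : ℝ)
    (hsp : sp = ((k : ℝ) - 3 - ((k : ℝ) + 1) * θ +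
      Real.sqrt ((1 - θ) * ((k : ℝ) ^ 2 - 6 * k + 1 - ((k : ℝ) + 1) ^ 2 * θ))) /
      (4 * (1 + θ)))
    (hsm : sm = ((k : ℝ) - 3 - ((k : ℝ) + 1) * θ -
      Real.sqrt ((1 - θ) * ((k : ℝ) ^ 2 - 6 * k + 1 - ((k : ℝ) + 1) ^ 2 * θ))) /
      (4 * (1 + θ)))
    (hlp : lp = sp * ((1 + 2 * sp) / (1 + (1 + θ) * sp)) ^ k)
    (hlm : lm = sm * ((1 + 2 * sm) / (1 + (1 + θ) * sm)) ^ k)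
    (hlam1 : lm < lam) (hlam2 : lam < lp) :
    ∃ xs x₀ x₁ : ℝ, 0 < xs ∧ 0 < x₀ ∧ 0 < x₁ ∧ x₀ ≠ x₁ ∧
      lam * ((1 + (1 + θ) * xs) / (1 + 2 * xs)) ^ k = xs ∧
      (∀ x : ℝ, 0 < x → lam * ((1 + (1 + θ) * x) / (1 + 2 * x)) ^ k = x → x = xs) ∧
      lam * ((1 + (1 + θ) * x₀) / (1 + 2 * x₀)) ^ k = x₁ ∧
      lam * ((1 + (1 + θ) * x₁) / (1 + 2 * x₁)) ^ k = x₀ := by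
  have hkR : (6:ℝ) ≤ (k:ℝ) := by exact_mod_cast hk
  have hkk : (0:ℝ) < ((k:ℝ)+1)^2 := by positivity
  have hθB : θ*((k:ℝ)+1)^2 < (k:ℝ)^2-6*k+1 := by
    have := (lt_div_iff₀ hkk).mp hθc; linarith
  have hθ1 : θ < 1 := by nlinarith
  have h1θ : (0:ℝ) < 1+θ := by linarith
  have hDisc : (0:ℝ) ≤ (1-θ) * ((k:ℝ)^2 - 6*k + 1 - ((k:ℝ)+1)^2*θ) := by nlinarith
  set S := Real.sqrt ((1 - θ) * ((k : ℝ) ^ 2 - 6 * k + 1 - ((k : ℝ) + 1) ^ 2 * θ)) with hSdef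
  have hS0 : 0 ≤ S := Real.sqrt_nonneg _
  have hS2 : S^2 = (1-θ) * ((k:ℝ)^2 - 6*k + 1 - ((k:ℝ)+1)^2*θ) := Real.sq_sqrt hDisc
  have hA : 0 < (k:ℝ) - 3 - ((k:ℝ)+1)*θ := by nlinarith
  have hs : 2*(1+θ)*(sp+sm) = (k:ℝ)-3-((k:ℝ)+1)*θ := by
    rw [hsp, hsm]; field_simp; ring
  have hAS : ((k:ℝ)-3-((k:ℝ)+1)*θ)^2 - S^2 = 8*(1+θ) := by rw [hS2]; ring
  have hp : 2*(1+θ)*(sp*sm) = 1 := by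
    rw [hsp, hsm]
    field_simp
    linear_combination 2 * hAS
  have hsppos : 0 < sp := by rw [hsp]; positivity
  have hsmpos : 0 < sm := by
    by_contra hcon
    push_neg at hcon
    have : 2*(1+θ)*(sp*sm) ≤ 0 :=
      mul_nonpos_of_nonneg_of_nonpos (by positivity)
        (mul_nonpos_of_nonneg_of_nonpos hsppos.le hcon)
    linarith
  have hsmsp : sm ≤ sp := by
    rw [hsp, hsm, div_le_div_iff₀ (by linarith) (by linarith)]
    nlinarith
  have hQfact : ∀ x : ℝ, 2*(1+θ)*x^2 + (3+θ-(k:ℝ)*(1-θ))*x + 1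
      = 2*(1+θ)*((x - sm)*(x - sp)) := by
    intro x; linear_combination x * hs - hp
  -- lam positive
  have hlmpos : 0 < lm := by
    rw [hlm]
    have h1 : (0:ℝ) < 1+2*sm := by linarith
    have h2 : (0:ℝ) < 1+(1+θ)*sm := by positivity
    positivity
  have hlampos : 0 < lam := lt_trans hlmpos hlam1
  -- fixed point
  obtain ⟨xs, hxs, hfix⟩ := fixed_point_exists k θ lam hθ0 hθ1 hlampos
  have hE : (0:ℝ) < 1+(1+θ)*xs := by positivity
  have hD : (0:ℝ) < 1+2*xs := by linarith
  -- lam = xs * (D/E)^k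
  have hlamval : lam = xs * ((1+2*xs)/(1+(1+θ)*xs))^k := by
    have h1 : lam * ((1+(1+θ)*xs)/(1+2*xs))^k = xs := hfix
    have h2 : ((1+(1+θ)*xs)/(1+2*xs))^k * ((1+2*xs)/(1+(1+θ)*xs))^k = 1 := by
      rw [← mul_pow, div_mul_div_comm]
      rw [show (1+(1+θ)*xs)*(1+2*xs) / ((1+2*xs)*(1+(1+θ)*xs)) = 1 by
        rw [div_eq_one_iff_eq (by positivity)]; ring]
      exact one_pow k
    calc lam = lam * (((1+(1+θ)*xs)/(1+2*xs))^k * ((1+2*xs)/(1+(1+θ)*xs))^k) := by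
          rw [h2, mul_one]
      _ = (lam * ((1+(1+θ)*xs)/(1+2*xs))^k) * ((1+2*xs)/(1+(1+θ)*xs))^k := by ring
      _ = xs * ((1+2*xs)/(1+(1+θ)*xs))^k := by rw [h1]
  -- sm < xs < sp
  have hxslt : xs < sp := by
    by_contra hcon
    push_neg at hcon
    have := lamFun_mono k θ hθ0 hθ1 hsppos.le hcon
    rw [← hlp, ← hlamval] at this
    linarith
  have hxsgt : sm < xs := by
    by_contra hcon
    push_neg at hcon
    have := lamFun_mono k θ hθ0 hθ1 hxs.le hcon
    rw [← hlm, ← hlamval] at this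
    linarith
  have hQneg : 2*(1+θ)*xs^2 + (3+θ-(k:ℝ)*(1-θ))*xs + 1 < 0 := by
    rw [hQfact xs]
    have h1 : xs - sm > 0 := by linarith
    have h2 : xs - sp < 0 := by linarith
    exact mul_neg_of_pos_of_neg (by linarith) (mul_neg_of_pos_of_neg h1 h2)
  -- derivative at xs
  set c := lam * ((k:ℝ) * ((1+(1+θ)*xs)/(1+2*xs))^(k-1) * ((θ-1)/(1+2*xs)^2)) with hcdef
  have hder : HasDerivAt (phiWR k θ lam) c xs := phi_hasDerivAt k θ lam xs hxs.le
  have hk1 : k - 1 + 1 = k := by omega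
  have hEne : (1+(1+θ)*xs) ≠ 0 := ne_of_gt hE
  have hDne : (1+2*xs) ≠ 0 := ne_of_gt hD
  set P := lam * ((1+(1+θ)*xs)/(1+2*xs))^(k-1) with hPdef
  have hPE : P * ((1+(1+θ)*xs)/(1+2*xs)) = xs := by
    rw [hPdef, mul_assoc, ← pow_succ, hk1]; exact hfix
  have hPval : P = xs * (1+2*xs) / (1+(1+θ)*xs) := by
    rw [eq_div_iff hEne]
    field_simp at hPE
    linarith [hPE]
  have hcval : c = (k:ℝ)*xs*(θ-1)/((1+(1+θ)*xs)*(1+2*xs)) := by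
    rw [hcdef, show lam * ((k:ℝ) * ((1+(1+θ)*xs)/(1+2*xs))^(k-1) * ((θ-1)/(1+2*xs)^2))
      = (k:ℝ) * P * ((θ-1)/(1+2*xs)^2) from by rw [hPdef]; ring, hPval]
    field_simp
  have hc : c < -1 := by
    rw [hcval, div_lt_iff₀ (mul_pos hE hD)]
    have hexp : (k:ℝ)*xs*(θ-1) - (-1 * ((1+(1+θ)*xs)*(1+2*xs)))
        = 2*(1+θ)*xs^2 + (3+θ-(k:ℝ)*(1-θ))*xs + 1 := by ring
    linarith [hQneg, hexp]
  -- second iterate derivative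
  have houter : HasDerivAt (phiWR k θ lam) c (phiWR k θ lam xs) := by rw [hfix]; exact hder
  have hcomp : HasDerivAt (phiWR k θ lam ∘ phiWR k θ lam) (c * c) xs :=
    houter.comp xs hder
  have hFder : HasDerivAt (fun x => phiWR k θ lam (phiWR k θ lam x) - x) (c*c - 1) xs := by
    exact hcomp.sub (hasDerivAt_id xs)
  have hdpos : 0 < c*c - 1 := by
    have h1 : (1:ℝ) < -c := by linarith
    have h2 : (1:ℝ)*1 < (-c)*(-c) := mul_lt_mul'' h1 h1 zero_le_one zero_le_one
    have h3 : (-c)*(-c) = c*c := by ring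
    linarith
  have hFxs : (fun x => phiWR k θ lam (phiWR k θ lam x) - x) xs = 0 := by
    simp only [hfix, sub_self]
  obtain ⟨x, hx0, hxlt, hFx⟩ := exists_lt_of_deriv_pos hxs hFder hdpos hFxs
  -- IVT on [0, x]
  have hcont : ContinuousOn (fun y => phiWR k θ lam (phiWR k θ lam y) - y) (Set.Icc 0 x) := by
    apply ContinuousOn.sub _ continuousOn_id
    exact (phi_continuousOn k θ lam).comp
      ((phi_continuousOn k θ lam).mono (fun y hy => hy.1))
      (fun y hy => (phi_pos k θ lam y hθ0 hlampos hy.1).le)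
  have hF0pos : 0 < phiWR k θ lam (phiWR k θ lam 0) - 0 := by
    have h1 := phi_pos k θ lam 0 hθ0 hlampos le_rfl
    have h2 := phi_pos k θ lam (phiWR k θ lam 0) hθ0 hlampos h1.le
    linarith
  have hivt := intermediate_value_Icc' hx0.le hcont
  have h0mem : (0:ℝ) ∈ Set.Icc (phiWR k θ lam (phiWR k θ lam x) - x)
      (phiWR k θ lam (phiWR k θ lam 0) - 0) := ⟨hFx.le, hF0pos.le⟩
  obtain ⟨x₀, hx₀mem, hFx₀⟩ := hivt h0mem
  simp only at hFx₀
  have hx₀pos : 0 < x₀ := by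
    rcases eq_or_lt_of_le hx₀mem.1 with h | h
    · exfalso; rw [← h] at hFx₀; linarith
    · exact h
  have hx₀lt : x₀ < xs := lt_of_le_of_lt hx₀mem.2 hxlt
  have hx₁pos : 0 < phiWR k θ lam x₀ := phi_pos k θ lam x₀ hθ0 hlampos hx₀pos.le
  have hback : phiWR k θ lam (phiWR k θ lam x₀) = x₀ := by
    have := hFx₀; linarith
  have hneq : x₀ ≠ phiWR k θ lam x₀ := by
    intro h
    have hfx₀ : phiWR k θ lam x₀ = x₀ := h.symm
    have := fixed_point_unique k θ lam hθ0 hθ1 hlampos hx₀pos.le hxs.le hfx₀ hfix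
    linarith
  exact ⟨xs, x₀, phiWR k θ lam x₀, hxs, hx₀pos, hx₁pos, hneq, hfix,
    fun y hy hfy => fixed_point_unique k θ lam hθ0 hθ1 hlampos hy.le hxs.le hfy hfix,
    rfl, hback⟩
end
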